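/- arXiv:1109.5565 — 9 statements merged into one kernel-verified Lean document; each statement's English description precedes it below -/
import Mathlib

section
/- Let n ≥ 1, let Ω ⊂ ℝⁿ be a bounded open set with diameter ℓ, let x₀ ∈ Ω, let 1 ≤ p < ∞ with conjugate exponent p′ = p/(p−1), let 0 ≤ λ ≤ n, let A > ℓ and let ε > 0. Then there exists a constant C > 0, not depending on f, such that for every measurable f : Ω → ℝ, (∫_Ω |f(y)|^p |y−x₀|^{λ(p−1)} (ln(A/|y−x₀|))^{−(1+ε)} dy)^{1/p} ≤ C · sup_{r>0} r^{λ/p′} ‖f‖_{L^p(Ω \ B(x₀,r))}. That is, the local complementary Morrey space ∁L^{p,λ}_{x₀}(Ω) embeds into the weighted Lebesgue space L^p(Ω, |y−x₀|^{λ(p−1)} (ln(A/|y−x₀|))^{−(1+ε)}). -/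
open MeasureTheory Metric Set ENNReal Filter Topology

/-- The `L^p` "norm" of `f` over a set `E`, `(∫_E |f|^p)^{1/p}`, valued in `ℝ≥0∞`. -/
noncomputable def lpnorm {n : ℕ} (p : ℝ) (E : Set (EuclideanSpace ℝ (Fin n)))
    (f : EuclideanSpace ℝ (Fin n) → ℝ) : ℝ≥0∞ :=
  (∫⁻ y in E, ENNReal.ofReal |f y| ^ p) ^ (1 / p)

/-- For a bounded open `Ω ⊆ ℝⁿ` of diameter `ℓ`, `x₀ ∈ Ω`, `1 ≤ p < ∞` with
conjugate exponent `pc = p/(p−1)`, `0 ≤ λ ≤ n`, `A > ℓ` and `ε > 0`, there is `C > 0`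
(independent of `f`) such that for every measurable `f`,
`(∫_Ω |f(y)|^p |y−x₀|^{λ(p−1)} (ln(A/|y−x₀|))^{−(1+ε)} dy)^{1/p}
  ≤ C · sup_{r>0} r^{λ/p′} ‖f‖_{L^p(Ω \ B(x₀,r))}`. -/
theorem statement1
    (n : ℕ) (hn : 1 ≤ n)
    (Ω : Set (EuclideanSpace ℝ (Fin n))) (hΩo : IsOpen Ω) (hΩb : Bornology.IsBounded Ω)
    (x₀ : EuclideanSpace ℝ (Fin n)) (hx₀ : x₀ ∈ Ω)
    (p pc : ℝ) (hp : 1 ≤ p) (hpc : pc = p / (p - 1))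
    (lam : ℝ) (hlam0 : 0 ≤ lam) (hlamn : lam ≤ (n : ℝ))
    (ℓ : ℝ) (hℓ : ℓ = Metric.diam Ω)
    (A : ℝ) (hA : ℓ < A)
    (ε : ℝ) (hε : 0 < ε) :
    ∃ C > 0, ∀ f : EuclideanSpace ℝ (Fin n) → ℝ, Measurable f →
      (∫⁻ y in Ω,
          ENNReal.ofReal
              (‖y - x₀‖ ^ (lam * (p - 1)) / Real.log (A / ‖y - x₀‖) ^ (1 + ε)) *
            ENNReal.ofReal |f y| ^ p) ^ (1 / p) ≤
        ENNReal.ofReal C *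
          ⨆ r ∈ Ioi (0 : ℝ),
            ENNReal.ofReal (r ^ (lam / pc)) * lpnorm p (Ω \ ball x₀ r) f := by
  have hp0 : (0:ℝ) < p := one_pos.trans_le hp
  have hp0' : p ≠ 0 := hp0.ne'
  have hℓ0 : 0 ≤ ℓ := hℓ ▸ Metric.diam_nonneg
  rcases eq_or_lt_of_le hℓ0 with hl0 | hl0
  · -- degenerate case `ℓ = 0` : `Ω` is a null set
    haveI : Nonempty (Fin n) := ⟨⟨0, hn⟩⟩
    refine ⟨1, one_pos, fun f hf => ?_⟩
    have hΩsub : Ω ⊆ {x₀} := by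
      intro y hy
      have := Metric.dist_le_diam_of_mem hΩb hy hx₀
      rw [← hℓ, ← hl0] at this
      have : dist y x₀ = 0 := le_antisymm this dist_nonneg
      simpa [dist_eq_zero] using this
    have hν : volume Ω = 0 :=
      le_antisymm (le_trans (measure_mono hΩsub) (le_of_eq (measure_singleton x₀)))
        zero_le
    rw [setLIntegral_measure_zero _ _ hν]
    rw [ENNReal.zero_rpow_of_pos (by positivity)]
    exact zero_le
  -- main case `0 < ℓ`
  haveI : Nonempty (Fin n) := ⟨⟨0, hn⟩⟩
  have hA0 : (0:ℝ) < A := hl0.trans hA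
  set β : ℝ := 1 + ε with hβdef
  have hβ0 : (0:ℝ) < β := by positivity
  set μR : ℝ := lam * (p - 1) with hμdef
  have hμ0 : 0 ≤ μR := mul_nonneg hlam0 (by linarith)
  have hexp : lam / pc * p = μR := by
    rcases eq_or_lt_of_le hp with h1 | h1
    · rw [hμdef, hpc, ← h1]; norm_num
    · have h2 : p - 1 ≠ 0 := sub_ne_zero.mpr (ne_of_gt h1)
      rw [hpc, hμdef]
      field_simp
      try ring
  set c₁ : ℝ := Real.log (A / ℓ) with hc₁def
  have hc₁ : 0 < c₁ := Real.log_pos ((one_lt_div hl0).mpr hA)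
  set Lg2 : ℝ := Real.log 2 with hLg2def
  have hLg2 : 0 < Lg2 := Real.log_pos one_lt_two
  set m : ℝ := min c₁ Lg2 with hmdef
  have hm : 0 < m := lt_min hc₁ hLg2
  -- dyadic radii
  set R : ℕ → ℝ := fun k => A * 2 ^ (-(k:ℝ)) with hRdef
  have hRpos : ∀ k, 0 < R k := fun k => by
    have : (0:ℝ) < 2 ^ (-(k:ℝ)) := Real.rpow_pos_of_pos two_pos _
    positivity
  have hRhalf : ∀ k : ℕ, R (k+1) * 2 = R k := by
    intro k
    have : (-(↑(k+1):ℝ)) = (-(k:ℝ)) + (-1) := by push_cast; ring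
    rw [hRdef]
    simp only [this, Real.rpow_add two_pos, Real.rpow_neg_one]
    ring
  have hR0 : R 0 = A := by simp [hRdef]
  -- the annuli
  set S : ℕ → Set (EuclideanSpace ℝ (Fin n)) :=
    fun k => (Ω \ ball x₀ (R (k+1))) ∩ ball x₀ (R k) with hSdef
  have hcover : Ω \ {x₀} ⊆ ⋃ k, S k := by
    intro y hy
    obtain ⟨hyΩ, hyx⟩ := hy
    set d : ℝ := dist y x₀ with hddef
    have hd0 : 0 < d := dist_pos.mpr (by simpa using hyx)
    have hdℓ : d ≤ ℓ := hℓ ▸ Metric.dist_le_diam_of_mem hΩb hyΩ hx₀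
    have hdA : d < A := lt_of_le_of_lt hdℓ hA
    -- there is some k with R k ≤ d
    have hex : ∃ k : ℕ, R k ≤ d := by
      obtain ⟨k, hk⟩ := pow_unbounded_of_one_lt (A / d) one_lt_two
      refine ⟨k, ?_⟩
      have h2k : (2:ℝ) ^ (-(k:ℝ)) = ((2:ℝ) ^ k)⁻¹ := by
        rw [Real.rpow_neg (by norm_num), Real.rpow_natCast]
      rw [hRdef]
      dsimp only
      rw [h2k, ← div_eq_mul_inv, div_le_iff₀ (by positivity)]
      rw [div_lt_iff₀ hd0] at hk
      linarith
    set k₀ := Nat.find hex with hk₀def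
    have hk₀le : R k₀ ≤ d := Nat.find_spec hex
    have hk₀pos : 0 < k₀ := by
      rcases Nat.eq_zero_or_pos k₀ with h | h
      · exfalso; rw [h, hR0] at hk₀le; linarith
      · exact h
    set k := k₀ - 1 with hkdef
    have hk1 : k + 1 = k₀ := Nat.succ_pred_eq_of_pos hk₀pos
    have hlt : d < R k := by
      by_contra h
      push_neg at h
      have := Nat.find_min hex (m := k) (by omega)
      exact this h
    refine mem_iUnion.mpr ⟨k, ⟨⟨hyΩ, ?_⟩, ?_⟩⟩
    · simp only [mem_ball, not_lt]
      rw [hk1]; exact hk₀le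
    · simpa [mem_ball] using hlt
  have hnormdist : ∀ y : EuclideanSpace ℝ (Fin n), ‖y - x₀‖ = dist y x₀ :=
    fun y => (dist_eq_norm y x₀).symm
  -- the comparison sequence
  set b : ℕ → ℝ := fun k =>
    ((2:ℝ) ^ μR * ((m / 2) ^ β)⁻¹) * (((k:ℝ) + 1) ^ β)⁻¹ with hbdef
  have hb0 : ∀ k, 0 ≤ b k := by
    intro k
    have h1 : (0:ℝ) < (2:ℝ) ^ μR := Real.rpow_pos_of_pos two_pos _
    have h2 : (0:ℝ) < ((m:ℝ)/2) ^ β := Real.rpow_pos_of_pos (by positivity) _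
    have h3 : (0:ℝ) < (((k:ℝ)+1)) ^ β := Real.rpow_pos_of_pos (by positivity) _
    positivity
  have hbsum : Summable b := by
    apply Summable.mul_left
    have h1 : Summable (fun n : ℕ => 1 / ((n:ℝ)) ^ β) :=
      Real.summable_one_div_nat_rpow.mpr (by simp [hβdef]; linarith)
    have h2 := (summable_nat_add_iff 1).mpr h1
    apply h2.congr
    intro k
    push_cast
    rw [one_div]
  set Ksum : ℝ := ∑' k, b k with hKdef
  have hK0 : 0 ≤ Ksum := tsum_nonneg hb0
  refine ⟨(1 + Ksum) ^ (1/p), Real.rpow_pos_of_pos (by linarith) _, fun f hf => ?_⟩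
  have hg : Measurable (fun y : EuclideanSpace ℝ (Fin n) => ENNReal.ofReal |f y| ^ p) := by
    apply Measurable.pow_const
    exact (hf.abs).ennreal_ofReal
  set M : ℝ≥0∞ :=
    ⨆ r ∈ Ioi (0 : ℝ), ENNReal.ofReal (r ^ (lam / pc)) * lpnorm p (Ω \ ball x₀ r) f
    with hMdef
  -- key per-radius estimate
  have key : ∀ r : ℝ, 0 < r →
      ENNReal.ofReal (r ^ μR) * ∫⁻ y in Ω \ ball x₀ r, ENNReal.ofReal |f y| ^ p ≤ M ^ p := by
    intro r hr
    have h1 : ENNReal.ofReal (r ^ (lam / pc)) * lpnorm p (Ω \ ball x₀ r) f ≤ M :=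
      le_iSup₂ (f := fun r (_ : r ∈ Ioi (0:ℝ)) =>
        ENNReal.ofReal (r ^ (lam / pc)) * lpnorm p (Ω \ ball x₀ r) f) r hr
    have h2 : (ENNReal.ofReal (r ^ (lam / pc)) * lpnorm p (Ω \ ball x₀ r) f) ^ p
        = ENNReal.ofReal (r ^ μR) * ∫⁻ y in Ω \ ball x₀ r, ENNReal.ofReal |f y| ^ p := by
      rw [ENNReal.mul_rpow_of_nonneg _ _ hp0.le,
        ENNReal.ofReal_rpow_of_nonneg (Real.rpow_nonneg hr.le _) hp0.le,
        ← Real.rpow_mul hr.le, hexp, lpnorm, ← ENNReal.rpow_mul,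
        one_div_mul_cancel hp0', ENNReal.rpow_one]
    calc ENNReal.ofReal (r ^ μR) * ∫⁻ y in Ω \ ball x₀ r, ENNReal.ofReal |f y| ^ p
        = (ENNReal.ofReal (r ^ (lam / pc)) * lpnorm p (Ω \ ball x₀ r) f) ^ p := h2.symm
      _ ≤ M ^ p := ENNReal.rpow_le_rpow h1 hp0.le
  -- per-annulus estimate
  set wg : EuclideanSpace ℝ (Fin n) → ℝ≥0∞ := fun y =>
    ENNReal.ofReal (‖y - x₀‖ ^ μR / Real.log (A / ‖y - x₀‖) ^ β) * ENNReal.ofReal |f y| ^ p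
    with hwgdef
  have annulus : ∀ k : ℕ, (∫⁻ y in S k, wg y) ≤ ENNReal.ofReal (b k) * M ^ p := by
    intro k
    set D : ℝ := ((c₁ + (k:ℝ) * Lg2) / 2) ^ β with hDdef
    have hDpos : 0 < D := by
      apply Real.rpow_pos_of_pos
      have : (0:ℝ) ≤ (k:ℝ) * Lg2 := by positivity
      linarith
    set W : ℝ := (R k) ^ μR / D with hWdef
    have hW0 : 0 ≤ W := by
      have := Real.rpow_nonneg (hRpos k).le μR
      positivity
    -- pointwise weight bound on the annulus
    have hwb : ∀ y ∈ S k,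
        ENNReal.ofReal (‖y - x₀‖ ^ μR / Real.log (A / ‖y - x₀‖) ^ β) * ENNReal.ofReal |f y| ^ p
          ≤ ENNReal.ofReal W * ENNReal.ofReal |f y| ^ p := by
      intro y hy
      obtain ⟨⟨hyΩ, hy1⟩, hy2⟩ := hy
      apply mul_le_mul_left
      apply ENNReal.ofReal_le_ofReal
      set d : ℝ := ‖y - x₀‖ with hddef2
      have hd1 : R (k+1) ≤ d := by
        simp only [mem_ball, not_lt] at hy1
        rw [hddef2, hnormdist y]; exact hy1
      have hdpos : 0 < d := lt_of_lt_of_le (hRpos _) hd1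
      have hd2 : d < R k := by
        rw [hddef2, hnormdist y]; exact hy2
      have hdℓ : d ≤ ℓ := by
        rw [hddef2, hnormdist y, hℓ]
        exact Metric.dist_le_diam_of_mem hΩb hyΩ hx₀
      have hL1 : c₁ ≤ Real.log (A / d) := by
        apply Real.log_le_log (by positivity)
        exact div_le_div_of_nonneg_left hA0.le hdpos hdℓ
      have hL2 : (k:ℝ) * Lg2 ≤ Real.log (A / d) := by
        have h2k : (2:ℝ) ^ (k:ℝ) ≤ A / d := by
          rw [le_div_iff₀ hdpos]
          have : d * 2 ^ (k:ℝ) < R k * 2 ^ (k:ℝ) := by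
            apply mul_lt_mul_of_pos_right hd2 (Real.rpow_pos_of_pos two_pos _)
          have hRk : R k * 2 ^ (k:ℝ) = A := by
            rw [hRdef]
            dsimp only
            rw [mul_assoc, ← Real.rpow_add two_pos]
            simp
          linarith [hRk ▸ this]
        calc (k:ℝ) * Lg2 = Real.log ((2:ℝ) ^ (k:ℝ)) := (Real.log_rpow two_pos _).symm
          _ ≤ Real.log (A / d) :=
            Real.log_le_log (Real.rpow_pos_of_pos two_pos _) h2k
      have hLhalf : (c₁ + (k:ℝ) * Lg2) / 2 ≤ Real.log (A / d) := by linarith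
      have hhalfpos : 0 < (c₁ + (k:ℝ) * Lg2) / 2 := by
        have : (0:ℝ) ≤ (k:ℝ) * Lg2 := by positivity
        linarith
      rw [hWdef, hDdef]
      apply div_le_div₀ (Real.rpow_nonneg (hRpos k).le _)
        (Real.rpow_le_rpow hdpos.le hd2.le hμ0) (Real.rpow_pos_of_pos hhalfpos _)
        (Real.rpow_le_rpow hhalfpos.le hLhalf hβ0.le)
    have hWb : W / (R (k+1)) ^ μR ≤ b k := by
      have hR1pos := hRpos (k+1)
      have hratio : R k / R (k+1) = 2 := by
        rw [← hRhalf k]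
        field_simp
      have hcalc : W / (R (k+1)) ^ μR = (2:ℝ) ^ μR * D⁻¹ := by
        rw [hWdef, div_div, mul_comm D, ← div_div, ← Real.div_rpow (hRpos k).le hR1pos.le,
          hratio, div_eq_mul_inv]
      rw [hcalc, hbdef]
      dsimp only
      have hmono : (m / 2 * ((k:ℝ) + 1)) ^ β ≤ D := by
        rw [hDdef]
        apply Real.rpow_le_rpow (by positivity) ?_ hβ0.le
        have h1 : m ≤ c₁ := min_le_left _ _
        have h2 : m ≤ Lg2 := min_le_right _ _
        have h3 : (k:ℝ) * m ≤ (k:ℝ) * Lg2 :=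
          mul_le_mul_of_nonneg_left h2 (Nat.cast_nonneg k)
        have : m * ((k:ℝ) + 1) ≤ c₁ + (k:ℝ) * Lg2 := by nlinarith
        linarith
      have hsplit : (m / 2 * ((k:ℝ) + 1)) ^ β = (m/2) ^ β * ((k:ℝ)+1) ^ β :=
        Real.mul_rpow (by positivity) (by positivity)
      rw [mul_assoc, ← mul_inv]
      apply mul_le_mul_of_nonneg_left ?_ (Real.rpow_nonneg (by norm_num) _)
      apply inv_anti₀
      · rw [← hsplit]; exact Real.rpow_pos_of_pos (by positivity) _
      · rw [← hsplit]; exact hmono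
    rw [hwgdef]
    calc (∫⁻ y in S k,
           ENNReal.ofReal (‖y - x₀‖ ^ μR / Real.log (A / ‖y - x₀‖) ^ β) * ENNReal.ofReal |f y| ^ p)
        ≤ ∫⁻ y in S k, ENNReal.ofReal W * ENNReal.ofReal |f y| ^ p :=
          setLIntegral_mono (measurable_const.mul hg) hwb
      _ = ENNReal.ofReal W * ∫⁻ y in S k, ENNReal.ofReal |f y| ^ p :=
          lintegral_const_mul' _ _ ENNReal.ofReal_ne_top
      _ ≤ ENNReal.ofReal W * ∫⁻ y in Ω \ ball x₀ (R (k+1)), ENNReal.ofReal |f y| ^ p :=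
          mul_le_mul_right (lintegral_mono_set inter_subset_left) _
      _ = ENNReal.ofReal (W / (R (k+1)) ^ μR) *
            (ENNReal.ofReal ((R (k+1)) ^ μR) * ∫⁻ y in Ω \ ball x₀ (R (k+1)), ENNReal.ofReal |f y| ^ p) := by
          rw [← mul_assoc, ← ENNReal.ofReal_mul (by positivity),
            div_mul_cancel₀ _ (ne_of_gt (Real.rpow_pos_of_pos (hRpos (k+1)) _))]
      _ ≤ ENNReal.ofReal (W / (R (k+1)) ^ μR) * M ^ p :=
          mul_le_mul_right (key _ (hRpos (k+1))) _
      _ ≤ ENNReal.ofReal (b k) * M ^ p :=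
          mul_le_mul_left (ENNReal.ofReal_le_ofReal hWb) _
  -- assemble
  have hsplit : (∫⁻ y in Ω, wg y) ≤ ENNReal.ofReal Ksum * M ^ p := by
    have h0 : (∫⁻ y in Ω, wg y) ≤ ∫⁻ y in (Ω \ {x₀}) ∪ {x₀}, wg y := by
      apply lintegral_mono_set
      intro y hy
      by_cases h : y = x₀
      · exact Or.inr (by simp [h])
      · exact Or.inl ⟨hy, by simp [h]⟩
    have h1 : (∫⁻ y in (Ω \ {x₀}) ∪ {x₀}, wg y)
        ≤ (∫⁻ y in Ω \ {x₀}, wg y) + ∫⁻ y in ({x₀} : Set _), wg y :=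
      lintegral_union_le _ _ _
    have h2 : (∫⁻ y in ({x₀} : Set _), wg y) = 0 :=
      setLIntegral_measure_zero _ _ (measure_singleton x₀)
    have h3 : (∫⁻ y in Ω \ {x₀}, wg y) ≤ ∫⁻ y in ⋃ k, S k, wg y :=
      lintegral_mono_set hcover
    have h4 : (∫⁻ y in ⋃ k, S k, wg y) ≤ ∑' k, ∫⁻ y in S k, wg y :=
      lintegral_iUnion_le _ _
    have h5 : (∑' k, ∫⁻ y in S k, wg y) ≤ ∑' k, ENNReal.ofReal (b k) * M ^ p :=
      Summable.tsum_le_tsum annulus ENNReal.summable ENNReal.summable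
    have h6 : (∑' k, ENNReal.ofReal (b k) * M ^ p) = ENNReal.ofReal Ksum * M ^ p := by
      rw [ENNReal.tsum_mul_right, hKdef, ENNReal.ofReal_tsum_of_nonneg hb0 hbsum]
    calc (∫⁻ y in Ω, wg y) ≤ _ := h0
      _ ≤ _ := h1
      _ = ∫⁻ y in Ω \ {x₀}, wg y := by rw [h2, add_zero]
      _ ≤ _ := h3
      _ ≤ _ := h4
      _ ≤ _ := h5
      _ = _ := h6
  have hgoal : (∫⁻ y in Ω,
        ENNReal.ofReal (‖y - x₀‖ ^ μR / Real.log (A / ‖y - x₀‖) ^ β) *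
          ENNReal.ofReal |f y| ^ p) = ∫⁻ y in Ω, wg y := by rw [hwgdef]
  rw [hgoal]
  calc (∫⁻ y in Ω, wg y) ^ (1/p)
      ≤ (ENNReal.ofReal Ksum * M ^ p) ^ (1/p) :=
        ENNReal.rpow_le_rpow hsplit (by positivity)
    _ = ENNReal.ofReal Ksum ^ (1/p) * M := by
        rw [ENNReal.mul_rpow_of_nonneg _ _ (by positivity), ← ENNReal.rpow_mul,
          mul_one_div_cancel hp0', ENNReal.rpow_one]
    _ ≤ ENNReal.ofReal ((1 + Ksum) ^ (1/p)) * M := by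
        apply mul_le_mul_left
        rw [ENNReal.ofReal_rpow_of_nonneg hK0 (by positivity)]
        exact ENNReal.ofReal_le_ofReal
          (Real.rpow_le_rpow hK0 (by linarith) (by positivity))
end

section
/- Let n ≥ 1, let Ω ⊂ ℝⁿ be a bounded open set, let x₀ ∈ Ω, let 1 < p < ∞ with conjugate exponent p′ = p/(p−1), and let 0 < λ ≤ n. Define f(x) = |x−x₀|^{−n/p − λ/p′} for x ∈ Ω, x ≠ x₀. Then sup_{r>0} r^{λ/p′} ‖f‖_{L^p(Ω \ B(x₀,r))} < ∞ (so f lies in the local complementary Morrey space ∁L^{p,λ}_{x₀}(Ω)), while ∫_Ω |y−x₀|^{λ(p−1)} |f(y)|^p dy = ∞ (so f does not lie in the weighted Lebesgue space L^p(Ω, |y−x₀|^{λ(p−1)})). Hence the embedding of L^p(Ω, |y−x₀|^{λ(p−1)}) into ∁L^{p,λ}_{x₀}(Ω) is strict. -/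
open MeasureTheory Metric Set ENNReal Filter Topology

lemma aux_lintegral_inv_Ioi_top {T : ℝ} (hT : 0 < T) :
    ∫⁻ t in Ioi T, ENNReal.ofReal (t ^ (-1:ℝ)) = ⊤ := by
  by_contra h
  have hmeas : Measurable fun t : ℝ ↦ t ^ (-1:ℝ) := by fun_prop
  have hnn : 0 ≤ᵐ[volume.restrict (Ioi T)] fun t : ℝ ↦ t ^ (-1:ℝ) := by
    filter_upwards [ae_restrict_mem measurableSet_Ioi] with t ht
    exact Real.rpow_nonneg (le_of_lt (hT.trans ht)) _
  have hint : IntegrableOn (fun t : ℝ ↦ t ^ (-1:ℝ)) (Ioi T) :=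
    ⟨hmeas.aestronglyMeasurable, (hasFiniteIntegral_iff_ofReal hnn).2 (Ne.lt_top h)⟩
  rw [integrableOn_Ioi_rpow_iff hT] at hint
  linarith

/-- For `1 < p < ∞` with conjugate exponent `pc = p/(p−1)` and `0 < λ ≤ n`,
the function `f(x) = |x−x₀|^{−n/p − λ/p′}` lies in the local complementary Morrey space
`∁L^{p,λ}_{x₀}(Ω)` (its norm `sup_{r>0} r^{λ/p′}‖f‖_{L^p(Ω∖B(x₀,r))}` is finite), but not
in the weighted Lebesgue space `L^p(Ω, |y−x₀|^{λ(p−1)})` (the weighted integral is infinite).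
Hence the embedding of the weighted space into the complementary Morrey space is strict. -/
theorem statement2
    (n : ℕ) (hn : 1 ≤ n)
    (Ω : Set (EuclideanSpace ℝ (Fin n))) (hΩo : IsOpen Ω) (hΩb : Bornology.IsBounded Ω)
    (x₀ : EuclideanSpace ℝ (Fin n)) (hx₀ : x₀ ∈ Ω)
    (p pc : ℝ) (hp : 1 < p) (hpc : pc = p / (p - 1))
    (lam : ℝ) (hlam0 : 0 < lam) (hlamn : lam ≤ (n : ℝ))
    (f : EuclideanSpace ℝ (Fin n) → ℝ)
    (hfdef : ∀ x, x ≠ x₀ → f x = ‖x - x₀‖ ^ (-((n : ℝ) / p + lam / pc))) :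
    (⨆ r ∈ Ioi (0 : ℝ),
        ENNReal.ofReal (r ^ (lam / pc)) * lpnorm p (Ω \ ball x₀ r) f) < ⊤ ∧
    (∫⁻ y in Ω,
        ENNReal.ofReal (‖y - x₀‖ ^ (lam * (p - 1))) * ENNReal.ofReal |f y| ^ p) = ⊤ := by
  have hp0 : (0:ℝ) < p := lt_trans one_pos hp
  have hp1 : (0:ℝ) < p - 1 := sub_pos.2 hp
  have hn0 : (0:ℝ) < (n:ℝ) := by exact_mod_cast hn
  haveI : Nonempty (Fin n) := ⟨⟨0, hn⟩⟩
  haveI : Nontrivial (EuclideanSpace ℝ (Fin n)) := inferInstance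
  set β : ℝ := (n : ℝ) + lam * (p - 1) with hβdef
  have hnβ : (n : ℝ) < β := by nlinarith [mul_pos hlam0 hp1]
  have hβ0 : (0:ℝ) < β := lt_trans hn0 hnβ
  have hexp : (-((n : ℝ) / p + lam / pc)) * p = -β := by
    rw [hβdef, hpc]; field_simp
  have hfr : Module.finrank ℝ (EuclideanSpace ℝ (Fin n)) = n := finrank_euclideanSpace_fin
  set mB : ℝ≥0∞ := volume (ball (0 : EuclideanSpace ℝ (Fin n)) 1) with hmBdef
  have hmB0 : mB ≠ 0 := (measure_ball_pos _ _ one_pos).ne'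
  have hmBt : mB ≠ ⊤ := measure_ball_lt_top.ne
  -- pointwise identity
  have hfp : ∀ y : EuclideanSpace ℝ (Fin n), y ≠ x₀ →
      ENNReal.ofReal |f y| ^ p = ENNReal.ofReal (‖y - x₀‖ ^ (-β)) := by
    intro y hy
    rw [hfdef y hy, abs_of_nonneg (Real.rpow_nonneg (norm_nonneg _) _),
      ENNReal.ofReal_rpow_of_nonneg (Real.rpow_nonneg (norm_nonneg _) _) hp0.le,
      ← Real.rpow_mul (norm_nonneg _), hexp]
  have hgm : Measurable fun y : EuclideanSpace ℝ (Fin n) ↦ ‖y - x₀‖ ^ (-β) := by fun_prop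
  set a : ℝ := -β⁻¹ * (n:ℝ) with ha_def
  have ha1 : -1 < a := by
    have h1 : β⁻¹ * (n:ℝ) < β⁻¹ * β := mul_lt_mul_of_pos_left hnβ (inv_pos.2 hβ0)
    rw [inv_mul_cancel₀ hβ0.ne'] at h1
    rw [ha_def]; linarith
  have ha2 : (0:ℝ) < a + 1 := by linarith
  constructor
  · -- PART 1
    set D : ℝ := (a + 1)⁻¹ with hD_def
    have hD0 : 0 ≤ D := by positivity
    -- the key integral bound for each r > 0
    have hI : ∀ r : ℝ, 0 < r → ∫⁻ y in Ω \ ball x₀ r, ENNReal.ofReal |f y| ^ p ≤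
        ENNReal.ofReal (r ^ (-(β - (n:ℝ))) * D) * mB := by
      intro r hr
      set S := Ω \ ball x₀ r with hSdef
      have hS : MeasurableSet S := hΩo.measurableSet.diff measurableSet_ball
      set T : ℝ := r ^ (-β) with hT_def
      have hT : 0 < T := Real.rpow_pos_of_pos hr _
      have hrS : ∀ y ∈ S, r ≤ ‖y - x₀‖ := by
        intro y hy
        have := hy.2
        rw [mem_ball, dist_eq_norm] at this
        linarith [not_lt.1 this]
      have step1 : ∫⁻ y in S, ENNReal.ofReal |f y| ^ p
          = ∫⁻ y in S, ENNReal.ofReal (‖y - x₀‖ ^ (-β)) := by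
        refine setLIntegral_congr_fun hS (fun y hy ↦ ?_)
        refine hfp y fun h ↦ ?_
        have := hrS y hy
        rw [h, sub_self, norm_zero] at this
        linarith
      have step2 : ∫⁻ y in S, ENNReal.ofReal (‖y - x₀‖ ^ (-β))
          = ∫⁻ t in Ioi (0:ℝ), (volume.restrict S) {y | t ≤ ‖y - x₀‖ ^ (-β)} :=
        lintegral_eq_lintegral_meas_le _
          (ae_of_all _ fun y ↦ Real.rpow_nonneg (norm_nonneg _) _) hgm.aemeasurable
      -- tail vanishes
      have hzero : ∫⁻ t in Ioi T, (volume.restrict S) {y | t ≤ ‖y - x₀‖ ^ (-β)} = 0 := by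
        have h0 : ∀ t ∈ Ioi T, (volume.restrict S) {y | t ≤ ‖y - x₀‖ ^ (-β)} = 0 := by
          intro t ht
          rw [Measure.restrict_apply' hS]
          have hempty : {y : EuclideanSpace ℝ (Fin n) | t ≤ ‖y - x₀‖ ^ (-β)} ∩ S = ∅ := by
            refine eq_empty_iff_forall_notMem.2 fun y hy ↦ ?_
            have h1 : r ≤ ‖y - x₀‖ := hrS y hy.2
            have h2 : ‖y - x₀‖ ^ (-β) ≤ T := by
              rw [hT_def]
              exact Real.rpow_le_rpow_of_nonpos hr h1 (by linarith)
            have h5 := hy.1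
            simp only [mem_setOf_eq] at h5
            exact absurd (le_trans h5 h2) (not_le.2 ht)
          rw [hempty, measure_empty]
        rw [setLIntegral_congr_fun measurableSet_Ioi h0]
        simp
      -- main part bound
      have hbound : ∀ t ∈ Ioc (0:ℝ) T, (volume.restrict S) {y | t ≤ ‖y - x₀‖ ^ (-β)}
          ≤ ENNReal.ofReal (t ^ a) * mB := by
        intro t ht
        rw [Measure.restrict_apply' hS]
        have hsub : {y : EuclideanSpace ℝ (Fin n) | t ≤ ‖y - x₀‖ ^ (-β)} ∩ S ⊆
            closedBall x₀ (t ^ (-β⁻¹)) := by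
          rintro y ⟨hy1, hy2⟩
          simp only [mem_setOf_eq] at hy1
          have hu0 : 0 < ‖y - x₀‖ := lt_of_lt_of_le hr (hrS y hy2)
          have h3 : (‖y - x₀‖ ^ (-β)) ^ (-β⁻¹) ≤ t ^ (-β⁻¹) :=
            Real.rpow_le_rpow_of_nonpos ht.1 hy1 (neg_nonpos.2 (inv_nonneg.2 hβ0.le))
          rw [← Real.rpow_mul hu0.le, neg_mul_neg, mul_inv_cancel₀ hβ0.ne',
            Real.rpow_one] at h3
          rw [mem_closedBall, dist_eq_norm]
          exact h3
        calc volume ({y : EuclideanSpace ℝ (Fin n) | t ≤ ‖y - x₀‖ ^ (-β)} ∩ S)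
            ≤ volume (closedBall x₀ (t ^ (-β⁻¹))) := measure_mono hsub
          _ = ENNReal.ofReal ((t ^ (-β⁻¹)) ^ Module.finrank ℝ (EuclideanSpace ℝ (Fin n))) * mB :=
              Measure.addHaar_closedBall _ _ (Real.rpow_nonneg ht.1.le _)
          _ = ENNReal.ofReal (t ^ a) * mB := by
              rw [hfr, ← Real.rpow_natCast (t ^ (-β⁻¹)) n, ← Real.rpow_mul ht.1.le, ← ha_def]
      -- compute the integral over Ioc 0 T
      have hIcalc : ∫⁻ t in Ioc (0:ℝ) T, ENNReal.ofReal (t ^ a)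
          = ENNReal.ofReal (T ^ (a+1) / (a+1)) := by
        have hion : IntegrableOn (fun t:ℝ ↦ t ^ a) (Ioc 0 T) :=
          (intervalIntegrable_iff_integrableOn_Ioc_of_le hT.le).1
            (intervalIntegral.intervalIntegrable_rpow' ha1)
        rw [← ofReal_integral_eq_lintegral_ofReal hion (by
          filter_upwards [ae_restrict_mem measurableSet_Ioc] with t ht
          exact Real.rpow_nonneg ht.1.le _)]
        congr 1
        rw [← intervalIntegral.integral_of_le hT.le, integral_rpow (Or.inl ha1),
          Real.zero_rpow (by linarith : a + 1 ≠ 0)]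
        ring
      have hTval : T ^ (a+1) / (a+1) = r ^ (-(β - (n:ℝ))) * D := by
        rw [hT_def, ← Real.rpow_mul hr.le, hD_def, div_eq_mul_inv]
        congr 2
        rw [ha_def]; field_simp; ring
      calc ∫⁻ y in S, ENNReal.ofReal |f y| ^ p
          = ∫⁻ t in Ioi (0:ℝ), (volume.restrict S) {y | t ≤ ‖y - x₀‖ ^ (-β)} := by
            rw [step1, step2]
        _ ≤ (∫⁻ t in Ioc (0:ℝ) T, (volume.restrict S) {y | t ≤ ‖y - x₀‖ ^ (-β)})
            + ∫⁻ t in Ioi T, (volume.restrict S) {y | t ≤ ‖y - x₀‖ ^ (-β)} :=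
            le_trans (lintegral_mono_set Ioi_subset_Ioc_union_Ioi) (lintegral_union_le _ _ _)
        _ ≤ (∫⁻ t in Ioc (0:ℝ) T, ENNReal.ofReal (t ^ a) * mB) + 0 :=
            add_le_add (setLIntegral_mono' measurableSet_Ioc hbound) (le_of_eq hzero)
        _ = ENNReal.ofReal (r ^ (-(β - (n:ℝ))) * D) * mB := by
            rw [add_zero, lintegral_mul_const' mB _ hmBt, hIcalc, hTval]
    -- now the uniform bound
    set K : ℝ≥0∞ := ENNReal.ofReal (D ^ (1/p)) * mB ^ (1/p) with hK_def
    have hKlt : K < ⊤ :=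
      ENNReal.mul_lt_top ENNReal.ofReal_lt_top
        (ENNReal.rpow_lt_top_of_nonneg (by positivity) hmBt)
    have hzero_exp : lam / pc + -(β - (n:ℝ)) * (1/p) = 0 := by
      rw [hβdef, hpc]; field_simp; ring
    refine lt_of_le_of_lt (iSup₂_le fun r hr ↦ ?_) hKlt
    rw [mem_Ioi] at hr
    have h1 : lpnorm p (Ω \ ball x₀ r) f ≤
        (ENNReal.ofReal (r ^ (-(β - (n:ℝ))) * D) * mB) ^ (1/p) := by
      rw [lpnorm]
      exact ENNReal.rpow_le_rpow (hI r hr) (by positivity)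
    calc ENNReal.ofReal (r ^ (lam / pc)) * lpnorm p (Ω \ ball x₀ r) f
        ≤ ENNReal.ofReal (r ^ (lam / pc)) *
            ((ENNReal.ofReal (r ^ (-(β - (n:ℝ))) * D) * mB) ^ (1/p)) :=
          mul_le_mul_right h1 _
      _ = ENNReal.ofReal (r ^ (lam / pc)) * ENNReal.ofReal (r ^ (-(β - (n:ℝ)) * (1/p))) *
            (ENNReal.ofReal (D ^ (1/p)) * mB ^ (1/p)) := by
          rw [ENNReal.mul_rpow_of_nonneg _ _ (by positivity : (0:ℝ) ≤ 1/p),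
            ENNReal.ofReal_rpow_of_nonneg (by positivity) (by positivity),
            Real.mul_rpow (by positivity) hD0, ← Real.rpow_mul hr.le,
            ENNReal.ofReal_mul (by positivity)]
          ring
      _ = K := by
          rw [← ENNReal.ofReal_mul (by positivity), ← Real.rpow_add hr, hzero_exp,
            Real.rpow_zero, ENNReal.ofReal_one, one_mul]
  · -- PART 2
    obtain ⟨ε, hε, hball⟩ := Metric.isOpen_iff.1 hΩo x₀ hx₀
    have hx₀ae : ∀ᵐ y ∂(volume : Measure (EuclideanSpace ℝ (Fin n))), y ≠ x₀ := by
      rw [ae_iff]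
      simp only [not_not, setOf_eq_eq_singleton]
      exact measure_singleton x₀
    have hcongr : ∫⁻ y in ball x₀ ε,
        ENNReal.ofReal (‖y - x₀‖ ^ (lam * (p - 1))) * ENNReal.ofReal |f y| ^ p
        = ∫⁻ y in ball x₀ ε, ENNReal.ofReal (‖y - x₀‖ ^ (-(n:ℝ))) := by
      refine lintegral_congr_ae ?_
      filter_upwards [ae_restrict_of_ae hx₀ae] with y hy
      have hu0 : 0 < ‖y - x₀‖ := by
        rw [norm_pos_iff]; exact sub_ne_zero.2 hy
      rw [hfp y hy, ← ENNReal.ofReal_mul (Real.rpow_nonneg (norm_nonneg _) _),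
        ← Real.rpow_add hu0]
      congr 2
      rw [hβdef]; ring
    have hgm2 : Measurable fun y : EuclideanSpace ℝ (Fin n) ↦ ‖y - x₀‖ ^ (-(n:ℝ)) := by fun_prop
    set T' : ℝ := ε ^ (-(n:ℝ)) with hT'_def
    have hT' : 0 < T' := Real.rpow_pos_of_pos hε _
    have hlc : ∫⁻ y in ball x₀ ε, ENNReal.ofReal (‖y - x₀‖ ^ (-(n:ℝ)))
        = ∫⁻ t in Ioi (0:ℝ), (volume.restrict (ball x₀ ε)) {y | t ≤ ‖y - x₀‖ ^ (-(n:ℝ))} :=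
      lintegral_eq_lintegral_meas_le _
        (ae_of_all _ fun y ↦ Real.rpow_nonneg (norm_nonneg _) _) hgm2.aemeasurable
    have hlow : ∀ t ∈ Ioi T', ENNReal.ofReal (t ^ (-1:ℝ)) * mB
        ≤ (volume.restrict (ball x₀ ε)) {y | t ≤ ‖y - x₀‖ ^ (-(n:ℝ))} := by
      intro t ht
      rw [mem_Ioi] at ht
      have ht0 : 0 < t := hT'.trans ht
      set R : ℝ := t ^ (-(n:ℝ)⁻¹) with hR_def
      have hR0 : 0 < R := Real.rpow_pos_of_pos ht0 _
      have hRε : R < ε := by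
        have h1 : t ^ (-(n:ℝ)⁻¹) < T' ^ (-(n:ℝ)⁻¹) :=
          Real.rpow_lt_rpow_of_neg hT' ht (neg_lt_zero.2 (inv_pos.2 hn0))
        have h2 : T' ^ (-(n:ℝ)⁻¹) = ε := by
          rw [hT'_def, ← Real.rpow_mul hε.le, neg_mul_neg, mul_inv_cancel₀ hn0.ne',
            Real.rpow_one]
        rw [hR_def]; rw [h2] at h1; exact h1
      rw [Measure.restrict_apply' measurableSet_ball]
      have hsub : ball x₀ R \ {x₀} ⊆
          {y : EuclideanSpace ℝ (Fin n) | t ≤ ‖y - x₀‖ ^ (-(n:ℝ))} ∩ ball x₀ ε := by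
        rintro y ⟨hy1, hy2⟩
        have hu0 : 0 < ‖y - x₀‖ := by
          rw [norm_pos_iff]; exact sub_ne_zero.2 (by simpa using hy2)
        rw [mem_ball, dist_eq_norm] at hy1
        constructor
        · have h3 : R ^ (-(n:ℝ)) < ‖y - x₀‖ ^ (-(n:ℝ)) :=
            Real.rpow_lt_rpow_of_neg hu0 hy1 (by linarith)
          have h4 : R ^ (-(n:ℝ)) = t := by
            rw [hR_def, ← Real.rpow_mul ht0.le, neg_mul_neg, inv_mul_cancel₀ hn0.ne',
              Real.rpow_one]
          rw [mem_setOf_eq]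
          rw [h4] at h3
          exact h3.le
        · rw [mem_ball, dist_eq_norm]; linarith
      calc ENNReal.ofReal (t ^ (-1:ℝ)) * mB
          = volume (ball x₀ R) := by
            rw [Measure.addHaar_ball _ _ hR0.le, hfr, ← Real.rpow_natCast R n, hR_def,
              ← Real.rpow_mul ht0.le]
            congr 2
            rw [neg_mul]
            congr 1
            rw [inv_mul_cancel₀ hn0.ne']
        _ = volume (ball x₀ R \ {x₀}) := (measure_diff_null (measure_singleton _)).symm
        _ ≤ volume ({y : EuclideanSpace ℝ (Fin n) | t ≤ ‖y - x₀‖ ^ (-(n:ℝ))} ∩ ball x₀ ε) :=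
            measure_mono hsub
    have htop : ∫⁻ t in Ioi (0:ℝ),
        (volume.restrict (ball x₀ ε)) {y | t ≤ ‖y - x₀‖ ^ (-(n:ℝ))} = ⊤ := by
      rw [eq_top_iff]
      calc (⊤:ℝ≥0∞) = (∫⁻ t in Ioi T', ENNReal.ofReal (t ^ (-1:ℝ))) * mB := by
            rw [aux_lintegral_inv_Ioi_top hT', ENNReal.top_mul hmB0]
        _ = ∫⁻ t in Ioi T', ENNReal.ofReal (t ^ (-1:ℝ)) * mB :=
            (lintegral_mul_const' mB _ hmBt).symm
        _ ≤ ∫⁻ t in Ioi T',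
              (volume.restrict (ball x₀ ε)) {y | t ≤ ‖y - x₀‖ ^ (-(n:ℝ))} :=
            setLIntegral_mono' measurableSet_Ioi hlow
        _ ≤ ∫⁻ t in Ioi (0:ℝ),
              (volume.restrict (ball x₀ ε)) {y | t ≤ ‖y - x₀‖ ^ (-(n:ℝ))} :=
            lintegral_mono_set (Ioi_subset_Ioi hT'.le)
    rw [eq_top_iff]
    calc (⊤:ℝ≥0∞) = ∫⁻ y in ball x₀ ε,
          ENNReal.ofReal (‖y - x₀‖ ^ (lam * (p - 1))) * ENNReal.ofReal |f y| ^ p := by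
          rw [hcongr, hlc, htop]
      _ ≤ ∫⁻ y in Ω,
          ENNReal.ofReal (‖y - x₀‖ ^ (lam * (p - 1))) * ENNReal.ofReal |f y| ^ p :=
          lintegral_mono_set hball
end

section
/- Let n ≥ 1, let Ω ⊂ ℝⁿ be a bounded open set with diameter ℓ, let x₀ ∈ Ω, let 1 ≤ p < ∞ with conjugate exponent p′ = p/(p−1), let 0 ≤ λ ≤ n, let A > ℓ and let B > ℓ·e^e. Define g(x) = ln(ln(B/|x−x₀|)) · |x−x₀|^{−n/p − λ/p′} for x ∈ Ω, x ≠ x₀. Then for every ε > 0 one has ∫_Ω |g(y)|^p |y−x₀|^{λ(p−1)} (ln(A/|y−x₀|))^{−(1+ε)} dy < ∞, while r^{λ/p′} ‖g‖_{L^p(Ω \ B(x₀,r))} → ∞ as r → 0⁺; in particular sup_{r>0} r^{λ/p′} ‖g‖_{L^p(Ω \ B(x₀,r))} = ∞, so g does not lie in the local complementary Morrey space ∁L^{p,λ}_{x₀}(Ω). Hence the embedding of ∁L^{p,λ}_{x₀}(Ω) into ⋂_{ε>0} L^p(Ω, |y−x₀|^{λ(p−1)} (ln(A/|y−x₀|))^{−(1+ε)})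 is strict. -/
open MeasureTheory Metric Set ENNReal Filter Topology

set_option maxHeartbeats 1600000 in
/-- For a bounded open `Ω ⊆ ℝⁿ` of diameter `ℓ`, `x₀ ∈ Ω`, `1 ≤ p < ∞` with
conjugate exponent `pc = p/(p−1)`, `0 ≤ λ ≤ n`, `A > ℓ` and `B > ℓ·e^e`, the function
`g(x) = ln(ln(B/|x−x₀|)) · |x−x₀|^{−n/p − λ/p′}` lies in every weighted space
`L^p(Ω, |y−x₀|^{λ(p−1)} (ln(A/|y−x₀|))^{−(1+ε)})`, `ε > 0`, while
`r^{λ/p′}‖g‖_{L^p(Ω∖B(x₀,r))} → ∞` as `r → 0⁺`; in particular the complementary Morrey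
norm of `g` is infinite, so the right-hand embedding of Theorem 2.1 is strict. -/
theorem statement3
    (n : ℕ) (hn : 1 ≤ n)
    (Ω : Set (EuclideanSpace ℝ (Fin n))) (hΩo : IsOpen Ω) (hΩb : Bornology.IsBounded Ω)
    (x₀ : EuclideanSpace ℝ (Fin n)) (hx₀ : x₀ ∈ Ω)
    (p pc : ℝ) (hp : 1 ≤ p) (hpc : pc = p / (p - 1))
    (lam : ℝ) (hlam0 : 0 ≤ lam) (hlamn : lam ≤ (n : ℝ))
    (ℓ : ℝ) (hℓ : ℓ = Metric.diam Ω)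
    (A : ℝ) (hA : ℓ < A)
    (B : ℝ) (hB : ℓ * Real.exp (Real.exp 1) < B)
    (g : EuclideanSpace ℝ (Fin n) → ℝ)
    (hgdef : ∀ x, x ≠ x₀ →
      g x = Real.log (Real.log (B / ‖x - x₀‖)) * ‖x - x₀‖ ^ (-((n : ℝ) / p + lam / pc))) :
    (∀ ε > (0 : ℝ),
      (∫⁻ y in Ω,
          ENNReal.ofReal
              (‖y - x₀‖ ^ (lam * (p - 1)) / Real.log (A / ‖y - x₀‖) ^ (1 + ε)) *
            ENNReal.ofReal |g y| ^ p) < ⊤) ∧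
    Tendsto (fun r : ℝ =>
        ENNReal.ofReal (r ^ (lam / pc)) * lpnorm p (Ω \ ball x₀ r) g)
      (𝓝[>] (0 : ℝ)) (𝓝 ⊤) ∧
    (⨆ r ∈ Ioi (0 : ℝ),
        ENNReal.ofReal (r ^ (lam / pc)) * lpnorm p (Ω \ ball x₀ r) g) = ⊤ := by
  classical
  haveI : Nonempty (Fin n) := ⟨⟨0, hn⟩⟩
  obtain ⟨δ, δpos, hδΩ⟩ := Metric.isOpen_iff.1 hΩo x₀ hx₀
  have hδℓ2 : δ / 2 ≤ ℓ := by
    have hmem : x₀ + EuclideanSpace.single (⟨0, hn⟩ : Fin n) (δ / 2) ∈ Ω := by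
      apply hδΩ
      rw [mem_ball, dist_eq_norm]
      simp only [add_sub_cancel_left, EuclideanSpace.norm_single]
      rw [Real.norm_eq_abs, abs_of_pos (by linarith)]
      linarith
    have h := Metric.dist_le_diam_of_mem hΩb hmem hx₀
    rw [dist_eq_norm] at h
    simp only [add_sub_cancel_left, EuclideanSpace.norm_single] at h
    rw [Real.norm_eq_abs, abs_of_pos (by linarith)] at h
    rw [hℓ]; exact h
  have ℓpos : 0 < ℓ := lt_of_lt_of_le (by linarith) hδℓ2
  have hA0 : 0 < A := lt_trans ℓpos hA
  have hB0 : 0 < B := lt_trans (by positivity) hB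
  have hppos : 0 < p := lt_of_lt_of_le one_pos hp
  set a := lam * (p - 1) with ha_def
  have ha0 : 0 ≤ a := mul_nonneg hlam0 (by linarith)
  have hpc2 : lam / pc = a / p := by
    rcases eq_or_lt_of_le hp with h1 | h1
    · have hp1 : p = 1 := h1.symm
      rw [hpc, ha_def, hp1]
      norm_num
    · rw [hpc, ha_def, div_div_eq_mul_div]
  have hexp1 : (-((n : ℝ) / p + lam / pc)) * p = -((n : ℝ) + a) := by
    rw [hpc2]
    field_simp
  have ht_le : ∀ y ∈ Ω, ‖y - x₀‖ ≤ ℓ := fun y hy => by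
    rw [← dist_eq_norm, hℓ]; exact Metric.dist_le_diam_of_mem hΩb hy hx₀
  have hℓA : ∀ t : ℝ, 0 < t → t ≤ ℓ → 0 < Real.log (A / t) := by
    intro t ht0 htℓ
    apply Real.log_pos
    rw [lt_div_iff₀ ht0]
    linarith
  have hℓB : ∀ t : ℝ, 0 < t → t ≤ ℓ → 1 < Real.log (B / t) := by
    intro t ht0 htℓ
    rw [Real.lt_log_iff_exp_lt (by positivity)]
    have h1 : Real.exp (Real.exp 1) < B / ℓ := (lt_div_iff₀ ℓpos).2 (by linarith)
    have h2 : B / ℓ ≤ B / t := by gcongr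
    have h3 : Real.exp 1 ≤ Real.exp (Real.exp 1) :=
      Real.exp_le_exp.2 (Real.one_le_exp zero_le_one)
    linarith
  have hgabs : ∀ y : EuclideanSpace ℝ (Fin n), ∀ t : ℝ, ‖y - x₀‖ = t → 0 < t → t ≤ ℓ →
      ENNReal.ofReal |g y| ^ p =
        ENNReal.ofReal (Real.log (Real.log (B / t)) ^ p * t ^ (-((n : ℝ) + a))) := by
    intro y t hyt ht0 htℓ
    have hy : y ≠ x₀ := by
      intro h
      rw [h, sub_self, norm_zero] at hyt
      exact absurd hyt.symm (ne_of_gt ht0)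
    have hL : 0 < Real.log (Real.log (B / t)) := Real.log_pos (hℓB t ht0 htℓ)
    have h2 : (0 : ℝ) ≤ t ^ (-((n : ℝ) / p + lam / pc)) := Real.rpow_nonneg ht0.le _
    rw [hgdef y hy, hyt, abs_of_nonneg (mul_nonneg hL.le h2),
      ENNReal.ofReal_rpow_of_nonneg (mul_nonneg hL.le h2) hppos.le]
    congr 1
    rw [Real.mul_rpow hL.le h2, ← Real.rpow_mul ht0.le, hexp1]
  -- PART 2 first (it is reused for part 3)
  have part2 : Tendsto (fun r : ℝ =>
      ENNReal.ofReal (r ^ (lam / pc)) * lpnorm p (Ω \ ball x₀ r) g)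
      (𝓝[>] (0 : ℝ)) (𝓝 ⊤) := by
    set V := volume (ball (0 : EuclideanSpace ℝ (Fin n)) 1) with hV_def
    have hV0 : 0 < V := measure_ball_pos _ _ one_pos
    have hVtop : V < ⊤ := measure_ball_lt_top
    have hVp0 : (0 : ℝ≥0∞) < V ^ (1 / p) := ENNReal.rpow_pos hV0 hVtop.ne
    have hVptop : V ^ (1 / p) ≠ ⊤ := ENNReal.rpow_ne_top_of_nonneg (by positivity) hVtop.ne
    have hlow : ∀ r : ℝ, 0 < r → r < δ / 4 →
        ENNReal.ofReal ((2 : ℝ) ^ (-(((n : ℝ) + a) / p)) *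
            Real.log (Real.log (B / (2 * r)))) * V ^ (1 / p)
          ≤ ENNReal.ofReal (r ^ (lam / pc)) * lpnorm p (Ω \ ball x₀ r) g := by
      intro r hr0 hr4
      have h2r : (0 : ℝ) < 2 * r := by linarith
      have h2rℓ : 2 * r ≤ ℓ := by linarith
      set L := Real.log (Real.log (B / (2 * r))) with hL_def
      have hL0 : 0 < L := Real.log_pos (hℓB _ h2r h2rℓ)
      set m := L ^ p * (2 * r) ^ (-((n : ℝ) + a)) with hm_def
      have hm0 : 0 ≤ m := mul_nonneg (Real.rpow_nonneg hL0.le _) (Real.rpow_nonneg h2r.le _)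
      have hsub : closedBall x₀ (2 * r) \ ball x₀ r ⊆ Ω \ ball x₀ r := by
        rintro y ⟨hy1, hy2⟩
        refine ⟨hδΩ ?_, hy2⟩
        rw [mem_ball]
        exact lt_of_le_of_lt (mem_closedBall.1 hy1) (by linarith)
      have hptw : ∀ y ∈ closedBall x₀ (2 * r) \ ball x₀ r,
          ENNReal.ofReal m ≤ ENNReal.ofReal |g y| ^ p := by
        rintro y ⟨hy1, hy2⟩
        have hty : r ≤ ‖y - x₀‖ := by
          rw [← dist_eq_norm]
          exact le_of_not_gt (fun h => hy2 (mem_ball.2 h))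
        have ht2 : ‖y - x₀‖ ≤ 2 * r := by
          rw [← dist_eq_norm]; exact mem_closedBall.1 hy1
        have ht0 : 0 < ‖y - x₀‖ := lt_of_lt_of_le hr0 hty
        have htℓ : ‖y - x₀‖ ≤ ℓ := le_trans ht2 h2rℓ
        rw [hgabs y _ rfl ht0 htℓ]
        apply ENNReal.ofReal_le_ofReal
        rw [hm_def]
        apply mul_le_mul
        · apply Real.rpow_le_rpow hL0.le ?_ hppos.le
          apply Real.log_le_log (lt_trans one_pos (hℓB _ h2r h2rℓ))
          apply Real.log_le_log (by positivity)
          gcongr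
        · exact Real.rpow_le_rpow_of_nonpos ht0 ht2 (neg_nonpos.2 (add_nonneg (Nat.cast_nonneg n) ha0))
        · exact Real.rpow_nonneg h2r.le _
        · exact Real.rpow_nonneg (Real.log_nonneg (hℓB _ ht0 htℓ).le) _
      have hvol : ENNReal.ofReal (r ^ n) * V ≤ volume (closedBall x₀ (2 * r) \ ball x₀ r) := by
        rw [measure_diff (ball_subset_closedBall.trans
              (closedBall_subset_closedBall (by linarith)))
            measurableSet_ball.nullMeasurableSet measure_ball_lt_top.ne,
          Measure.addHaar_closedBall _ _ h2r.le, Measure.addHaar_ball _ _ hr0.le,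
          finrank_euclideanSpace_fin]
        apply ENNReal.le_sub_of_add_le_left (by
          apply ENNReal.mul_ne_top ENNReal.ofReal_ne_top hVtop.ne)
        rw [← add_mul, ← ENNReal.ofReal_add (by positivity) (by positivity)]
        apply mul_le_mul_left
        apply ENNReal.ofReal_le_ofReal
        have h2n : (2 : ℝ) ≤ 2 ^ n := by
          calc (2 : ℝ) = 2 ^ 1 := (pow_one 2).symm
          _ ≤ 2 ^ n := pow_le_pow_right₀ one_le_two hn
        have hrp : (0 : ℝ) ≤ r ^ n := pow_nonneg hr0.le n
        have : (2 * r) ^ n = 2 ^ n * r ^ n := mul_pow 2 r n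
        nlinarith
      have hint : ENNReal.ofReal m * (ENNReal.ofReal (r ^ n) * V)
          ≤ ∫⁻ y in Ω \ ball x₀ r, ENNReal.ofReal |g y| ^ p := by
        calc ENNReal.ofReal m * (ENNReal.ofReal (r ^ n) * V)
            ≤ ENNReal.ofReal m * volume (closedBall x₀ (2 * r) \ ball x₀ r) :=
              mul_le_mul_right hvol _
        _ = ∫⁻ _ in closedBall x₀ (2 * r) \ ball x₀ r, ENNReal.ofReal m :=
              (setLIntegral_const _ _).symm
        _ ≤ ∫⁻ y in closedBall x₀ (2 * r) \ ball x₀ r, ENNReal.ofReal |g y| ^ p := by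
              apply lintegral_mono_ae
              filter_upwards [ae_restrict_mem
                (measurableSet_closedBall.diff measurableSet_ball)] with y hy
              exact hptw y hy
        _ ≤ _ := lintegral_mono_set hsub
      have hlp : ENNReal.ofReal ((m * r ^ n) ^ (1 / p)) * V ^ (1 / p)
          ≤ lpnorm p (Ω \ ball x₀ r) g := by
        rw [lpnorm]
        have e1 : ENNReal.ofReal ((m * r ^ n) ^ (1 / p)) * V ^ (1 / p)
            = (ENNReal.ofReal (m * r ^ n) * V) ^ (1 / p) := by
          rw [ENNReal.mul_rpow_of_nonneg _ _ (by positivity),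
            ENNReal.ofReal_rpow_of_nonneg (by positivity) (by positivity)]
        rw [e1]
        apply ENNReal.rpow_le_rpow _ (by positivity)
        rw [ENNReal.ofReal_mul hm0, mul_assoc]
        exact hint
      calc ENNReal.ofReal ((2 : ℝ) ^ (-(((n : ℝ) + a) / p)) * L) * V ^ (1 / p)
          = ENNReal.ofReal (r ^ (lam / pc)) *
              (ENNReal.ofReal ((m * r ^ n) ^ (1 / p)) * V ^ (1 / p)) := by
            rw [← mul_assoc, ← ENNReal.ofReal_mul (Real.rpow_nonneg hr0.le _)]
            congr 2
            rw [hpc2]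
            have e2 : (m * r ^ n : ℝ) = L ^ p * (2 * r) ^ (-((n : ℝ) + a)) * r ^ ((n : ℝ)) := by
              rw [hm_def, Real.rpow_natCast]
            rw [e2, Real.mul_rpow (mul_nonneg (Real.rpow_nonneg hL0.le _)
                (Real.rpow_nonneg h2r.le _)) (Real.rpow_nonneg hr0.le _),
              Real.mul_rpow (Real.rpow_nonneg hL0.le _) (Real.rpow_nonneg h2r.le _),
              ← Real.rpow_mul hL0.le, mul_one_div_cancel hppos.ne', Real.rpow_one,
              ← Real.rpow_mul h2r.le, ← Real.rpow_mul hr0.le,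
              Real.mul_rpow (by norm_num : (0:ℝ) ≤ 2) hr0.le]
            have e3 : (2:ℝ) ^ (-((n : ℝ) + a) * (1 / p)) = 2 ^ (-(((n : ℝ) + a) / p)) := by
              congr 1; ring
            rw [e3]
            have e4 : r ^ (a / p) * (L * ((2:ℝ) ^ (-(((n : ℝ) + a) / p)) *
                r ^ (-((n : ℝ) + a) * (1 / p))) * r ^ ((n : ℝ) * (1 / p)))
                = (2:ℝ) ^ (-(((n : ℝ) + a) / p)) * L *
                  (r ^ (a / p) * r ^ (-((n : ℝ) + a) * (1 / p)) * r ^ ((n : ℝ) * (1 / p))) := by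
              ring
            rw [e4, ← Real.rpow_add hr0, ← Real.rpow_add hr0]
            have e5 : a / p + -((n : ℝ) + a) * (1 / p) + (n : ℝ) * (1 / p) = 0 := by
              field_simp
              ring
            rw [e5, Real.rpow_zero, mul_one]
      _ ≤ _ := mul_le_mul_right hlp _
    -- the lower bound tends to infinity
    have htend : Tendsto (fun r : ℝ => (2 : ℝ) ^ (-(((n : ℝ) + a) / p)) *
        Real.log (Real.log (B / (2 * r)))) (𝓝[>] (0 : ℝ)) atTop := by
      apply Tendsto.const_mul_atTop (by positivity)
      apply Real.tendsto_log_atTop.comp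
      apply Real.tendsto_log_atTop.comp
      have : Tendsto (fun r : ℝ => (B / 2) * r⁻¹) (𝓝[>] (0 : ℝ)) atTop :=
        (tendsto_inv_nhdsGT_zero).const_mul_atTop (by positivity)
      refine this.congr fun r => ?_
      field_simp
    rw [ENNReal.tendsto_nhds_top_iff_nnreal]
    intro x
    have hv0 : 0 < (V ^ (1 / p)).toReal := ENNReal.toReal_pos hVp0.ne' hVptop
    have htend2 : Tendsto (fun r : ℝ => ((2 : ℝ) ^ (-(((n : ℝ) + a) / p)) *
        Real.log (Real.log (B / (2 * r)))) * (V ^ (1 / p)).toReal) (𝓝[>] (0 : ℝ)) atTop :=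
      htend.atTop_mul_const hv0
    filter_upwards [htend2.eventually_gt_atTop (x : ℝ),
      Ioo_mem_nhdsGT_of_mem (⟨le_refl (0:ℝ), by positivity⟩ : (0:ℝ) ∈ Ico (0:ℝ) (δ/4))]
      with r h1 h2
    have hφ0 : 0 ≤ (2 : ℝ) ^ (-(((n : ℝ) + a) / p)) *
        Real.log (Real.log (B / (2 * r))) := by
      have h2r : (0 : ℝ) < 2 * r := by linarith [h2.1]
      have h2rℓ : 2 * r ≤ ℓ := by linarith [h2.2, hδℓ2]
      have := Real.log_pos (hℓB _ h2r h2rℓ)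
      positivity
    calc (x : ℝ≥0∞) < ENNReal.ofReal (((2 : ℝ) ^ (-(((n : ℝ) + a) / p)) *
            Real.log (Real.log (B / (2 * r)))) * (V ^ (1 / p)).toReal) := by
          rw [ENNReal.lt_ofReal_iff_toReal_lt ENNReal.coe_ne_top]
          simpa using h1
    _ = ENNReal.ofReal ((2 : ℝ) ^ (-(((n : ℝ) + a) / p)) *
            Real.log (Real.log (B / (2 * r)))) * V ^ (1 / p) := by
          rw [ENNReal.ofReal_mul hφ0, ENNReal.ofReal_toReal hVptop]
    _ ≤ _ := hlow r h2.1 h2.2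
  refine ⟨?_, part2, ?_⟩
  · -- PART 1
    intro ε hε
    set s := ε / (2 * p) with hs_def
    have hs : 0 < s := by positivity
    set K := Real.log (B / ℓ) + Real.log 2 with hK_def
    have hBℓ1 : 1 < Real.log (B / ℓ) := hℓB ℓ ℓpos le_rfl
    have hlog2 : 0 < Real.log 2 := Real.log_pos one_lt_two
    have hK : 0 < K := by rw [hK_def]; linarith
    set c := min (Real.log (A / ℓ)) (Real.log 2) with hc_def
    have hAℓ : 0 < Real.log (A / ℓ) := hℓA ℓ ℓpos le_rfl
    have hc : 0 < c := lt_min hAℓ hlog2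
    set M := K ^ (ε / 2) * s ^ (-p) * c ^ (-(1 + ε)) * 2 ^ (n : ℝ) with hM_def
    have hM : 0 < M := by rw [hM_def]; positivity
    set T : ℕ → Set (EuclideanSpace ℝ (Fin n)) :=
      fun k => {y | ℓ / 2 ^ (k + 1) < ‖y - x₀‖ ∧ ‖y - x₀‖ ≤ ℓ / 2 ^ k} with hT_def
    have hak : ∀ k : ℕ, (0 : ℝ) < ℓ / 2 ^ (k + 1) := fun k => by positivity
    have hbk : ∀ k : ℕ, (0 : ℝ) < ℓ / 2 ^ k := fun k => by positivity
    have hone_le_pow : ∀ k : ℕ, (1 : ℝ) ≤ 2 ^ k := fun k => one_le_pow₀ one_le_two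
    have hakℓ : ∀ k : ℕ, ℓ / 2 ^ (k + 1) ≤ ℓ := fun k =>
      div_le_self ℓpos.le (hone_le_pow (k + 1))
    have hbkℓ : ∀ k : ℕ, ℓ / 2 ^ k ≤ ℓ := fun k => div_le_self ℓpos.le (hone_le_pow k)
    have hTmeas : ∀ k, MeasurableSet (T k) := by
      intro k
      have he : T k = (fun y => ‖y - x₀‖) ⁻¹' (Ioc (ℓ / 2 ^ (k + 1)) (ℓ / 2 ^ k)) := rfl
      rw [he]
      exact ((continuous_id.sub continuous_const).norm).measurable measurableSet_Ioc
    set D : ℕ → ℝ := fun k =>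
      Real.log (Real.log (B / (ℓ / 2 ^ (k + 1)))) ^ p * (ℓ / 2 ^ (k + 1)) ^ (-(n : ℝ)) /
        Real.log (A / (ℓ / 2 ^ k)) ^ (1 + ε) with hD_def
    have hD0 : ∀ k, 0 ≤ D k := by
      intro k
      apply div_nonneg
      · exact mul_nonneg (Real.rpow_nonneg
          (Real.log_nonneg (hℓB _ (hak k) (hakℓ k)).le) _) (Real.rpow_nonneg (hak k).le _)
      · exact Real.rpow_nonneg (hℓA _ (hbk k) (hbkℓ k)).le _
    have hcover : Ω ⊆ {x₀} ∪ ⋃ k, T k := by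
      intro y hy
      rcases eq_or_ne y x₀ with rfl | hyx
      · exact Or.inl rfl
      · have ht0 : 0 < ‖y - x₀‖ := by
          rw [norm_pos_iff]
          exact sub_ne_zero_of_ne hyx
        have htℓ : ‖y - x₀‖ ≤ ℓ := ht_le y hy
        have hex : ∃ k : ℕ, ℓ / 2 ^ (k + 1) < ‖y - x₀‖ := by
          obtain ⟨k, hk⟩ := pow_unbounded_of_one_lt (ℓ / ‖y - x₀‖) (one_lt_two (α := ℝ))
          refine ⟨k, ?_⟩
          rw [div_lt_iff₀ (by positivity)]
          rw [div_lt_iff₀ ht0] at hk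
          have h1 : (2:ℝ) ^ k ≤ 2 ^ (k + 1) := by
            rw [pow_succ]
            nlinarith [pow_pos (by norm_num : (0:ℝ) < 2) k]
          nlinarith [ht0]
        refine Or.inr (mem_iUnion.2 ⟨Nat.find hex, Nat.find_spec hex, ?_⟩)
        rcases Nat.eq_zero_or_pos (Nat.find hex) with h0 | hkpos
        · rw [h0]; simpa using htℓ
        · obtain ⟨j, hj⟩ := Nat.exists_eq_succ_of_ne_zero hkpos.ne'
          have hmin := Nat.find_min hex (show j < Nat.find hex by omega)
          push_neg at hmin
          rw [hj]
          exact hmin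
    have hpoint : ∀ k : ℕ, ∀ y ∈ T k,
        ENNReal.ofReal (‖y - x₀‖ ^ a / Real.log (A / ‖y - x₀‖) ^ (1 + ε)) *
          ENNReal.ofReal |g y| ^ p ≤ ENNReal.ofReal (D k) := by
      intro k y hy
      obtain ⟨h1, h2⟩ := hy
      have ht0 : 0 < ‖y - x₀‖ := lt_trans (hak k) h1
      have htℓ : ‖y - x₀‖ ≤ ℓ := le_trans h2 (hbkℓ k)
      have hLt : 0 < Real.log (Real.log (B / ‖y - x₀‖)) := Real.log_pos (hℓB _ ht0 htℓ)
      have hLa : 0 ≤ Real.log (Real.log (B / (ℓ / 2 ^ (k + 1)))) :=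
        (Real.log_pos (hℓB _ (hak k) (hakℓ k))).le
      have hlAt : 0 < Real.log (A / ‖y - x₀‖) := hℓA _ ht0 htℓ
      have hlAb : 0 < Real.log (A / (ℓ / 2 ^ k)) := hℓA _ (hbk k) (hbkℓ k)
      rw [hgabs y _ rfl ht0 htℓ, ← ENNReal.ofReal_mul
        (div_nonneg (Real.rpow_nonneg ht0.le _) (Real.rpow_nonneg hlAt.le _))]
      apply ENNReal.ofReal_le_ofReal
      have hrw : ‖y - x₀‖ ^ a / Real.log (A / ‖y - x₀‖) ^ (1 + ε) *
          (Real.log (Real.log (B / ‖y - x₀‖)) ^ p * ‖y - x₀‖ ^ (-((n : ℝ) + a)))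
          = Real.log (Real.log (B / ‖y - x₀‖)) ^ p * ‖y - x₀‖ ^ (-(n : ℝ)) /
              Real.log (A / ‖y - x₀‖) ^ (1 + ε) := by
        rw [show ‖y - x₀‖ ^ (-(n : ℝ)) = ‖y - x₀‖ ^ a * ‖y - x₀‖ ^ (-((n : ℝ) + a)) by
          rw [← Real.rpow_add ht0]; ring_nf]
        ring
      rw [hrw, hD_def]
      apply div_le_div₀
      · exact mul_nonneg (Real.rpow_nonneg hLa _) (Real.rpow_nonneg (hak k).le _)
      · apply mul_le_mul
        · apply Real.rpow_le_rpow hLt.le ?_ hppos.le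
          apply Real.log_le_log (lt_trans one_pos (hℓB _ ht0 htℓ))
          apply Real.log_le_log (by positivity)
          gcongr
        · exact Real.rpow_le_rpow_of_nonpos (hak k) h1.le
            (neg_nonpos.2 (Nat.cast_nonneg n))
        · exact Real.rpow_nonneg ht0.le _
        · exact Real.rpow_nonneg hLa _
      · exact Real.rpow_pos_of_pos hlAb _
      · apply Real.rpow_le_rpow hlAb.le ?_ (by positivity)
        apply Real.log_le_log (by positivity)
        gcongr
    have harith : ∀ k : ℕ, D k * (ℓ / 2 ^ k) ^ n ≤ M * ((k : ℝ) + 1) ^ (-(1 + ε / 2)) := by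
      intro k
      have hk1 : (0 : ℝ) < (k : ℝ) + 1 := by positivity
      have e1 : Real.log (B / (ℓ / 2 ^ (k + 1)))
          = Real.log (B / ℓ) + ((k : ℝ) + 1) * Real.log 2 := by
        have hx : B / (ℓ / 2 ^ (k + 1)) = (B / ℓ) * 2 ^ (k + 1) := by
          field_simp
        rw [hx, Real.log_mul (by positivity) (by positivity), Real.log_pow]
        push_cast; ring
      have e2 : Real.log (A / (ℓ / 2 ^ k)) = Real.log (A / ℓ) + (k : ℝ) * Real.log 2 := by
        have hx : A / (ℓ / 2 ^ k) = (A / ℓ) * 2 ^ k := by field_simp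
        rw [hx, Real.log_mul (by positivity) (by positivity), Real.log_pow]
      have hBℓ0 : 0 < Real.log (B / ℓ) := lt_trans one_pos hBℓ1
      have hKk : Real.log (B / (ℓ / 2 ^ (k + 1))) ≤ K * ((k : ℝ) + 1) := by
        rw [e1, hK_def]
        have : (0:ℝ) ≤ (k : ℝ) := Nat.cast_nonneg k
        nlinarith
      have hKk0 : 0 < K * ((k : ℝ) + 1) := by positivity
      have hck : c * ((k : ℝ) + 1) ≤ Real.log (A / (ℓ / 2 ^ k)) := by
        rw [e2]
        have h1 := min_le_left (Real.log (A / ℓ)) (Real.log 2)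
        have h2 := min_le_right (Real.log (A / ℓ)) (Real.log 2)
        have : (0:ℝ) ≤ (k : ℝ) := Nat.cast_nonneg k
        rw [← hc_def] at h1 h2
        nlinarith
      have hck0 : 0 < c * ((k : ℝ) + 1) := by positivity
      have hLak : Real.log (Real.log (B / (ℓ / 2 ^ (k + 1))))
          ≤ (K * ((k : ℝ) + 1)) ^ s / s := by
        refine le_trans (Real.log_le_log (lt_trans one_pos (hℓB _ (hak k) (hakℓ k))) hKk) ?_
        exact Real.log_le_rpow_div hKk0.le hs
      have hnum : Real.log (Real.log (B / (ℓ / 2 ^ (k + 1)))) ^ p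
          ≤ K ^ (ε / 2) * s ^ (-p) * ((k : ℝ) + 1) ^ (ε / 2) := by
        have hLa0 : 0 ≤ Real.log (Real.log (B / (ℓ / 2 ^ (k + 1)))) :=
          (Real.log_pos (hℓB _ (hak k) (hakℓ k))).le
        calc Real.log (Real.log (B / (ℓ / 2 ^ (k + 1)))) ^ p
            ≤ ((K * ((k : ℝ) + 1)) ^ s / s) ^ p := Real.rpow_le_rpow hLa0 hLak hppos.le
        _ = ((K * ((k : ℝ) + 1)) ^ s) ^ p / s ^ p :=
            Real.div_rpow (Real.rpow_nonneg hKk0.le _) hs.le _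
        _ = (K * ((k : ℝ) + 1)) ^ (s * p) / s ^ p := by rw [← Real.rpow_mul hKk0.le]
        _ = (K * ((k : ℝ) + 1)) ^ (ε / 2) / s ^ p := by
            rw [show s * p = ε / 2 by rw [hs_def]; field_simp]
        _ = K ^ (ε / 2) * s ^ (-p) * ((k : ℝ) + 1) ^ (ε / 2) := by
            rw [Real.mul_rpow hK.le hk1.le, Real.rpow_neg hs.le]
            ring
      have hden : (c * ((k : ℝ) + 1)) ^ (1 + ε) ≤ Real.log (A / (ℓ / 2 ^ k)) ^ (1 + ε) :=
        Real.rpow_le_rpow hck0.le hck (by positivity)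
      have hdenpos : 0 < (c * ((k : ℝ) + 1)) ^ (1 + ε) := Real.rpow_pos_of_pos hck0 _
      have hpow : (ℓ / 2 ^ (k + 1)) ^ (-(n : ℝ)) * (ℓ / 2 ^ k) ^ n = 2 ^ (n : ℝ) := by
        rw [← Real.rpow_natCast (ℓ / 2 ^ k) n, Real.rpow_neg (hak k).le,
          ← Real.inv_rpow (hak k).le, ← Real.mul_rpow (by positivity) (hbk k).le]
        congr 1
        rw [inv_div]
        field_simp [ℓpos.ne']
        ring
      calc D k * (ℓ / 2 ^ k) ^ n
          = Real.log (Real.log (B / (ℓ / 2 ^ (k + 1)))) ^ p *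
              ((ℓ / 2 ^ (k + 1)) ^ (-(n : ℝ)) * (ℓ / 2 ^ k) ^ n) /
              Real.log (A / (ℓ / 2 ^ k)) ^ (1 + ε) := by
            rw [hD_def]; ring
      _ = Real.log (Real.log (B / (ℓ / 2 ^ (k + 1)))) ^ p * 2 ^ (n : ℝ) /
              Real.log (A / (ℓ / 2 ^ k)) ^ (1 + ε) := by rw [hpow]
      _ ≤ (K ^ (ε / 2) * s ^ (-p) * ((k : ℝ) + 1) ^ (ε / 2) * 2 ^ (n : ℝ)) /
              ((c * ((k : ℝ) + 1)) ^ (1 + ε)) := by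
            apply div_le_div₀ (by positivity) ?_ hdenpos hden
            apply mul_le_mul_of_nonneg_right hnum (by positivity)
      _ = M * ((k : ℝ) + 1) ^ (-(1 + ε / 2)) := by
            rw [hM_def, Real.mul_rpow hc.le hk1.le, Real.rpow_neg hc.le,
              show ((k : ℝ) + 1) ^ (-(1 + ε / 2))
                = ((k : ℝ) + 1) ^ (ε / 2) * (((k : ℝ) + 1) ^ (1 + ε))⁻¹ by
                rw [← Real.rpow_neg hk1.le, ← Real.rpow_add hk1]; ring_nf]
            field_simp
    have hsummable : Summable (fun k : ℕ => M * ((k : ℝ) + 1) ^ (-(1 + ε / 2))) := by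
      have h1 : Summable (fun k : ℕ => ((k : ℝ)) ^ (-(1 + ε / 2))) :=
        Real.summable_nat_rpow.2 (by linarith)
      have h2 := (summable_nat_add_iff 1).2 h1
      have h3 : Summable (fun k : ℕ => ((k : ℝ) + 1) ^ (-(1 + ε / 2))) := by
        refine h2.congr fun k => ?_
        push_cast
        ring_nf
      exact h3.mul_left M
    set V := volume (ball (0 : EuclideanSpace ℝ (Fin n)) 1) with hV_def
    calc (∫⁻ y in Ω, ENNReal.ofReal (‖y - x₀‖ ^ a / Real.log (A / ‖y - x₀‖) ^ (1 + ε)) *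
            ENNReal.ofReal |g y| ^ p)
        ≤ ∫⁻ y in ({x₀} ∪ ⋃ k, T k),
            ENNReal.ofReal (‖y - x₀‖ ^ a / Real.log (A / ‖y - x₀‖) ^ (1 + ε)) *
            ENNReal.ofReal |g y| ^ p := lintegral_mono_set hcover
    _ ≤ (∫⁻ y in ({x₀} : Set (EuclideanSpace ℝ (Fin n))),
            ENNReal.ofReal (‖y - x₀‖ ^ a / Real.log (A / ‖y - x₀‖) ^ (1 + ε)) *
            ENNReal.ofReal |g y| ^ p) +
          ∫⁻ y in (⋃ k, T k),
            ENNReal.ofReal (‖y - x₀‖ ^ a / Real.log (A / ‖y - x₀‖) ^ (1 + ε)) *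
            ENNReal.ofReal |g y| ^ p := lintegral_union_le _ _ _
    _ = ∫⁻ y in (⋃ k, T k),
            ENNReal.ofReal (‖y - x₀‖ ^ a / Real.log (A / ‖y - x₀‖) ^ (1 + ε)) *
            ENNReal.ofReal |g y| ^ p := by
          rw [Measure.restrict_eq_zero.2 (measure_singleton x₀), lintegral_zero_measure,
            zero_add]
    _ ≤ ∑' k : ℕ, ∫⁻ y in T k,
            ENNReal.ofReal (‖y - x₀‖ ^ a / Real.log (A / ‖y - x₀‖) ^ (1 + ε)) *
            ENNReal.ofReal |g y| ^ p := lintegral_iUnion_le _ _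
    _ ≤ ∑' k : ℕ, ENNReal.ofReal (M * ((k : ℝ) + 1) ^ (-(1 + ε / 2))) * V := by
          apply ENNReal.tsum_le_tsum
          intro k
          calc (∫⁻ y in T k,
                ENNReal.ofReal (‖y - x₀‖ ^ a / Real.log (A / ‖y - x₀‖) ^ (1 + ε)) *
                ENNReal.ofReal |g y| ^ p)
              ≤ ∫⁻ _ in T k, ENNReal.ofReal (D k) := by
                apply lintegral_mono_ae
                filter_upwards [ae_restrict_mem (hTmeas k)] with y hy
                exact hpoint k y hy
          _ = ENNReal.ofReal (D k) * volume (T k) := setLIntegral_const _ _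
          _ ≤ ENNReal.ofReal (D k) * (ENNReal.ofReal ((ℓ / 2 ^ k) ^ n) * V) := by
                apply mul_le_mul_right
                have hsub : T k ⊆ closedBall x₀ (ℓ / 2 ^ k) := by
                  intro y hy
                  rw [mem_closedBall, dist_eq_norm]
                  exact hy.2
                have : volume (T k) ≤ volume (closedBall x₀ (ℓ / 2 ^ k)) :=
                  measure_mono hsub
                rw [Measure.addHaar_closedBall _ _ (hbk k).le,
                  finrank_euclideanSpace_fin] at this
                rw [hV_def]
                exact this
          _ ≤ ENNReal.ofReal (M * ((k : ℝ) + 1) ^ (-(1 + ε / 2))) * V := by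
                rw [← mul_assoc, ← ENNReal.ofReal_mul (hD0 k)]
                apply mul_le_mul_left
                exact ENNReal.ofReal_le_ofReal (harith k)
    _ < ⊤ := by
          rw [ENNReal.tsum_mul_right]
          apply ENNReal.mul_lt_top _ measure_ball_lt_top
          rw [← ENNReal.ofReal_tsum_of_nonneg
            (fun k => mul_nonneg hM.le (Real.rpow_nonneg (by positivity) _)) hsummable]
          exact ENNReal.ofReal_lt_top
  · -- PART 3
    by_contra hne
    have hlt : (⨆ r ∈ Ioi (0 : ℝ),
        ENNReal.ofReal (r ^ (lam / pc)) * lpnorm p (Ω \ ball x₀ r) g) < ⊤ :=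
      lt_top_iff_ne_top.2 hne
    obtain ⟨x, hx1, -⟩ := ENNReal.lt_iff_exists_nnreal_btwn.1 hlt
    have hev := ENNReal.tendsto_nhds_top_iff_nnreal.1 part2 x
    obtain ⟨r, hr, hrmem⟩ := (hev.and self_mem_nhdsWithin).exists
    have hle : ENNReal.ofReal (r ^ (lam / pc)) * lpnorm p (Ω \ ball x₀ r) g
        ≤ ⨆ r ∈ Ioi (0 : ℝ),
          ENNReal.ofReal (r ^ (lam / pc)) * lpnorm p (Ω \ ball x₀ r) g :=
      le_biSup (fun r : ℝ => ENNReal.ofReal (r ^ (lam / pc)) * lpnorm p (Ω \ ball x₀ r) g)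
        hrmem
    exact lt_irrefl _ (lt_trans (lt_of_lt_of_le hr hle) hx1)
end

section
/- Let n ≥ 1, let Ω ⊂ ℝⁿ be a bounded open set, let x₀ ∈ Ω, let 1 ≤ p < ∞ with conjugate exponent p′ = p/(p−1), and let ω : (0,∞) → (0,∞) be measurable. Let ρ : (0,∞) → (0,∞) be an increasing function such that c := inf_{r>0} ρ(r) ω(r)^p / r^{n(p−1)} > 0. Then for every measurable f : Ω → ℝ, sup_{r>0} (r^{n/p′}/ω(r)) ‖f‖_{L^p(Ω \ B(x₀,r))} ≤ c^{−1/p} (∫_Ω ρ(|y−x₀|) |f(y)|^p dy)^{1/p}. That is, the weighted Lebesgue space L^p(Ω, ρ(|·−x₀|)) embeds into the local complementary generalized Morrey space ∁M^{p,ω}_{x₀}(Ω). -/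
open MeasureTheory Metric Set ENNReal Filter Topology

/-- For a bounded open `Ω ⊆ ℝⁿ`, `x₀ ∈ Ω`, `1 ≤ p < ∞` with conjugate
exponent `pc = p/(p−1)`, a positive measurable `ω` and an increasing positive `ρ` on
`(0,∞)` with `c := inf_{r>0} ρ(r)ω(r)^p/r^{n(p−1)} > 0`, one has for every measurable `f`:
`sup_{r>0} (r^{n/p′}/ω(r)) ‖f‖_{L^p(Ω∖B(x₀,r))} ≤ c^{−1/p} (∫_Ω ρ(|y−x₀|)|f(y)|^p dy)^{1/p}`,
i.e. `L^p(Ω, ρ(|·−x₀|))` embeds into `∁M^{p,ω}_{x₀}(Ω)`. -/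
theorem statement5
    (n : ℕ) (hn : 1 ≤ n)
    (Ω : Set (EuclideanSpace ℝ (Fin n))) (hΩo : IsOpen Ω) (hΩb : Bornology.IsBounded Ω)
    (x₀ : EuclideanSpace ℝ (Fin n)) (hx₀ : x₀ ∈ Ω)
    (p pc : ℝ) (hp : 1 ≤ p) (hpc : pc = p / (p - 1))
    (ω : ℝ → ℝ) (hωmeas : Measurable ω) (hωpos : ∀ r > (0 : ℝ), 0 < ω r)
    (ρ : ℝ → ℝ) (hρpos : ∀ r > (0 : ℝ), 0 < ρ r) (hρmono : MonotoneOn ρ (Ioi (0 : ℝ)))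
    (c : ℝ) (hc : 0 < c)
    (hcinf : ∀ r > (0 : ℝ), c ≤ ρ r * ω r ^ p / r ^ ((n : ℝ) * (p - 1)))
    (f : EuclideanSpace ℝ (Fin n) → ℝ) (hf : Measurable f) :
    (⨆ r ∈ Ioi (0 : ℝ),
        ENNReal.ofReal (r ^ ((n : ℝ) / pc) / ω r) * lpnorm p (Ω \ ball x₀ r) f) ≤
      ENNReal.ofReal (c ^ (-(1 / p))) *
        (∫⁻ y in Ω,
            ENNReal.ofReal (ρ ‖y - x₀‖) * ENNReal.ofReal |f y| ^ p) ^ (1 / p) := by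

  have hp0 : (0:ℝ) < p := lt_of_lt_of_le one_pos hp
  have hip : (0:ℝ) ≤ 1/p := by positivity
  set I := ∫⁻ y in Ω, ENNReal.ofReal (ρ ‖y - x₀‖) * ENNReal.ofReal |f y| ^ p with hIdef
  refine iSup₂_le fun r hr => ?_
  have hr0 : (0:ℝ) < r := hr
  have hb : (0:ℝ) < ρ r := hρpos r hr0
  have ha : (0:ℝ) < ω r := hωpos r hr0
  -- Step A : integral bound
  have hA : ∫⁻ y in Ω \ ball x₀ r, ENNReal.ofReal |f y| ^ p ≤ ENNReal.ofReal (ρ r)⁻¹ * I := by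
    have hms : MeasurableSet (Ω \ ball x₀ r) := hΩo.measurableSet.diff measurableSet_ball
    have h1 : ∫⁻ y in Ω \ ball x₀ r, ENNReal.ofReal |f y| ^ p ≤
        ∫⁻ y in Ω \ ball x₀ r, ENNReal.ofReal (ρ r)⁻¹ *
          (ENNReal.ofReal (ρ ‖y - x₀‖) * ENNReal.ofReal |f y| ^ p) := by
      refine setLIntegral_mono' hms fun y hy => ?_
      have hyr : r ≤ ‖y - x₀‖ := by
        have := hy.2
        rw [mem_ball, dist_eq_norm] at this
        linarith [not_lt.mp this]
      have hyn : (0:ℝ) < ‖y - x₀‖ := lt_of_lt_of_le hr0 hyr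
      have hρle : ρ r ≤ ρ ‖y - x₀‖ := hρmono hr0 hyn hyr
      have h2 : (1:ℝ≥0∞) ≤ ENNReal.ofReal (ρ r)⁻¹ * ENNReal.ofReal (ρ ‖y - x₀‖) := by
        rw [← ENNReal.ofReal_mul (by positivity), ← ENNReal.ofReal_one]
        exact ENNReal.ofReal_le_ofReal (by rw [inv_mul_eq_div, le_div_iff₀ hb]; linarith)
      calc ENNReal.ofReal |f y| ^ p = 1 * ENNReal.ofReal |f y| ^ p := (one_mul _).symm
        _ ≤ (ENNReal.ofReal (ρ r)⁻¹ * ENNReal.ofReal (ρ ‖y - x₀‖)) * ENNReal.ofReal |f y| ^ p :=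
            mul_le_mul_left h2 _
        _ = ENNReal.ofReal (ρ r)⁻¹ * (ENNReal.ofReal (ρ ‖y - x₀‖) * ENNReal.ofReal |f y| ^ p) := by
            ring
    calc ∫⁻ y in Ω \ ball x₀ r, ENNReal.ofReal |f y| ^ p
        ≤ ∫⁻ y in Ω \ ball x₀ r, ENNReal.ofReal (ρ r)⁻¹ *
            (ENNReal.ofReal (ρ ‖y - x₀‖) * ENNReal.ofReal |f y| ^ p) := h1
      _ = ENNReal.ofReal (ρ r)⁻¹ * ∫⁻ y in Ω \ ball x₀ r,
            ENNReal.ofReal (ρ ‖y - x₀‖) * ENNReal.ofReal |f y| ^ p :=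
          lintegral_const_mul' _ _ ENNReal.ofReal_ne_top
      _ ≤ ENNReal.ofReal (ρ r)⁻¹ * I :=
          mul_le_mul_right (lintegral_mono_set diff_subset) _
  -- Step B : rpow of Step A
  have hB : lpnorm p (Ω \ ball x₀ r) f ≤ (ENNReal.ofReal (ρ r)⁻¹) ^ (1/p) * I ^ (1/p) := by
    rw [lpnorm, ← ENNReal.mul_rpow_of_nonneg _ _ hip]
    exact ENNReal.rpow_le_rpow hA hip
  -- real inequality
  have he : (n : ℝ) / pc = (n : ℝ) * (p - 1) / p := by
    rcases eq_or_lt_of_le hp with h1 | h1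
    · rw [hpc, ← h1]; simp
    · rw [hpc]
      have h2 : p - 1 ≠ 0 := by linarith
      field_simp
  have hreal : r ^ ((n : ℝ) / pc) / ω r * ((ρ r)⁻¹) ^ (1/p) ≤ c ^ (-(1/p)) := by
    set e : ℝ := (n : ℝ) * (p - 1) with hedef
    have he0 : (0:ℝ) ≤ e := by
      have : (0:ℝ) ≤ p - 1 := by linarith
      positivity
    have hre : (0:ℝ) < r ^ e := Real.rpow_pos_of_pos hr0 e
    have key : c * r ^ e ≤ ρ r * ω r ^ p := by
      have := hcinf r hr0
      rw [le_div_iff₀ hre] at this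
      linarith
    have key2 : c ^ (1/p) * (r ^ e) ^ (1/p) ≤ (ρ r) ^ (1/p) * ω r := by
      have h3 := Real.rpow_le_rpow (by positivity) key hip
      rw [Real.mul_rpow hc.le hre.le, Real.mul_rpow hb.le (by positivity)] at h3
      calc c ^ (1/p) * (r ^ e) ^ (1/p) ≤ (ρ r) ^ (1/p) * (ω r ^ p) ^ (1/p) := h3
          _ = (ρ r) ^ (1/p) * ω r := by
            rw [← Real.rpow_mul ha.le, mul_one_div_cancel hp0.ne', Real.rpow_one]
    have hrpc : r ^ ((n : ℝ) / pc) = (r ^ e) ^ (1/p) := by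
      rw [he, div_eq_mul_one_div, Real.rpow_mul hr0.le]
    rw [hrpc, Real.inv_rpow hb.le, Real.rpow_neg hc.le]
    have hC : (0:ℝ) < c ^ (1/p) := Real.rpow_pos_of_pos hc _
    have hB' : (0:ℝ) < (ρ r) ^ (1/p) := Real.rpow_pos_of_pos hb _
    have hR : (0:ℝ) ≤ (r ^ e) ^ (1/p) := Real.rpow_nonneg hre.le _
    have h4 : (r ^ e) ^ (1/p) / ω r * (ρ r ^ (1/p))⁻¹ =
        (r ^ e) ^ (1/p) / (ω r * ρ r ^ (1/p)) := by ring
    rw [h4, div_le_iff₀ (by positivity)]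
    nlinarith [mul_le_mul_of_nonneg_left key2 (inv_nonneg.2 hC.le),
      mul_inv_cancel₀ hC.ne']
  -- assemble
  calc ENNReal.ofReal (r ^ ((n : ℝ) / pc) / ω r) * lpnorm p (Ω \ ball x₀ r) f
      ≤ ENNReal.ofReal (r ^ ((n : ℝ) / pc) / ω r) *
          ((ENNReal.ofReal (ρ r)⁻¹) ^ (1/p) * I ^ (1/p)) := mul_le_mul_right hB _
    _ = ENNReal.ofReal (r ^ ((n : ℝ) / pc) / ω r * ((ρ r)⁻¹) ^ (1/p)) * I ^ (1/p) := by
        rw [ENNReal.ofReal_rpow_of_pos (inv_pos.2 hb), ← mul_assoc,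
          ← ENNReal.ofReal_mul (div_nonneg (Real.rpow_nonneg hr0.le _) ha.le)]
    _ ≤ ENNReal.ofReal (c ^ (-(1/p))) * I ^ (1/p) :=
        mul_le_mul_left (ENNReal.ofReal_le_ofReal hreal) _
end

section
/- Let n ≥ 1, let Ω ⊂ ℝⁿ be a bounded open set with diameter ℓ, let x₀ ∈ Ω, let 1 < p < ∞ with conjugate exponent p′ = p/(p−1), and let γ ∈ ℝ. Then there exists a constant C > 0, depending only on n, p, γ and ℓ (in particular not on f, t, or x₀), such that for every measurable f : Ω → ℝ satisfying ‖f‖_{L^p(Ω \ B(x₀,s))} < ∞ for every s ∈ (0,ℓ), and for every t ∈ (0,ℓ), ∫_{Ω ∩ B(x₀,t)} |y−x₀|^γ |f(y)| dy ≤ C ∫_0^t s^{γ + n/p′ − 1} ‖f‖_{L^p(Ω \ B(x₀,s))} ds. -/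
open MeasureTheory Metric Set ENNReal Filter Topology

lemma lint_inv_Ioo {a b : ℝ} (ha : 0 < a) (hab : a ≤ b) :
    ∫⁻ s in Ioo a b, ENNReal.ofReal s⁻¹ = ENNReal.ofReal (Real.log (b / a)) := by
  have hb : 0 < b := ha.trans_le hab
  rw [setLIntegral_congr Ioo_ae_eq_Ioc]
  have hint : IntegrableOn (fun s : ℝ => s⁻¹) (Ioc a b) := by
    have h0 : ∀ x : ℝ, x ∈ Set.uIcc a b → (id x : ℝ) ≠ 0 := by
      intro x hx
      have := hx.1
      rw [min_eq_left hab] at this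
      exact ne_of_gt (lt_of_lt_of_le ha this)
    have := intervalIntegral.intervalIntegrable_inv h0 continuousOn_id (μ := volume)
    rwa [intervalIntegrable_iff_integrableOn_Ioc_of_le hab] at this
  rw [← ofReal_integral_eq_lintegral_ofReal hint]
  · rw [← intervalIntegral.integral_of_le hab, integral_inv_of_pos ha hb]
  · filter_upwards [ae_restrict_mem measurableSet_Ioc] with x hx
    exact inv_nonneg.2 (le_of_lt (ha.trans hx.1))

set_option maxHeartbeats 2000000 in
/-- Lemma 4.2: For a bounded open `Ω ⊆ ℝⁿ` of diameter `ℓ`, `1 < p < ∞`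
with conjugate exponent `pc = p/(p−1)` and `γ ∈ ℝ`, there is `C > 0` depending only on
`n, p, γ, ℓ` (not on `f`, `t`, `x₀`) such that for every `x₀ ∈ Ω`, every measurable `f`
with `‖f‖_{L^p(Ω∖B(x₀,s))} < ∞` for all `s ∈ (0,ℓ)`, and every `t ∈ (0,ℓ)`:
`∫_{Ω∩B(x₀,t)} |y−x₀|^γ |f(y)| dy ≤ C ∫_0^t s^{γ+n/p′−1} ‖f‖_{L^p(Ω∖B(x₀,s))} ds`. -/
theorem statement6
    (n : ℕ) (hn : 1 ≤ n)
    (Ω : Set (EuclideanSpace ℝ (Fin n))) (hΩo : IsOpen Ω) (hΩb : Bornology.IsBounded Ω)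
    (p pc : ℝ) (hp : 1 < p) (hpc : pc = p / (p - 1))
    (γ : ℝ)
    (ℓ : ℝ) (hℓ : ℓ = Metric.diam Ω) :
    ∃ C > 0, ∀ x₀ ∈ Ω, ∀ f : EuclideanSpace ℝ (Fin n) → ℝ, Measurable f →
      (∀ s ∈ Ioo (0 : ℝ) ℓ, lpnorm p (Ω \ ball x₀ s) f < ⊤) →
      ∀ t ∈ Ioo (0 : ℝ) ℓ,
        (∫⁻ y in Ω ∩ ball x₀ t,
            ENNReal.ofReal (‖y - x₀‖ ^ γ) * ENNReal.ofReal |f y|) ≤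
          ENNReal.ofReal C *
            ∫⁻ s in Ioo (0 : ℝ) t,
              ENNReal.ofReal (s ^ (γ + (n : ℝ) / pc - 1)) * lpnorm p (Ω \ ball x₀ s) f := by
  classical
  have hp0 : (0:ℝ) < p := lt_trans one_pos hp
  have hpq : p.HolderConjugate pc := by
    rw [hpc]; exact Real.HolderConjugate.conjExponent hp
  have hpc0 : (0:ℝ) < pc := hpq.symm.pos
  haveI : Nontrivial (EuclideanSpace ℝ (Fin n)) := by
    apply Module.nontrivial_of_finrank_pos (R := ℝ)
    rw [finrank_euclideanSpace_fin]
    exact hn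
  set mB : ℝ≥0∞ := volume (ball (0 : EuclideanSpace ℝ (Fin n)) 1) with hmB
  have hmB0 : mB ≠ 0 := (measure_ball_pos volume 0 one_pos).ne'
  have hmBtop : mB ≠ ⊤ := measure_ball_lt_top.ne
  have hmBrtop : mB ^ (1/pc) ≠ ⊤ :=
    ENNReal.rpow_ne_top_of_nonneg (by positivity) hmBtop
  have hmBr0 : mB ^ (1/pc) ≠ 0 := by
    simp only [ne_eq, ENNReal.rpow_eq_zero_iff, not_or, not_and]
    exact ⟨fun h => absurd h hmB0, fun h => absurd h hmBtop⟩
  set K₀ : ℝ := max 1 (2 ^ γ) * 2 ^ ((n:ℝ)/pc) with hK₀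
  have hM0 : (0:ℝ) < max 1 (2 ^ γ) := lt_of_lt_of_le one_pos (le_max_left _ _)
  have hK₀pos : 0 < K₀ := mul_pos hM0 (Real.rpow_pos_of_pos two_pos _)
  set mBr : ℝ := (mB ^ (1/pc)).toReal with hmBr
  have hmBrpos : 0 < mBr := ENNReal.toReal_pos hmBr0 hmBrtop
  have hlog : (0:ℝ) < Real.log 2 := Real.log_pos one_lt_two
  refine ⟨(Real.log 2)⁻¹ * (K₀ * mBr), by positivity, ?_⟩
  intro x₀ hx₀ f hf hfin t ht
  set S : Set (EuclideanSpace ℝ (Fin n)) := Ω ∩ ball x₀ t with hS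
  have hSmeas : MeasurableSet S := (hΩo.inter isOpen_ball).measurableSet
  set W : EuclideanSpace ℝ (Fin n) → ℝ≥0∞ :=
    fun y => ENNReal.ofReal (‖y - x₀‖ ^ γ) * ENNReal.ofReal |f y| with hW
  have hWmeas : Measurable W := by
    rw [hW]
    apply Measurable.fun_mul
    · apply Measurable.ennreal_ofReal
      measurability
    · exact hf.abs.ennreal_ofReal
  have hWne : ∀ y, W y ≠ ⊤ := fun y =>
    ENNReal.mul_ne_top ENNReal.ofReal_ne_top ENNReal.ofReal_ne_top
  set T : Set (ℝ × EuclideanSpace ℝ (Fin n)) :=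
    {q | ‖q.2 - x₀‖ / 2 < q.1 ∧ q.1 < ‖q.2 - x₀‖} with hT
  have hcont : Continuous (fun q : ℝ × EuclideanSpace ℝ (Fin n) => ‖q.2 - x₀‖) :=
    (continuous_snd.sub continuous_const).norm
  have hTopen : IsOpen T := by
    have h : T = {q : ℝ × EuclideanSpace ℝ (Fin n) | ‖q.2 - x₀‖ / 2 < q.1} ∩
        {q | q.1 < ‖q.2 - x₀‖} := rfl
    rw [h]
    exact (isOpen_lt (hcont.div_const 2) continuous_fst).inter
      (isOpen_lt continuous_fst hcont)
  have hTmeas : MeasurableSet T := hTopen.measurableSet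
  set G : ℝ → EuclideanSpace ℝ (Fin n) → ℝ≥0∞ :=
    fun s y => T.indicator (fun q => ENNReal.ofReal q.1⁻¹) (s, y) * W y with hG
  -- Key 1: per-y identity
  have key1 : ∀ y ∈ S, y ≠ x₀ →
      ∫⁻ s in Ioo (0:ℝ) t, G s y = ENNReal.ofReal (Real.log 2) * W y := by
    intro y hy hyx
    set r : ℝ := ‖y - x₀‖ with hr
    have hr0 : 0 < r := by
      rw [hr, norm_pos_iff, sub_ne_zero]; exact hyx
    have hrt : r < t := by
      have := hy.2; rwa [mem_ball, dist_eq_norm] at this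
    have hind : ∀ s : ℝ, T.indicator (fun q => ENNReal.ofReal q.1⁻¹) (s, y)
        = (Ioo (r/2) r).indicator (fun u => ENNReal.ofReal u⁻¹) s := by
      intro s
      by_cases h : s ∈ Ioo (r/2) r
      · rw [indicator_of_mem h, indicator_of_mem]
        exact ⟨h.1, h.2⟩
      · rw [indicator_of_notMem h, indicator_of_notMem]
        intro hc; exact h ⟨hc.1, hc.2⟩
    have hsub : Ioo (r/2) r ⊆ Ioo (0:ℝ) t := fun u hu =>
      ⟨lt_trans (by positivity) hu.1, lt_trans hu.2 hrt⟩
    calc ∫⁻ s in Ioo (0:ℝ) t, G s y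
        = (∫⁻ s in Ioo (0:ℝ) t,
            (Ioo (r/2) r).indicator (fun u => ENNReal.ofReal u⁻¹) s) * W y := by
          simp only [hG, hind]
          rw [lintegral_mul_const' (W y) _ (hWne y)]
      _ = (∫⁻ s in Ioo (r/2) r, ENNReal.ofReal s⁻¹) * W y := by
          congr 1
          rw [lintegral_indicator measurableSet_Ioo,
            Measure.restrict_restrict measurableSet_Ioo, inter_eq_left.2 hsub]
      _ = ENNReal.ofReal (Real.log 2) * W y := by
          rw [lint_inv_Ioo (by positivity) (by linarith),
            show r / (r/2) = 2 from by field_simp]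
  -- measurability of G (uncurried)
  have hGmeas : Measurable (fun q : ℝ × EuclideanSpace ℝ (Fin n) => G q.1 q.2) := by
    apply Measurable.mul
    · exact (measurable_fst.inv.ennreal_ofReal).indicator hTmeas
    · exact hWmeas.comp measurable_snd
  -- swap the order of integration
  have hswap :
      ∫⁻ y in S, ∫⁻ s in Ioo (0:ℝ) t, G s y
        = ∫⁻ s in Ioo (0:ℝ) t, ∫⁻ y in S, G s y :=
    lintegral_lintegral_swap ((hGmeas.comp measurable_swap).aemeasurable)
  -- Key 2: per-s bound via Hölder
  have key2 : ∀ s ∈ Ioo (0:ℝ) t,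
      ∫⁻ y in S, G s y ≤ (ENNReal.ofReal K₀ * mB ^ (1/pc)) *
        (ENNReal.ofReal (s ^ (γ + (n:ℝ)/pc - 1)) * lpnorm p (Ω \ ball x₀ s) f) := by
    intro s hs
    obtain ⟨hs0, hst⟩ := hs
    set U : Set (EuclideanSpace ℝ (Fin n)) := {y | ‖y - x₀‖/2 < s ∧ s < ‖y - x₀‖} with hU
    have hUopen : IsOpen U := by
      have h : U = {y : EuclideanSpace ℝ (Fin n) | ‖y - x₀‖/2 < s} ∩
          {y | s < ‖y - x₀‖} := rfl
      rw [h]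
      exact (isOpen_lt (((continuous_id.sub continuous_const).norm).div_const 2)
        continuous_const).inter (isOpen_lt continuous_const
        ((continuous_id.sub continuous_const).norm))
    have hGU : ∀ y, G s y = U.indicator (fun y => ENNReal.ofReal s⁻¹ * W y) y := by
      intro y
      by_cases h : y ∈ U
      · rw [indicator_of_mem h]
        simp only [hG]
        rw [indicator_of_mem (show (s, y) ∈ T from ⟨h.1, h.2⟩)]
      · rw [indicator_of_notMem h]
        simp only [hG]
        rw [indicator_of_notMem (show (s, y) ∉ T from fun hc => h ⟨hc.1, hc.2⟩), zero_mul]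
    set A : Set (EuclideanSpace ℝ (Fin n)) := U ∩ S with hA
    have hAmeas : MeasurableSet A := (hUopen.inter (hΩo.inter isOpen_ball)).measurableSet
    have hcalc1 : ∫⁻ y in S, G s y = ENNReal.ofReal s⁻¹ * ∫⁻ y in A, W y := by
      simp only [hGU]
      rw [lintegral_indicator hUopen.measurableSet,
        Measure.restrict_restrict hUopen.measurableSet,
        lintegral_const_mul' _ _ ENNReal.ofReal_ne_top]
    have hsub1 : A ⊆ Ω \ ball x₀ s := by
      rintro y ⟨hyU, hyS⟩
      refine ⟨hyS.1, ?_⟩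
      rw [mem_ball, dist_eq_norm]
      push_neg
      exact le_of_lt hyU.2
    have hsub2 : A ⊆ ball x₀ (2*s) := by
      rintro y ⟨hyU, _⟩
      rw [mem_ball, dist_eq_norm]
      have h1 := hyU.1
      linarith
    have hWb : ∀ y ∈ A, W y ≤
        ENNReal.ofReal (max 1 (2^γ) * s ^ γ) * ENNReal.ofReal |f y| := by
      intro y hy
      have h1 : s < ‖y - x₀‖ := hy.1.2
      have h2 : ‖y - x₀‖ < 2*s := by
        have := hy.1.1; linarith
      have hb : ‖y - x₀‖ ^ γ ≤ max 1 (2^γ) * s ^ γ := by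
        rcases le_or_gt 0 γ with hγ | hγ
        · calc ‖y - x₀‖ ^ γ ≤ (2*s) ^ γ := Real.rpow_le_rpow (norm_nonneg _) h2.le hγ
            _ = 2^γ * s^γ := Real.mul_rpow (by norm_num) hs0.le
            _ ≤ max 1 (2^γ) * s^γ :=
              mul_le_mul_of_nonneg_right (le_max_right _ _) (Real.rpow_nonneg hs0.le _)
        · calc ‖y - x₀‖ ^ γ ≤ s ^ γ := Real.rpow_le_rpow_of_nonpos hs0 h1.le hγ.le
            _ = 1 * s ^ γ := (one_mul _).symm
            _ ≤ max 1 (2^γ) * s^γ :=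
              mul_le_mul_of_nonneg_right (le_max_left _ _) (Real.rpow_nonneg hs0.le _)
      exact mul_le_mul_left (ENNReal.ofReal_le_ofReal hb) _
    have hmono1 : ∫⁻ y in A, W y ≤
        ENNReal.ofReal (max 1 (2^γ) * s ^ γ) * ∫⁻ y in A, ENNReal.ofReal |f y| := by
      rw [← lintegral_const_mul' _ _ ENNReal.ofReal_ne_top]
      exact setLIntegral_mono' hAmeas hWb
    have hholder : ∫⁻ y in A, ENNReal.ofReal |f y| ≤
        (∫⁻ y in A, ENNReal.ofReal |f y| ^ p) ^ (1/p) * (volume A) ^ (1/pc) := by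
      have h := ENNReal.lintegral_mul_le_Lp_mul_Lq (volume.restrict A) hpq
        (hf.abs.ennreal_ofReal.aemeasurable) (aemeasurable_const (b := (1:ℝ≥0∞)))
      simpa using h
    have hnormb : (∫⁻ y in A, ENNReal.ofReal |f y| ^ p) ^ (1/p) ≤
        lpnorm p (Ω \ ball x₀ s) f :=
      ENNReal.rpow_le_rpow (lintegral_mono_set hsub1) (by positivity)
    have hvol : (volume A) ^ (1/pc) ≤
        ENNReal.ofReal ((2*s) ^ ((n:ℝ)/pc)) * mB ^ (1/pc) := by
      have h1 : volume A ≤ ENNReal.ofReal ((2*s) ^ (n:ℕ)) * mB := by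
        calc volume A ≤ volume (ball x₀ (2*s)) := measure_mono hsub2
          _ = ENNReal.ofReal ((2*s) ^ Module.finrank ℝ (EuclideanSpace ℝ (Fin n))) * mB :=
              Measure.addHaar_ball volume x₀ (by positivity)
          _ = ENNReal.ofReal ((2*s) ^ (n:ℕ)) * mB := by rw [finrank_euclideanSpace_fin]
      calc (volume A) ^ (1/pc) ≤ (ENNReal.ofReal ((2*s) ^ (n:ℕ)) * mB) ^ (1/pc) :=
            ENNReal.rpow_le_rpow h1 (by positivity)
        _ = ENNReal.ofReal ((2*s) ^ (n:ℕ)) ^ (1/pc) * mB ^ (1/pc) :=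
            ENNReal.mul_rpow_of_nonneg _ _ (by positivity)
        _ = ENNReal.ofReal ((2*s) ^ ((n:ℝ)/pc)) * mB ^ (1/pc) := by
            rw [ENNReal.ofReal_rpow_of_nonneg (by positivity) (by positivity)]
            congr 2
            rw [← Real.rpow_natCast (2*s) n, ← Real.rpow_mul (by positivity), mul_one_div]
    have hreal : s⁻¹ * (max 1 (2^γ) * s ^ γ) * (2*s) ^ ((n:ℝ)/pc)
        = K₀ * s ^ (γ + (n:ℝ)/pc - 1) := by
      have e1 : (2*s:ℝ) ^ ((n:ℝ)/pc) = 2 ^ ((n:ℝ)/pc) * s ^ ((n:ℝ)/pc) :=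
        Real.mul_rpow (by norm_num) hs0.le
      have e2 : s⁻¹ * s ^ γ * s ^ ((n:ℝ)/pc) = s ^ (γ + (n:ℝ)/pc - 1) := by
        rw [← Real.rpow_neg_one s, ← Real.rpow_add hs0, ← Real.rpow_add hs0]
        congr 1
        ring
      calc s⁻¹ * (max 1 (2^γ) * s ^ γ) * (2*s) ^ ((n:ℝ)/pc)
          = (max 1 (2^γ) * 2 ^ ((n:ℝ)/pc)) * (s⁻¹ * s ^ γ * s ^ ((n:ℝ)/pc)) := by
            rw [e1]; ring
        _ = K₀ * s ^ (γ + (n:ℝ)/pc - 1) := by rw [e2, hK₀]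
    have hcoef : ENNReal.ofReal s⁻¹ * ENNReal.ofReal (max 1 (2^γ) * s ^ γ) *
        ENNReal.ofReal ((2*s) ^ ((n:ℝ)/pc))
        = ENNReal.ofReal K₀ * ENNReal.ofReal (s ^ (γ + (n:ℝ)/pc - 1)) := by
      rw [← ENNReal.ofReal_mul (by positivity), ← ENNReal.ofReal_mul (by positivity),
        hreal, ENNReal.ofReal_mul hK₀pos.le]
    calc ∫⁻ y in S, G s y = ENNReal.ofReal s⁻¹ * ∫⁻ y in A, W y := hcalc1
      _ ≤ ENNReal.ofReal s⁻¹ * (ENNReal.ofReal (max 1 (2^γ) * s ^ γ) *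
            ((∫⁻ y in A, ENNReal.ofReal |f y| ^ p) ^ (1/p) * (volume A) ^ (1/pc))) :=
          mul_le_mul_right (hmono1.trans (mul_le_mul_right hholder _)) _
      _ ≤ ENNReal.ofReal s⁻¹ * (ENNReal.ofReal (max 1 (2^γ) * s ^ γ) *
            (lpnorm p (Ω \ ball x₀ s) f *
              (ENNReal.ofReal ((2*s) ^ ((n:ℝ)/pc)) * mB ^ (1/pc)))) :=
          mul_le_mul_right (mul_le_mul_right (mul_le_mul' hnormb hvol) _) _
      _ = (ENNReal.ofReal s⁻¹ * ENNReal.ofReal (max 1 (2^γ) * s ^ γ) *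
            ENNReal.ofReal ((2*s) ^ ((n:ℝ)/pc))) *
            (mB ^ (1/pc) * lpnorm p (Ω \ ball x₀ s) f) := by ring
      _ = (ENNReal.ofReal K₀ * ENNReal.ofReal (s ^ (γ + (n:ℝ)/pc - 1))) *
            (mB ^ (1/pc) * lpnorm p (Ω \ ball x₀ s) f) := by rw [hcoef]
      _ = (ENNReal.ofReal K₀ * mB ^ (1/pc)) *
            (ENNReal.ofReal (s ^ (γ + (n:ℝ)/pc - 1)) * lpnorm p (Ω \ ball x₀ s) f) := by
          ring
  -- integrate the per-s bound
  have hIneq : ∫⁻ s in Ioo (0:ℝ) t, ∫⁻ y in S, G s y ≤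
      (ENNReal.ofReal K₀ * mB ^ (1/pc)) *
        ∫⁻ s in Ioo (0:ℝ) t,
          ENNReal.ofReal (s ^ (γ + (n:ℝ)/pc - 1)) * lpnorm p (Ω \ ball x₀ s) f := by
    rw [← lintegral_const_mul' _ _ (ENNReal.mul_ne_top ENNReal.ofReal_ne_top hmBrtop)]
    apply lintegral_mono_ae
    filter_upwards [ae_restrict_mem measurableSet_Ioo] with s hs
    exact key2 s hs
  have hEq : ENNReal.ofReal (Real.log 2) * (∫⁻ y in S, W y)
      = ∫⁻ s in Ioo (0:ℝ) t, ∫⁻ y in S, G s y := by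
    rw [← hswap, ← lintegral_const_mul' _ _ ENNReal.ofReal_ne_top]
    apply lintegral_congr_ae
    haveI : NullSingletonClass (volume : Measure (EuclideanSpace ℝ (Fin n))) := by infer_instance
    have h2 : ∀ᵐ y ∂(volume.restrict S), y ≠ x₀ := by
      apply ae_restrict_of_ae
      rw [ae_iff]
      have hset : {y : EuclideanSpace ℝ (Fin n) | ¬ y ≠ x₀} = {x₀} := by ext y; simp
      rw [hset]
      exact measure_singleton x₀
    filter_upwards [ae_restrict_mem hSmeas, h2] with y hy hy'
    exact (key1 y hy hy').symm
  have hfinal : (∫⁻ y in S, W y) =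
      ENNReal.ofReal (Real.log 2)⁻¹ * ∫⁻ s in Ioo (0:ℝ) t, ∫⁻ y in S, G s y := by
    rw [← hEq, ← mul_assoc, ← ENNReal.ofReal_mul (by positivity),
      inv_mul_cancel₀ hlog.ne', ENNReal.ofReal_one, one_mul]
  calc (∫⁻ y in S, W y)
      = ENNReal.ofReal (Real.log 2)⁻¹ * ∫⁻ s in Ioo (0:ℝ) t, ∫⁻ y in S, G s y := hfinal
    _ ≤ ENNReal.ofReal (Real.log 2)⁻¹ * ((ENNReal.ofReal K₀ * mB ^ (1/pc)) *
          ∫⁻ s in Ioo (0:ℝ) t,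
            ENNReal.ofReal (s ^ (γ + (n:ℝ)/pc - 1)) * lpnorm p (Ω \ ball x₀ s) f) :=
        mul_le_mul_right hIneq _
    _ = ENNReal.ofReal ((Real.log 2)⁻¹ * (K₀ * mBr)) *
          ∫⁻ s in Ioo (0:ℝ) t,
            ENNReal.ofReal (s ^ (γ + (n:ℝ)/pc - 1)) * lpnorm p (Ω \ ball x₀ s) f := by
        conv_rhs => rw [ENNReal.ofReal_mul (le_of_lt (inv_pos.2 hlog)),
          ENNReal.ofReal_mul hK₀pos.le, hmBr, ENNReal.ofReal_toReal hmBrtop]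
        ring
end

section
/- Let n ≥ 1, let Ω ⊂ ℝⁿ be a bounded open set with diameter ℓ, let x₀ ∈ Ω, let 1 < p < ∞ with conjugate exponent p′ = p/(p−1), and let ω : (0,∞) → (0,∞) be measurable. (a) If sup_{0<r<ℓ} r^{n/p′}/ω(r) < ∞, then there exists C > 0 with ‖f‖_{∁M^{p,ω}_{x₀}(Ω)} ≤ C ‖f‖_{L^p(Ω)} for all f ∈ L^p(Ω), i.e. L^p(Ω) embeds into ∁M^{p,ω}_{x₀}(Ω). (b) If ∫_0^ℓ ω(r) r^{−1} dr < ∞, then there exists C > 0 with ∫_Ω |f(y)| dy ≤ C ‖f‖_{∁M^{p,ω}_{x₀}(Ω)} for all measurable f, i.e. ∁M^{p,ω}_{x₀}(Ω) embeds into L^1(Ω). -/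
open MeasureTheory Metric Set ENNReal Filter Topology

/-- The norm of the local complementary generalized Morrey space `∁M^{p,ω}_{x₀}(Ω)`:
`sup_{r>0} (r^{n/p′}/ω(r)) ‖f‖_{L^p(Ω ∖ B(x₀,r))}` (here `pc` stands for `p′`). -/
noncomputable def cMnorm {n : ℕ} (p pc : ℝ) (ω : ℝ → ℝ)
    (Ω : Set (EuclideanSpace ℝ (Fin n))) (x₀ : EuclideanSpace ℝ (Fin n))
    (f : EuclideanSpace ℝ (Fin n) → ℝ) : ℝ≥0∞ :=
  ⨆ r ∈ Ioi (0 : ℝ),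
    ENNReal.ofReal (r ^ ((n : ℝ) / pc) / ω r) * lpnorm p (Ω \ ball x₀ r) f

private lemma statement7_geom (n : ℕ) (hn : 1 ≤ n)
    (Ω : Set (EuclideanSpace ℝ (Fin n))) (hΩo : IsOpen Ω)
    (hΩb : Bornology.IsBounded Ω) (x₀ : EuclideanSpace ℝ (Fin n)) (hx₀ : x₀ ∈ Ω) :
    0 < Metric.diam Ω ∧ ∀ y ∈ Ω, dist y x₀ < Metric.diam Ω := by
  obtain ⟨ε, hε, hball⟩ := Metric.isOpen_iff.mp hΩo x₀ hx₀
  have hℓpos : 0 < Metric.diam Ω := by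
    set e : EuclideanSpace ℝ (Fin n) := EuclideanSpace.single (⟨0, hn⟩ : Fin n) (ε/2) with he
    have hne : ‖e‖ = ε/2 := by
      rw [he, EuclideanSpace.norm_single, Real.norm_eq_abs, abs_of_pos (by linarith)]
    have hmem : x₀ + e ∈ Ω := by
      apply hball
      simp [mem_ball, dist_eq_norm, hne]
      linarith
    have := Metric.dist_le_diam_of_mem hΩb hmem hx₀
    rw [dist_eq_norm, add_sub_cancel_left, hne] at this
    linarith
  refine ⟨hℓpos, fun y hy => ?_⟩
  have hle : dist y x₀ ≤ Metric.diam Ω := Metric.dist_le_diam_of_mem hΩb hy hx₀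
  rcases lt_or_eq_of_le hle with h | h
  · exact h
  · exfalso
    obtain ⟨δ, hδ, hbally⟩ := Metric.isOpen_iff.mp hΩo y hy
    set ℓ := Metric.diam Ω
    have hynex : dist y x₀ > 0 := h ▸ hℓpos
    set c : ℝ := (min (δ/2) ℓ) / ℓ with hc
    have hc0 : 0 < c := div_pos (lt_min (by linarith) hℓpos) hℓpos
    set y' : EuclideanSpace ℝ (Fin n) := y + c • (y - x₀) with hy'
    have hny : ‖y - x₀‖ = ℓ := by rw [← dist_eq_norm, h]
    have hmem : y' ∈ Ω := by
      apply hbally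
      rw [mem_ball, dist_eq_norm, hy', add_sub_cancel_left, norm_smul, Real.norm_eq_abs,
        abs_of_pos hc0, hny, hc, div_mul_cancel₀ _ (ne_of_gt hℓpos)]
      exact lt_of_le_of_lt (min_le_left _ _) (by linarith)
    have hd : dist y' x₀ = ℓ + c * ℓ := by
      have h2 : y' - x₀ = (1+c) • (y - x₀) := by rw [hy']; module
      rw [dist_eq_norm, h2, norm_smul, Real.norm_eq_abs, abs_of_pos (by linarith), hny]; ring
    have hle' : dist y' x₀ ≤ ℓ := Metric.dist_le_diam_of_mem hΩb hmem hx₀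
    nlinarith [mul_pos hc0 hℓpos]

private lemma statement7_auxA (n : ℕ)
    (Ω : Set (EuclideanSpace ℝ (Fin n)))
    (x₀ : EuclideanSpace ℝ (Fin n))
    (p pc : ℝ) (hp : 1 < p)
    (ℓ : ℝ) (hdist : ∀ y ∈ Ω, dist y x₀ < ℓ)
    (ω : ℝ → ℝ)
    (K : ℝ) (hK : ∀ r ∈ Ioo (0 : ℝ) ℓ, r ^ ((n : ℝ) / pc) / ω r ≤ K) :
      ∃ C > 0, ∀ f : EuclideanSpace ℝ (Fin n) → ℝ, Measurable f →
        cMnorm p pc ω Ω x₀ f ≤ ENNReal.ofReal C * lpnorm p Ω f := by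
  refine ⟨max K 1, lt_of_lt_of_le one_pos (le_max_right _ _), fun f hf => ?_⟩
  rw [cMnorm]
  apply iSup₂_le
  intro r hr
  rw [mem_Ioi] at hr
  by_cases hrℓ : r < ℓ
  · refine mul_le_mul' (ENNReal.ofReal_le_ofReal
      (le_trans (hK r ⟨hr, hrℓ⟩) (le_max_left _ _))) ?_
    exact ENNReal.rpow_le_rpow (lintegral_mono_set diff_subset)
      (by positivity)
  · have hempty : Ω \ ball x₀ r = ∅ := by
      ext y
      simp only [mem_diff, mem_empty_iff_false, iff_false, not_and, not_not]
      intro hy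
      exact mem_ball.mpr (lt_of_lt_of_le (hdist y hy) (not_lt.mp hrℓ))
    rw [lpnorm, hempty]
    simp only [Measure.restrict_empty, lintegral_zero_measure]
    rw [ENNReal.zero_rpow_of_pos (by positivity)]
    simp

private lemma statement7_auxB (n : ℕ) (hn : 1 ≤ n)
    (Ω : Set (EuclideanSpace ℝ (Fin n))) (hΩmeas : MeasurableSet Ω)
    (x₀ : EuclideanSpace ℝ (Fin n))
    (p pc : ℝ) (hp : 1 < p) (hpc : pc = p / (p - 1))
    (ℓ : ℝ) (hdist : ∀ y ∈ Ω, dist y x₀ < ℓ)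
    (ω : ℝ → ℝ) (hωmeas : Measurable ω) (hωpos : ∀ r > (0 : ℝ), 0 < ω r)
    (hI : (∫⁻ r in Ioo (0 : ℝ) ℓ, ENNReal.ofReal (ω r / r)) < ⊤) :
      ∃ C > 0, ∀ f : EuclideanSpace ℝ (Fin n) → ℝ, Measurable f →
        (∫⁻ y in Ω, ENNReal.ofReal |f y|) ≤ ENNReal.ofReal C * cMnorm p pc ω Ω x₀ f := by
  have hp0 : 0 < p := lt_trans one_pos hp
  have hconj : p.HolderConjugate pc := hpc ▸ Real.HolderConjugate.conjExponent hp
  have hpc1 : 1 < pc := hconj.symm.lt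
  have hpc0 : 0 < pc := lt_trans one_pos hpc1
  set c : ℝ := (n : ℝ) / pc with hc
  have hc0 : 0 ≤ c := div_nonneg (Nat.cast_nonneg n) hpc0.le
  have hnone : Nonempty (Fin n) := ⟨⟨0, hn⟩⟩
  set B : ℝ≥0∞ := ENNReal.ofReal
    (Real.sqrt Real.pi ^ n / Real.Gamma ((n : ℝ) / 2 + 1)) with hB
  have hBfin : B ≠ ⊤ := ofReal_ne_top
  set I : ℝ≥0∞ := ∫⁻ r in Ioo (0 : ℝ) ℓ, ENNReal.ofReal (ω r / r) with hIdef
  set D : ℝ≥0∞ := ENNReal.ofReal 2 * ENNReal.ofReal (2 ^ c) * B ^ (1 / pc) * I with hD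
  have hDfin : D ≠ ⊤ := by
    apply ENNReal.mul_ne_top (ENNReal.mul_ne_top (ENNReal.mul_ne_top ofReal_ne_top ofReal_ne_top)
      (ENNReal.rpow_ne_top_of_nonneg (by positivity) hBfin)) hI.ne
  refine ⟨D.toReal + 1, by positivity, fun f hf => ?_⟩
  set N : ℝ≥0∞ := cMnorm p pc ω Ω x₀ f with hN
  -- step 1: Morrey norm gives Lp bound on complements of balls
  have hlp : ∀ r : ℝ, 0 < r → lpnorm p (Ω \ ball x₀ r) f ≤ ENNReal.ofReal (ω r / r ^ c) * N := by
    intro r hr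
    have ha : 0 < r ^ c / ω r := div_pos (Real.rpow_pos_of_pos hr c) (hωpos r hr)
    have h1 : ENNReal.ofReal (r ^ c / ω r) * lpnorm p (Ω \ ball x₀ r) f ≤ N := by
      rw [hN, cMnorm]
      exact le_iSup₂ (f := fun r (_ : r ∈ Ioi (0:ℝ)) =>
        ENNReal.ofReal (r ^ ((n : ℝ) / pc) / ω r) * lpnorm p (Ω \ ball x₀ r) f) r hr
    have h2 : (ENNReal.ofReal (r ^ c / ω r))⁻¹ = ENNReal.ofReal (ω r / r ^ c) := by
      rw [← ENNReal.ofReal_inv_of_pos ha, inv_div]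
    calc lpnorm p (Ω \ ball x₀ r) f
        = (ENNReal.ofReal (r ^ c / ω r))⁻¹ *
            (ENNReal.ofReal (r ^ c / ω r) * lpnorm p (Ω \ ball x₀ r) f) := by
          rw [← mul_assoc, ENNReal.inv_mul_cancel (by simp [ha]) ofReal_ne_top, one_mul]
      _ ≤ (ENNReal.ofReal (r ^ c / ω r))⁻¹ * N := mul_le_mul_right h1 _
      _ = ENNReal.ofReal (ω r / r ^ c) * N := by rw [h2]
  -- the sets
  set st : ℝ → Set (EuclideanSpace ℝ (Fin n)) :=
    fun t => {y | t < dist y x₀ ∧ dist y x₀ ≤ 2 * t} with hst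
  have hstmeas : ∀ t, MeasurableSet (st t) := by
    intro t
    have hdm : Measurable fun y : EuclideanSpace ℝ (Fin n) => dist y x₀ :=
      (continuous_id.dist continuous_const).measurable
    exact (measurableSet_lt measurable_const hdm).inter (measurableSet_le hdm measurable_const)
  -- step 2: Hölder per annulus
  have hGbound : ∀ t ∈ Ioo (0 : ℝ) ℓ,
      (ENNReal.ofReal t)⁻¹ * ∫⁻ y in st t ∩ Ω, ENNReal.ofReal |f y| ≤
        ENNReal.ofReal (2 ^ c) * ENNReal.ofReal (ω t / t) * (B ^ (1 / pc) * N) := by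
    intro t ht
    obtain ⟨ht0, htℓ⟩ := ht
    have hholder : (∫⁻ y in st t ∩ Ω, ENNReal.ofReal |f y|) ≤
        (∫⁻ y in st t ∩ Ω, ENNReal.ofReal |f y| ^ p) ^ (1 / p) *
          (volume (st t ∩ Ω)) ^ (1 / pc) := by
      have := ENNReal.lintegral_mul_le_Lp_mul_Lq (volume.restrict (st t ∩ Ω)) hconj
        (f := fun y => ENNReal.ofReal |f y|) (g := fun _ => 1)
        (hf.abs.ennreal_ofReal.aemeasurable) aemeasurable_const
      simpa [setLIntegral_one, ENNReal.one_rpow] using this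
    have hsub1 : st t ∩ Ω ⊆ Ω \ ball x₀ t := by
      rintro y ⟨⟨hy1, hy2⟩, hyΩ⟩
      exact ⟨hyΩ, by simp [mem_ball, not_lt, hy1.le]⟩
    have h2 : (∫⁻ y in st t ∩ Ω, ENNReal.ofReal |f y| ^ p) ^ (1 / p) ≤
        lpnorm p (Ω \ ball x₀ t) f :=
      ENNReal.rpow_le_rpow (lintegral_mono_set hsub1) (by positivity)
    have hvol : volume (st t ∩ Ω) ≤ ENNReal.ofReal (2 * t) ^ (n : ℝ) * B := by
      have hsub2 : st t ∩ Ω ⊆ closedBall x₀ (2 * t) := by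
        rintro y ⟨⟨_, hy2⟩, _⟩
        exact mem_closedBall.mpr hy2
      calc volume (st t ∩ Ω) ≤ volume (closedBall x₀ (2 * t)) := measure_mono hsub2
        _ = ENNReal.ofReal (2 * t) ^ (n : ℝ) * B := by
            rw [EuclideanSpace.volume_closedBall, Fintype.card_fin, ENNReal.rpow_natCast]
    have hvolr : (volume (st t ∩ Ω)) ^ (1 / pc) ≤ ENNReal.ofReal (2 ^ c * t ^ c) * B ^ (1 / pc) := by
      calc (volume (st t ∩ Ω)) ^ (1 / pc)
          ≤ (ENNReal.ofReal (2 * t) ^ (n : ℝ) * B) ^ (1 / pc) :=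
            ENNReal.rpow_le_rpow hvol (by positivity)
        _ = (ENNReal.ofReal (2 * t) ^ (n : ℝ)) ^ (1 / pc) * B ^ (1 / pc) :=
            ENNReal.mul_rpow_of_nonneg _ _ (by positivity)
        _ = ENNReal.ofReal (2 ^ c * t ^ c) * B ^ (1 / pc) := by
            rw [← ENNReal.rpow_mul, mul_one_div,
              ENNReal.ofReal_rpow_of_pos (by positivity),
              Real.mul_rpow (by norm_num) ht0.le]
    have hωt : 0 < ω t := hωpos t ht0
    calc (ENNReal.ofReal t)⁻¹ * ∫⁻ y in st t ∩ Ω, ENNReal.ofReal |f y|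
        ≤ (ENNReal.ofReal t)⁻¹ * ((ENNReal.ofReal (ω t / t ^ c) * N) *
            (ENNReal.ofReal (2 ^ c * t ^ c) * B ^ (1 / pc))) :=
          mul_le_mul_right (le_trans hholder (mul_le_mul' (le_trans h2 (hlp t ht0)) hvolr)) _
      _ = ((ENNReal.ofReal t)⁻¹ * ENNReal.ofReal (ω t / t ^ c) *
            ENNReal.ofReal (2 ^ c * t ^ c)) * (B ^ (1 / pc) * N) := by ring
      _ = ENNReal.ofReal (2 ^ c * (ω t / t)) * (B ^ (1 / pc) * N) := by
          rw [← ENNReal.ofReal_inv_of_pos ht0, ← ENNReal.ofReal_mul (inv_nonneg.mpr ht0.le),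
            ← ENNReal.ofReal_mul (mul_nonneg (inv_nonneg.mpr ht0.le)
              (div_nonneg hωt.le (Real.rpow_nonneg ht0.le c)))]
          congr 2
          have htc : t ^ c ≠ 0 := (Real.rpow_pos_of_pos ht0 c).ne'
          field_simp
      _ = ENNReal.ofReal (2 ^ c) * ENNReal.ofReal (ω t / t) * (B ^ (1 / pc) * N) := by
          rw [ENNReal.ofReal_mul (by positivity)]
  -- the product set and function for Fubini
  set bigS : Set (ℝ × EuclideanSpace ℝ (Fin n)) :=
    {q | q.1 < dist q.2 x₀ ∧ dist q.2 x₀ ≤ 2 * q.1} with hbigSdef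
  have hdm2 : Measurable fun q : ℝ × EuclideanSpace ℝ (Fin n) => dist q.2 x₀ :=
    (continuous_snd.dist continuous_const).measurable
  have hbigS : MeasurableSet bigS :=
    (measurableSet_lt measurable_fst hdm2).inter
      (measurableSet_le hdm2 (measurable_const.mul measurable_fst))
  set F : ℝ × EuclideanSpace ℝ (Fin n) → ℝ≥0∞ :=
    bigS.indicator (fun q => (ENNReal.ofReal q.1)⁻¹ * ENNReal.ofReal |f q.2|) with hFdef
  have hFmeas : Measurable F :=
    Measurable.indicator
      (((ENNReal.measurable_ofReal.comp measurable_fst).inv).mul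
        (ENNReal.measurable_ofReal.comp ((hf.comp measurable_snd).abs))) hbigS
  have hswap : ∫⁻ t in Ioo (0:ℝ) ℓ, ∫⁻ y in Ω, F (t, y) =
      ∫⁻ y in Ω, ∫⁻ t in Ioo (0:ℝ) ℓ, F (t, y) :=
    lintegral_lintegral_swap hFmeas.aemeasurable
  -- lower bound for the inner t-integral
  have hlow : ∀ y ∈ Ω, y ≠ x₀ →
      ENNReal.ofReal 2⁻¹ * ENNReal.ofReal |f y| ≤ ∫⁻ t in Ioo (0:ℝ) ℓ, F (t, y) := by
    intro y hy hyne
    set d : ℝ := dist y x₀ with hd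
    have hd0 : 0 < d := dist_pos.mpr hyne
    have hdℓ : d < ℓ := hdist y hy
    have hsub : Ico (d/2) d ⊆ Ioo (0:ℝ) ℓ := fun t ht =>
      ⟨lt_of_lt_of_le (by linarith) ht.1, lt_trans ht.2 hdℓ⟩
    have hptwise : ∀ t ∈ Ico (d/2) d,
        (ENNReal.ofReal d)⁻¹ * ENNReal.ofReal |f y| ≤ F (t, y) := by
      intro t ht
      have hmem : (t, y) ∈ bigS := ⟨ht.2, by rw [← hd]; linarith [ht.1]⟩
      rw [hFdef, Set.indicator_of_mem hmem]
      exact mul_le_mul_left (ENNReal.inv_le_inv' (ENNReal.ofReal_le_ofReal ht.2.le)) _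
    have hdd : (ENNReal.ofReal d)⁻¹ * ENNReal.ofReal d = 1 :=
      ENNReal.inv_mul_cancel (ENNReal.ofReal_pos.mpr hd0).ne' ofReal_ne_top
    calc ENNReal.ofReal 2⁻¹ * ENNReal.ofReal |f y|
        = ((ENNReal.ofReal d)⁻¹ * ENNReal.ofReal |f y|) * volume (Ico (d/2) d) := by
          rw [Real.volume_Ico, show d - d/2 = d * 2⁻¹ by ring, ENNReal.ofReal_mul hd0.le]
          calc ENNReal.ofReal 2⁻¹ * ENNReal.ofReal |f y|
              = ((ENNReal.ofReal d)⁻¹ * ENNReal.ofReal d) *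
                  (ENNReal.ofReal 2⁻¹ * ENNReal.ofReal |f y|) := by rw [hdd, one_mul]
            _ = (ENNReal.ofReal d)⁻¹ * ENNReal.ofReal |f y| *
                  (ENNReal.ofReal d * ENNReal.ofReal 2⁻¹) := by ring
      _ = ∫⁻ _ in Ico (d/2) d, (ENNReal.ofReal d)⁻¹ * ENNReal.ofReal |f y| :=
          (setLIntegral_const _ _).symm
      _ ≤ ∫⁻ t in Ico (d/2) d, F (t, y) :=
          setLIntegral_mono (hFmeas.comp measurable_prodMk_right) hptwise
      _ ≤ ∫⁻ t in Ioo (0:ℝ) ℓ, F (t, y) := lintegral_mono_set hsub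
  -- upper bound for the t-integral
  have hup : ∫⁻ t in Ioo (0:ℝ) ℓ, ∫⁻ y in Ω, F (t, y) ≤
      ENNReal.ofReal (2 ^ c) * (B ^ (1 / pc) * N) * I := by
    have hbound : ∀ t ∈ Ioo (0:ℝ) ℓ, (∫⁻ y in Ω, F (t, y)) ≤
        ENNReal.ofReal (2 ^ c) * (B ^ (1 / pc) * N) * ENNReal.ofReal (ω t / t) := by
      intro t ht
      have heq : (∫⁻ y in Ω, F (t, y)) =
          (ENNReal.ofReal t)⁻¹ * ∫⁻ y in st t ∩ Ω, ENNReal.ofReal |f y| := by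
        have h1 : ∀ y, F (t, y) =
            (st t).indicator (fun y => (ENNReal.ofReal t)⁻¹ * ENNReal.ofReal |f y|) y := by
          intro y
          rw [hFdef]
          by_cases hmem : y ∈ st t
          · rw [Set.indicator_of_mem hmem, Set.indicator_of_mem (show (t, y) ∈ bigS from hmem)]
          · rw [Set.indicator_of_notMem hmem,
              Set.indicator_of_notMem (show (t, y) ∉ bigS from hmem)]
        rw [lintegral_congr h1, lintegral_indicator (hstmeas t),
          Measure.restrict_restrict (hstmeas t),
          lintegral_const_mul _ hf.abs.ennreal_ofReal]
      rw [heq]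
      calc (ENNReal.ofReal t)⁻¹ * ∫⁻ y in st t ∩ Ω, ENNReal.ofReal |f y|
          ≤ ENNReal.ofReal (2 ^ c) * ENNReal.ofReal (ω t / t) * (B ^ (1 / pc) * N) :=
            hGbound t ht
        _ = ENNReal.ofReal (2 ^ c) * (B ^ (1 / pc) * N) * ENNReal.ofReal (ω t / t) := by ring
    calc ∫⁻ t in Ioo (0:ℝ) ℓ, ∫⁻ y in Ω, F (t, y)
        ≤ ∫⁻ t in Ioo (0:ℝ) ℓ, ENNReal.ofReal (2 ^ c) * (B ^ (1 / pc) * N) *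
            ENNReal.ofReal (ω t / t) :=
          setLIntegral_mono (measurable_const.mul
            ((hωmeas.div measurable_id').ennreal_ofReal)) hbound
      _ = ENNReal.ofReal (2 ^ c) * (B ^ (1 / pc) * N) * I := by
          rw [lintegral_const_mul _ (by exact (hωmeas.div measurable_id').ennreal_ofReal :
            Measurable fun t : ℝ => ENNReal.ofReal (ω t / t))]
  -- combine
  have hae : ∀ᵐ y : EuclideanSpace ℝ (Fin n), y ≠ x₀ := by
    have hsing : {y : EuclideanSpace ℝ (Fin n) | ¬ y ≠ x₀} = {x₀} := by ext; simp
    rw [ae_iff, hsing]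
    exact measure_singleton x₀
  have hmain : ENNReal.ofReal 2⁻¹ * (∫⁻ y in Ω, ENNReal.ofReal |f y|) ≤
      ENNReal.ofReal (2 ^ c) * (B ^ (1 / pc) * N) * I := by
    calc ENNReal.ofReal 2⁻¹ * ∫⁻ y in Ω, ENNReal.ofReal |f y|
        = ∫⁻ y in Ω, ENNReal.ofReal 2⁻¹ * ENNReal.ofReal |f y| :=
          (lintegral_const_mul _ hf.abs.ennreal_ofReal).symm
      _ ≤ ∫⁻ y in Ω, ∫⁻ t in Ioo (0:ℝ) ℓ, F (t, y) := by
          apply lintegral_mono_ae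
          filter_upwards [ae_restrict_mem hΩmeas, ae_restrict_of_ae hae] with y h1 h2
          exact hlow y h1 h2
      _ = ∫⁻ t in Ioo (0:ℝ) ℓ, ∫⁻ y in Ω, F (t, y) := hswap.symm
      _ ≤ _ := hup
  calc ∫⁻ y in Ω, ENNReal.ofReal |f y|
      = ENNReal.ofReal 2 * (ENNReal.ofReal 2⁻¹ * ∫⁻ y in Ω, ENNReal.ofReal |f y|) := by
        rw [← mul_assoc, ← ENNReal.ofReal_mul (by norm_num)]
        norm_num
    _ ≤ ENNReal.ofReal 2 * (ENNReal.ofReal (2 ^ c) * (B ^ (1 / pc) * N) * I) :=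
        mul_le_mul_right hmain _
    _ = D * N := by rw [hD]; ring
    _ ≤ ENNReal.ofReal (D.toReal + 1) * N := by
        refine mul_le_mul_left ?_ _
        calc D = ENNReal.ofReal D.toReal := (ENNReal.ofReal_toReal hDfin).symm
          _ ≤ ENNReal.ofReal (D.toReal + 1) := ENNReal.ofReal_le_ofReal (by linarith)

/-- Corollary 4.3: (a) if `sup_{0<r<ℓ} r^{n/p′}/ω(r) < ∞` then
`L^p(Ω) ↪ ∁M^{p,ω}_{x₀}(Ω)`; (b) if `∫_0^ℓ ω(r) dr/r < ∞` then
`∁M^{p,ω}_{x₀}(Ω) ↪ L^1(Ω)`. -/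
theorem statement7
    (n : ℕ) (hn : 1 ≤ n)
    (Ω : Set (EuclideanSpace ℝ (Fin n))) (hΩo : IsOpen Ω) (hΩb : Bornology.IsBounded Ω)
    (x₀ : EuclideanSpace ℝ (Fin n)) (hx₀ : x₀ ∈ Ω)
    (p pc : ℝ) (hp : 1 < p) (hpc : pc = p / (p - 1))
    (ℓ : ℝ) (hℓ : ℓ = Metric.diam Ω)
    (ω : ℝ → ℝ) (hωmeas : Measurable ω) (hωpos : ∀ r > (0 : ℝ), 0 < ω r) :
    ((∃ K : ℝ, ∀ r ∈ Ioo (0 : ℝ) ℓ, r ^ ((n : ℝ) / pc) / ω r ≤ K) →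
      ∃ C > 0, ∀ f : EuclideanSpace ℝ (Fin n) → ℝ, Measurable f →
        cMnorm p pc ω Ω x₀ f ≤ ENNReal.ofReal C * lpnorm p Ω f) ∧
    ((∫⁻ r in Ioo (0 : ℝ) ℓ, ENNReal.ofReal (ω r / r)) < ⊤ →
      ∃ C > 0, ∀ f : EuclideanSpace ℝ (Fin n) → ℝ, Measurable f →
        (∫⁻ y in Ω, ENNReal.ofReal |f y|) ≤ ENNReal.ofReal C * cMnorm p pc ω Ω x₀ f) := by
  obtain ⟨hℓpos, hdist⟩ := statement7_geom n hn Ω hΩo hΩb x₀ hx₀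
  rw [← hℓ] at hℓpos hdist
  constructor
  · rintro ⟨K, hK⟩
    exact statement7_auxA n Ω x₀ p pc hp ℓ hdist ω K hK
  · intro hI
    exact statement7_auxB n hn Ω hΩo.measurableSet x₀ p pc hp hpc ℓ hdist ω hωmeas hωpos hI
end

section
/- Let n ≥ 1, let Ω ⊂ ℝⁿ be a bounded open set with diameter ℓ, let x₀ ∈ Ω, let 1 < p < ∞ with conjugate exponent p′ = p/(p−1), let ω : (0,∞) → (0,∞) be measurable, and let γ ∈ ℝ. If ∫_0^ℓ ω(r) r^{γ−1} dr < ∞, then there exists a constant C > 0 such that for every measurable f : Ω → ℝ, ∫_Ω |y−x₀|^γ |f(y)| dy ≤ C ‖f‖_{∁M^{p,ω}_{x₀}(Ω)}; that is, ∁M^{p,ω}_{x₀}(Ω) embeds into the weighted space L^1(Ω, |y−x₀|^γ). -/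
open MeasureTheory Metric Set ENNReal Filter Topology

/-- Pointwise bound: `t^γ ≤ Cγ ∫_{t/2}^t r^{γ-1} dr` with `Cγ = max (2^γ) 2`. -/
lemma aux_pointwise (γ : ℝ) {t : ℝ} (ht : 0 < t) :
    ENNReal.ofReal (t ^ γ) ≤ ENNReal.ofReal (max ((2:ℝ) ^ γ) 2) *
      ∫⁻ r in Ioo (t/2) t, ENNReal.ofReal (r ^ (γ - 1)) := by
  have ht2 : (0:ℝ) < t / 2 := by linarith
  set m : ℝ := min ((t/2) ^ (γ-1)) (t ^ (γ-1)) with hm_def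
  have hmono : ∀ r ∈ Ioo (t/2) t, ENNReal.ofReal m ≤ ENNReal.ofReal (r ^ (γ-1)) := by
    intro r hr
    apply ENNReal.ofReal_le_ofReal
    rcases le_or_gt 0 (γ - 1) with hγ | hγ
    · exact le_trans (min_le_left _ _) (Real.rpow_le_rpow ht2.le hr.1.le hγ)
    · exact le_trans (min_le_right _ _)
        (Real.rpow_le_rpow_of_nonpos (ht2.trans hr.1) hr.2.le hγ.le)
  have h1 : ENNReal.ofReal (m * (t/2)) ≤ ∫⁻ r in Ioo (t/2) t, ENNReal.ofReal (r ^ (γ - 1)) := by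
    have := setLIntegral_mono (s := Ioo (t/2) t) (μ := volume)
      (f := fun _ => ENNReal.ofReal m) (g := fun r => ENNReal.ofReal (r ^ (γ-1)))
      (by fun_prop) hmono
    calc ENNReal.ofReal (m * (t/2)) = ENNReal.ofReal m * ENNReal.ofReal (t/2) := by
          rw [ENNReal.ofReal_mul (le_min (Real.rpow_nonneg ht2.le _) (Real.rpow_nonneg ht.le _))]
      _ = ENNReal.ofReal m * volume (Ioo (t/2) t) := by
          rw [Real.volume_Ioo]; norm_num; ring_nf
      _ = ∫⁻ _ in Ioo (t/2) t, ENNReal.ofReal m := by rw [setLIntegral_const]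
      _ ≤ _ := this
  have key : t ^ γ ≤ max ((2:ℝ) ^ γ) 2 * (m * (t/2)) := by
    have e1 : (t/2) ^ (γ-1) * (t/2) = (t/2) ^ γ := by
      rw [Real.rpow_sub ht2, Real.rpow_one]; field_simp
    have e2 : t ^ (γ-1) * (t/2) = t ^ γ / 2 := by
      rw [Real.rpow_sub ht, Real.rpow_one]; field_simp
    have e3 : (2:ℝ) ^ γ * (t/2) ^ γ = t ^ γ := by
      rw [← Real.mul_rpow (by norm_num) ht2.le]; ring_nf
    rcases min_cases ((t/2) ^ (γ-1)) (t ^ (γ-1)) with ⟨hmin, _⟩ | ⟨hmin, _⟩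
    · rw [hm_def, hmin, e1]
      calc t ^ γ = (2:ℝ) ^ γ * (t/2) ^ γ := e3.symm
        _ ≤ max ((2:ℝ) ^ γ) 2 * (t/2) ^ γ :=
          mul_le_mul_of_nonneg_right (le_max_left _ _) (Real.rpow_nonneg ht2.le _)
    · rw [hm_def, hmin, e2]
      calc t ^ γ = 2 * (t ^ γ / 2) := by ring
        _ ≤ max ((2:ℝ) ^ γ) 2 * (t ^ γ / 2) :=
          mul_le_mul_of_nonneg_right (le_max_right _ _)
            (div_nonneg (Real.rpow_nonneg ht.le _) (by norm_num))
  calc ENNReal.ofReal (t ^ γ) ≤ ENNReal.ofReal (max ((2:ℝ) ^ γ) 2 * (m * (t/2))) :=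
        ENNReal.ofReal_le_ofReal key
    _ = ENNReal.ofReal (max ((2:ℝ) ^ γ) 2) * ENNReal.ofReal (m * (t/2)) :=
        ENNReal.ofReal_mul (le_trans (by norm_num) (le_max_right _ _))
    _ ≤ _ := mul_le_mul_right h1 _

/-- Remark 4.4: if `∫_0^ℓ ω(r) r^{γ−1} dr < ∞` then `∁M^{p,ω}_{x₀}(Ω)`
embeds into the weighted space `L^1(Ω, |y−x₀|^γ)`. -/
theorem statement8
    (n : ℕ) (hn : 1 ≤ n)
    (Ω : Set (EuclideanSpace ℝ (Fin n))) (hΩo : IsOpen Ω) (hΩb : Bornology.IsBounded Ω)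
    (x₀ : EuclideanSpace ℝ (Fin n)) (hx₀ : x₀ ∈ Ω)
    (p pc : ℝ) (hp : 1 < p) (hpc : pc = p / (p - 1))
    (ℓ : ℝ) (hℓ : ℓ = Metric.diam Ω)
    (ω : ℝ → ℝ) (hωmeas : Measurable ω) (hωpos : ∀ r > (0 : ℝ), 0 < ω r)
    (γ : ℝ)
    (hint : (∫⁻ r in Ioo (0 : ℝ) ℓ, ENNReal.ofReal (ω r * r ^ (γ - 1))) < ⊤) :
    ∃ C > 0, ∀ f : EuclideanSpace ℝ (Fin n) → ℝ, Measurable f →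
      (∫⁻ y in Ω, ENNReal.ofReal (‖y - x₀‖ ^ γ) * ENNReal.ofReal |f y|) ≤
        ENNReal.ofReal C * cMnorm p pc ω Ω x₀ f := by
  haveI : Nonempty (Fin n) := ⟨⟨0, hn⟩⟩
  haveI : Nontrivial (EuclideanSpace ℝ (Fin n)) := by
    infer_instance
  -- conjugate exponent facts
  have hpq : pc.HolderConjugate p := by
    rw [hpc]
    exact (Real.HolderConjugate.conjExponent hp).symm
  have hpcpos : 0 < pc := hpq.pos
  -- constants
  set Cγ : ℝ := max ((2:ℝ) ^ γ) 2 with hCγ_def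
  have hCγpos : 0 < Cγ := lt_of_lt_of_le (by norm_num) (le_max_right _ _)
  set B1 : ℝ≥0∞ := volume (ball (0 : EuclideanSpace ℝ (Fin n)) 1) with hB1_def
  have hB1top : B1 ≠ ⊤ := (measure_ball_lt_top).ne
  set K : ℝ≥0∞ := ENNReal.ofReal ((2:ℝ) ^ ((n:ℝ)/pc)) * B1 ^ (1/pc) with hK_def
  have hKtop : K ≠ ⊤ := by
    apply ENNReal.mul_ne_top ENNReal.ofReal_ne_top
    exact ENNReal.rpow_ne_top_of_nonneg (by positivity) hB1top
  set I : ℝ≥0∞ := ∫⁻ r in Ioo (0 : ℝ) ℓ, ENNReal.ofReal (ω r * r ^ (γ - 1)) with hI_def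
  have hItop : I ≠ ⊤ := hint.ne
  refine ⟨Cγ * (K.toReal * I.toReal) + 1, by positivity, ?_⟩
  intro f hf
  set N : ℝ≥0∞ := cMnorm p pc ω Ω x₀ f with hN_def
  set g : ℝ → ℝ≥0∞ := fun r => ENNReal.ofReal (r ^ (γ - 1)) with hg_def
  have hgmeas : Measurable g := by fun_prop
  have hfabs : Measurable fun y : EuclideanSpace ℝ (Fin n) => ENNReal.ofReal |f y| := by fun_prop
  -- the annulus sets
  set A : ℝ → Set (EuclideanSpace ℝ (Fin n)) := fun r => {y : EuclideanSpace ℝ (Fin n) | ‖y - x₀‖ / 2 < r ∧ r < ‖y - x₀‖} with hA_def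
  have hnormmeas : Measurable fun y : EuclideanSpace ℝ (Fin n) => ‖y - x₀‖ := by fun_prop
  have hAmeas : ∀ r, MeasurableSet (A r) := by
    intro r
    exact (measurableSet_lt (hnormmeas.div_const 2) measurable_const).inter
      (measurableSet_lt measurable_const hnormmeas)
  -- Step 1: pointwise bound a.e.
  have hsing : (volume : Measure (EuclideanSpace ℝ (Fin n))) {x₀} = 0 := measure_singleton x₀
  have hae : ∀ᵐ y ∂(volume.restrict Ω), y ≠ x₀ := by
    rw [ae_iff]
    apply measure_mono_null (fun y hy => ?_) (le_antisymm
      (le_trans (Measure.restrict_le_self _) hsing.le) zero_le)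
    simpa using not_not.mp (by simpa using hy)
  have stepA : (∫⁻ y in Ω, ENNReal.ofReal (‖y - x₀‖ ^ γ) * ENNReal.ofReal |f y|) ≤
      ∫⁻ y in Ω, (ENNReal.ofReal Cγ *
        ∫⁻ r in Ioo (‖y - x₀‖/2) (‖y - x₀‖), g r) * ENNReal.ofReal |f y| := by
    refine lintegral_mono_ae ?_
    filter_upwards [hae] with y hy
    have ht : 0 < ‖y - x₀‖ := by
      simpa [norm_pos_iff, sub_ne_zero] using hy
    exact mul_le_mul_left (aux_pointwise γ ht) _
  -- measurability on the product space
  have hSmeas : MeasurableSet {q : EuclideanSpace ℝ (Fin n) × ℝ | ‖q.1 - x₀‖ / 2 < q.2 ∧ q.2 < ‖q.1 - x₀‖} := by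
    have h1 : Measurable fun q : EuclideanSpace ℝ (Fin n) × ℝ => ‖q.1 - x₀‖ := by fun_prop
    exact (measurableSet_lt (h1.div_const 2) measurable_snd).inter
      (measurableSet_lt measurable_snd h1)
  have hindmeas : Measurable fun q : EuclideanSpace ℝ (Fin n) × ℝ =>
      (Ioo (‖q.1 - x₀‖/2) (‖q.1 - x₀‖)).indicator g q.2 := by
    have heq : (fun q : EuclideanSpace ℝ (Fin n) × ℝ => (Ioo (‖q.1 - x₀‖/2) (‖q.1 - x₀‖)).indicator g q.2)
        = Set.indicator {q : EuclideanSpace ℝ (Fin n) × ℝ | ‖q.1 - x₀‖ / 2 < q.2 ∧ q.2 < ‖q.1 - x₀‖}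
          (fun q => g q.2) := by
      funext q
      simp only [Set.indicator_apply, mem_Ioo, mem_setOf_eq]
    rw [heq]
    exact (hgmeas.comp measurable_snd).indicator hSmeas
  have hFmeas : Measurable fun q : EuclideanSpace ℝ (Fin n) × ℝ =>
      (Ioo (‖q.1 - x₀‖/2) (‖q.1 - x₀‖)).indicator g q.2 * ENNReal.ofReal |f q.1| :=
    hindmeas.mul (hfabs.comp measurable_fst)
  have hJmeas : Measurable fun y : EuclideanSpace ℝ (Fin n) => ∫⁻ r in Ioo (‖y - x₀‖/2) (‖y - x₀‖), g r := by
    have heq : (fun y : EuclideanSpace ℝ (Fin n) => ∫⁻ r in Ioo (‖y - x₀‖/2) (‖y - x₀‖), g r)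
        = fun y => ∫⁻ r, (Ioo (‖y - x₀‖/2) (‖y - x₀‖)).indicator g r := by
      funext y; rw [lintegral_indicator measurableSet_Ioo]
    rw [heq]
    exact Measurable.lintegral_prod_right' (f := fun q : EuclideanSpace ℝ (Fin n) × ℝ =>
      (Ioo (‖q.1 - x₀‖/2) (‖q.1 - x₀‖)).indicator g q.2) hindmeas
  -- Step 2: Fubini/Tonelli
  have stepB : (∫⁻ y in Ω, (ENNReal.ofReal Cγ *
        ∫⁻ r in Ioo (‖y - x₀‖/2) (‖y - x₀‖), g r) * ENNReal.ofReal |f y|)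
      = ENNReal.ofReal Cγ * ∫⁻ r, g r * ∫⁻ y in A r ∩ Ω, ENNReal.ofReal |f y| := by
    calc (∫⁻ y in Ω, (ENNReal.ofReal Cγ *
          ∫⁻ r in Ioo (‖y - x₀‖/2) (‖y - x₀‖), g r) * ENNReal.ofReal |f y|)
        = ENNReal.ofReal Cγ *
          ∫⁻ y in Ω, (∫⁻ r in Ioo (‖y - x₀‖/2) (‖y - x₀‖), g r) * ENNReal.ofReal |f y| := by
          simp_rw [mul_assoc]
          rw [lintegral_const_mul _ (f := fun y => (∫⁻ r in Ioo (‖y - x₀‖/2) (‖y - x₀‖), g r) * ENNReal.ofReal |f y|) (hJmeas.mul hfabs)]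
      _ = ENNReal.ofReal Cγ *
          ∫⁻ y in Ω, ∫⁻ r, (Ioo (‖y - x₀‖/2) (‖y - x₀‖)).indicator g r * ENNReal.ofReal |f y| := by
          congr 1
          refine lintegral_congr fun y => ?_
          rw [← lintegral_indicator measurableSet_Ioo,
            ← lintegral_mul_const _ (hgmeas.indicator measurableSet_Ioo)]
      _ = ENNReal.ofReal Cγ *
          ∫⁻ r, ∫⁻ y in Ω, (Ioo (‖y - x₀‖/2) (‖y - x₀‖)).indicator g r * ENNReal.ofReal |f y| := by
          congr 1
          exact lintegral_lintegral_swap hFmeas.aemeasurable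
      _ = ENNReal.ofReal Cγ * ∫⁻ r, g r * ∫⁻ y in A r ∩ Ω, ENNReal.ofReal |f y| := by
          congr 1
          refine lintegral_congr fun r => ?_
          have heq : ∀ y : EuclideanSpace ℝ (Fin n), (Ioo (‖y - x₀‖/2) (‖y - x₀‖)).indicator g r * ENNReal.ofReal |f y|
              = (A r).indicator (fun y => g r * ENNReal.ofReal |f y|) y := by
            intro y
            simp only [Set.indicator_apply, mem_Ioo, hA_def, mem_setOf_eq]
            by_cases h : ‖y - x₀‖ / 2 < r ∧ r < ‖y - x₀‖ <;> simp [h]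
          rw [lintegral_congr heq, lintegral_indicator (hAmeas r),
            Measure.restrict_restrict (hAmeas r), lintegral_const_mul _ hfabs]
  -- Step 3: pointwise-in-r bound
  have hr_bound : ∀ r : ℝ, g r * ∫⁻ y in A r ∩ Ω, ENNReal.ofReal |f y| ≤
      (Ioo (0:ℝ) ℓ).indicator (fun r => (K * N) * ENNReal.ofReal (ω r * r ^ (γ-1))) r := by
    intro r
    by_cases hr : r ∈ Ioo (0:ℝ) ℓ
    · rw [Set.indicator_of_mem hr]
      obtain ⟨hr0, hrℓ⟩ := hr
      have hωr : (0:ℝ) < ω r := hωpos r hr0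
      have hrx : (0:ℝ) < r ^ ((n:ℝ)/pc) := Real.rpow_pos_of_pos hr0 _
      have holder : (∫⁻ y in A r ∩ Ω, ENNReal.ofReal |f y|) ≤
          (volume (A r ∩ Ω)) ^ (1/pc) * (∫⁻ y in A r ∩ Ω, ENNReal.ofReal |f y| ^ p) ^ (1/p) := by
        have := ENNReal.lintegral_mul_le_Lp_mul_Lq (volume.restrict (A r ∩ Ω)) hpq
          (aemeasurable_const (b := (1:ℝ≥0∞))) hfabs.aemeasurable
        simpa [ENNReal.one_rpow, setLIntegral_one] using this
      have hvol : volume (A r ∩ Ω) ≤ volume (ball x₀ (2*r)) := by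
        apply measure_mono
        rintro y ⟨⟨h1, h2⟩, _⟩
        rw [mem_ball, dist_eq_norm]
        linarith
      have hball : volume (ball x₀ (2*r)) = ENNReal.ofReal ((2*r) ^ n) * B1 := by
        rw [hB1_def, Measure.addHaar_ball volume x₀ (by positivity : (0:ℝ) ≤ 2*r),
          finrank_euclideanSpace_fin]
      have hvol2 : (volume (A r ∩ Ω)) ^ (1/pc) ≤
          ENNReal.ofReal ((2*r) ^ ((n:ℝ)/pc)) * B1 ^ (1/pc) := by
        calc (volume (A r ∩ Ω)) ^ (1/pc) ≤ (ENNReal.ofReal ((2*r) ^ n) * B1) ^ (1/pc) :=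
              ENNReal.rpow_le_rpow (hball ▸ hvol) (by positivity)
          _ = (ENNReal.ofReal ((2*r) ^ n)) ^ (1/pc) * B1 ^ (1/pc) :=
              ENNReal.mul_rpow_of_nonneg _ _ (by positivity)
          _ = ENNReal.ofReal ((2*r) ^ ((n:ℝ)/pc)) * B1 ^ (1/pc) := by
              rw [ENNReal.ofReal_rpow_of_nonneg (by positivity) (by positivity)]
              congr 2
              rw [← Real.rpow_natCast (2*r) n, ← Real.rpow_mul (by positivity), mul_one_div]
      have hLp : (∫⁻ y in A r ∩ Ω, ENNReal.ofReal |f y| ^ p) ^ (1/p) ≤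
          lpnorm p (Ω \ ball x₀ r) f := by
        refine ENNReal.rpow_le_rpow ?_ (by positivity)
        refine lintegral_mono_set ?_
        rintro y ⟨⟨h1, h2⟩, hy⟩
        refine ⟨hy, ?_⟩
        simp only [mem_ball, dist_eq_norm, not_lt]
        linarith
      have hlp2 : lpnorm p (Ω \ ball x₀ r) f ≤ ENNReal.ofReal (ω r / r ^ ((n:ℝ)/pc)) * N := by
        have hterm : ENNReal.ofReal (r ^ ((n:ℝ)/pc) / ω r) * lpnorm p (Ω \ ball x₀ r) f ≤ N := by
          rw [hN_def, cMnorm]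
          exact le_iSup₂ (f := fun r' (_ : r' ∈ Ioi (0:ℝ)) =>
            ENNReal.ofReal (r' ^ ((n:ℝ)/pc) / ω r') * lpnorm p (Ω \ ball x₀ r') f) r
            (mem_Ioi.mpr hr0)
        have hone : ENNReal.ofReal (ω r / r ^ ((n:ℝ)/pc)) *
            ENNReal.ofReal (r ^ ((n:ℝ)/pc) / ω r) = 1 := by
          rw [← ENNReal.ofReal_mul (div_nonneg hωr.le hrx.le),
            show (ω r / r ^ ((n:ℝ)/pc)) * (r ^ ((n:ℝ)/pc) / ω r) = 1 from by
              field_simp]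
          exact ENNReal.ofReal_one
        calc lpnorm p (Ω \ ball x₀ r) f
            = (ENNReal.ofReal (ω r / r ^ ((n:ℝ)/pc)) * ENNReal.ofReal (r ^ ((n:ℝ)/pc) / ω r)) *
              lpnorm p (Ω \ ball x₀ r) f := by rw [hone, one_mul]
          _ = ENNReal.ofReal (ω r / r ^ ((n:ℝ)/pc)) *
              (ENNReal.ofReal (r ^ ((n:ℝ)/pc) / ω r) * lpnorm p (Ω \ ball x₀ r) f) := by ring
          _ ≤ _ := mul_le_mul_right hterm _
      have hrealid : r ^ (γ-1) * ((2*r) ^ ((n:ℝ)/pc) * (ω r / r ^ ((n:ℝ)/pc)))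
          = (2:ℝ) ^ ((n:ℝ)/pc) * (ω r * r ^ (γ-1)) := by
        rw [Real.mul_rpow (by norm_num) hr0.le]
        field_simp
      calc g r * ∫⁻ y in A r ∩ Ω, ENNReal.ofReal |f y|
          ≤ g r * ((ENNReal.ofReal ((2*r) ^ ((n:ℝ)/pc)) * B1 ^ (1/pc)) *
              (ENNReal.ofReal (ω r / r ^ ((n:ℝ)/pc)) * N)) :=
            mul_le_mul_right (le_trans holder
              (mul_le_mul hvol2 (hLp.trans hlp2) zero_le zero_le)) _
        _ = (ENNReal.ofReal (r ^ (γ-1)) * (ENNReal.ofReal ((2*r) ^ ((n:ℝ)/pc)) *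
              ENNReal.ofReal (ω r / r ^ ((n:ℝ)/pc)))) * (B1 ^ (1/pc) * N) := by
            simp only [hg_def]; ring
        _ = ENNReal.ofReal ((2:ℝ) ^ ((n:ℝ)/pc)) * ENNReal.ofReal (ω r * r ^ (γ-1)) *
              (B1 ^ (1/pc) * N) := by
            rw [← ENNReal.ofReal_mul (by positivity), ← ENNReal.ofReal_mul
              (Real.rpow_nonneg (by linarith) _), hrealid,
              ENNReal.ofReal_mul (by positivity)]
        _ = (K * N) * ENNReal.ofReal (ω r * r ^ (γ-1)) := by rw [hK_def]; ring
    · rw [Set.indicator_of_notMem hr]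
      have hempty : A r ∩ Ω = ∅ := by
        rw [eq_empty_iff_forall_notMem]
        rintro y ⟨⟨h1, h2⟩, hy⟩
        rw [mem_Ioo, not_and_or] at hr
        push_neg at hr
        have hnn : (0:ℝ) ≤ ‖y - x₀‖ := norm_nonneg _
        rcases hr with h | h
        · linarith
        · have hd : ‖y - x₀‖ ≤ ℓ := by
            rw [hℓ, ← dist_eq_norm]
            exact dist_le_diam_of_mem hΩb hy hx₀
          linarith
      rw [hempty]
      simp
  -- Step 4: combine
  have stepC : (∫⁻ r, g r * ∫⁻ y in A r ∩ Ω, ENNReal.ofReal |f y|) ≤ (K * N) * I := by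
    calc (∫⁻ r, g r * ∫⁻ y in A r ∩ Ω, ENNReal.ofReal |f y|)
        ≤ ∫⁻ r, (Ioo (0:ℝ) ℓ).indicator
            (fun r => (K * N) * ENNReal.ofReal (ω r * r ^ (γ-1))) r :=
          lintegral_mono hr_bound
      _ = ∫⁻ r in Ioo (0:ℝ) ℓ, (K * N) * ENNReal.ofReal (ω r * r ^ (γ-1)) :=
          lintegral_indicator measurableSet_Ioo _
      _ = (K * N) * I := by
          rw [hI_def, lintegral_const_mul _ (by fun_prop)]
  have hfinal : ENNReal.ofReal Cγ * ((K * N) * I) ≤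
      ENNReal.ofReal (Cγ * (K.toReal * I.toReal) + 1) * N := by
    have heq : ENNReal.ofReal Cγ * ((K * N) * I) = (ENNReal.ofReal Cγ * K * I) * N := by ring
    rw [heq]
    refine mul_le_mul_left ?_ _
    calc ENNReal.ofReal Cγ * K * I
        = ENNReal.ofReal Cγ * ENNReal.ofReal K.toReal * ENNReal.ofReal I.toReal := by
          rw [ENNReal.ofReal_toReal hKtop, ENNReal.ofReal_toReal hItop]
      _ = ENNReal.ofReal (Cγ * K.toReal * I.toReal) := by
          rw [← ENNReal.ofReal_mul hCγpos.le, ← ENNReal.ofReal_mul (by positivity)]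
      _ ≤ _ := ENNReal.ofReal_le_ofReal (by rw [mul_assoc]; linarith)
  calc (∫⁻ y in Ω, ENNReal.ofReal (‖y - x₀‖ ^ γ) * ENNReal.ofReal |f y|)
      ≤ _ := stepA
    _ = ENNReal.ofReal Cγ * ∫⁻ r, g r * ∫⁻ y in A r ∩ Ω, ENNReal.ofReal |f y| := stepB
    _ ≤ ENNReal.ofReal Cγ * ((K * N) * I) := mul_le_mul_right stepC _
    _ ≤ _ := hfinal
end

section
/- Let n ≥ 1, let Ω ⊂ ℝⁿ be a bounded open set with diameter ℓ, let x₀ ∈ Ω, and let 1 < p < ∞ with conjugate exponent p′ = p/(p−1). If a measurable function f : Ω → ℝ satisfies ‖f‖_{L^p(Ω \ B(x₀,t))} < ∞ for every t ∈ (0,ℓ) and ∫_0^ℓ t^{n/p′ − 1} ‖f‖_{L^p(Ω \ B(x₀,t))} dt < ∞, then f ∈ L^1(Ω); moreover ∫_Ω |f(y)| dy ≤ C ∫_0^ℓ t^{n/p′ − 1} ‖f‖_{L^p(Ω \ B(x₀,t))} dt with C not depending on f and x₀. -/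
open MeasureTheory Metric Set ENNReal Filter Topology

private lemma lpnorm_mono_set {n : ℕ} {p : ℝ} (hp : 0 < p)
    {E F : Set (EuclideanSpace ℝ (Fin n))} (h : E ⊆ F)
    (f : EuclideanSpace ℝ (Fin n) → ℝ) : lpnorm p E f ≤ lpnorm p F f :=
  ENNReal.rpow_le_rpow (lintegral_mono_set h) (by positivity)

private lemma holder_bound {n : ℕ} {p pc : ℝ} (hp : 1 < p) (hpc : pc = p / (p - 1))
    (E : Set (EuclideanSpace ℝ (Fin n))) (f : EuclideanSpace ℝ (Fin n) → ℝ)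
    (hf : Measurable f) :
    ∫⁻ y in E, ENNReal.ofReal |f y| ≤ lpnorm p E f * (volume E) ^ (1 / pc) := by
  have hpq : p.HolderConjugate pc := (Real.holderConjugate_iff_eq_conjExponent hp).2 hpc
  have H := ENNReal.lintegral_mul_le_Lp_mul_Lq (volume.restrict E) hpq
    (f := fun y => ENNReal.ofReal |f y|) (g := fun _ => (1 : ℝ≥0∞))
    (hf.abs.ennreal_ofReal.aemeasurable) aemeasurable_const
  simpa [lpnorm, ENNReal.one_rpow, lintegral_const, Measure.restrict_apply_univ] using H

/-- Remark 4.5: if `‖f‖_{L^p(Ω∖B(x₀,t))} < ∞` for each `t ∈ (0,ℓ)` and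
`∫_0^ℓ t^{n/p′−1} ‖f‖_{L^p(Ω∖B(x₀,t))} dt < ∞`, then `f ∈ L^1(Ω)`, and moreover
`∫_Ω |f| ≤ C ∫_0^ℓ t^{n/p′−1} ‖f‖_{L^p(Ω∖B(x₀,t))} dt` with `C` independent of
`f` and `x₀`. -/
theorem statement9
    (n : ℕ) (hn : 1 ≤ n)
    (Ω : Set (EuclideanSpace ℝ (Fin n))) (hΩo : IsOpen Ω) (hΩb : Bornology.IsBounded Ω)
    (p pc : ℝ) (hp : 1 < p) (hpc : pc = p / (p - 1))
    (ℓ : ℝ) (hℓ : ℓ = Metric.diam Ω) :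
    ∃ C > 0, ∀ x₀ ∈ Ω, ∀ f : EuclideanSpace ℝ (Fin n) → ℝ, Measurable f →
      (∀ t ∈ Ioo (0 : ℝ) ℓ, lpnorm p (Ω \ ball x₀ t) f < ⊤) →
      (∫⁻ t in Ioo (0 : ℝ) ℓ,
          ENNReal.ofReal (t ^ ((n : ℝ) / pc - 1)) * lpnorm p (Ω \ ball x₀ t) f) < ⊤ →
      IntegrableOn f Ω volume ∧
        (∫⁻ y in Ω, ENNReal.ofReal |f y|) ≤
          ENNReal.ofReal C *
            ∫⁻ t in Ioo (0 : ℝ) ℓ,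
              ENNReal.ofReal (t ^ ((n : ℝ) / pc - 1)) * lpnorm p (Ω \ ball x₀ t) f := by
  have hp0 : (0:ℝ) < p := by linarith
  have hpq : p.HolderConjugate pc := (Real.holderConjugate_iff_eq_conjExponent hp).2 hpc
  have hpc0 : 0 < pc := hpq.symm.pos
  have hn0 : (0:ℝ) < (n:ℝ) := by exact_mod_cast hn
  set a : ℝ := (n:ℝ) / pc with ha_def
  have ha : 0 < a := div_pos hn0 hpc0
  set m : ℝ := min ((2:ℝ) ^ (a - 1)) 1 with hm_def
  have hm : 0 < m := lt_min (Real.rpow_pos_of_pos two_pos _) one_pos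
  set V : ℝ≥0∞ := volume (closedBall (0 : EuclideanSpace ℝ (Fin n)) 1) with hV_def
  have hVtop : V ≠ ⊤ := measure_closedBall_lt_top.ne
  have hV0 : V ≠ 0 := (measure_closedBall_pos volume _ one_pos).ne'
  set K : ℝ≥0∞ := V ^ (1/pc) * ENNReal.ofReal ((4:ℝ) ^ a / m) with hK_def
  have hKtop : K ≠ ⊤ := by
    apply ENNReal.mul_ne_top _ ENNReal.ofReal_ne_top
    exact (ENNReal.rpow_lt_top_of_nonneg (by positivity) hVtop).ne
  have hK0 : K ≠ 0 := by
    apply mul_ne_zero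
    · exact (ENNReal.rpow_pos hV0.bot_lt hVtop).ne'
    · exact (ENNReal.ofReal_pos.2 (by positivity : (0:ℝ) < (4:ℝ) ^ a / m)).ne'
  refine ⟨K.toReal, ENNReal.toReal_pos hK0 hKtop, ?_⟩
  intro x₀ hx₀ f hf _ hint
  rw [ENNReal.ofReal_toReal hKtop]
  -- ℓ is positive
  have hℓpos : 0 < ℓ := by
    obtain ⟨ε, hε, hball⟩ := Metric.isOpen_iff.1 hΩo x₀ hx₀
    set y : EuclideanSpace ℝ (Fin n) :=
      x₀ + (ε/2) • (EuclideanSpace.single (⟨0, hn⟩ : Fin n) (1:ℝ)) with hy_def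
    have hdist : dist y x₀ = ε/2 := by
      rw [hy_def, dist_eq_norm, add_sub_cancel_left, norm_smul,
        EuclideanSpace.norm_single]
      simp [abs_of_pos hε]
    have hyΩ : y ∈ Ω := hball (by simp [mem_ball, hdist]; linarith)
    have := Metric.dist_le_diam_of_mem hΩb hyΩ hx₀
    rw [← hℓ] at this
    linarith [hdist ▸ this]
  -- the dyadic radii
  set r : ℕ → ℝ := fun k => ℓ / 2 ^ k with hr_def
  have hrpos : ∀ k, 0 < r k := fun k => div_pos hℓpos (by positivity)
  have hr_mono : ∀ {j k : ℕ}, j ≤ k → r k ≤ r j := by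
    intro j k hjk
    apply div_le_div_of_nonneg_left hℓpos.le (by positivity)
    exact pow_le_pow_right₀ one_le_two hjk
  have hr_half : ∀ k, r (k+1) = r k / 2 := by
    intro k; simp only [hr_def, pow_succ]; ring
  have hr4 : ∀ k, r k = 4 * r (k+2) := by
    intro k
    simp only [hr_def, pow_succ]
    field_simp
    ring
  set g : ℕ → ℝ≥0∞ := fun k => lpnorm p (Ω \ ball x₀ (r (k+1))) f with hg_def
  set A : ℕ → Set (EuclideanSpace ℝ (Fin n)) :=
    fun k => (Ω ∩ closedBall x₀ (r k)) \ closedBall x₀ (r (k+1)) with hA_def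
  have hA_sub : ∀ k, A k ⊆ Ω \ ball x₀ (r (k+1)) := by
    intro k y hy
    exact ⟨hy.1.1, fun hb => hy.2 (ball_subset_closedBall hb)⟩
  have hA_meas : ∀ k, MeasurableSet (A k) := fun k =>
    (hΩo.measurableSet.inter measurableSet_closedBall).diff measurableSet_closedBall
  have hd : ∀ j k : ℕ, j < k → Disjoint (A j) (A k) := by
    intro j k hjk
    apply Set.disjoint_left.2
    intro y hyj hyk
    exact hyj.2 (closedBall_subset_closedBall (hr_mono hjk) hyk.1.2)
  have hA_disj : Pairwise (Function.onFun Disjoint A) := fun j k hne =>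
    hne.lt_or_gt.elim (hd j k) fun h => (hd k j h).symm
  have hA_union : (⋃ k, A k) = Ω \ {x₀} := by
    apply Set.Subset.antisymm
    · rintro y ⟨s, ⟨k, rfl⟩, hy⟩
      refine ⟨hy.1.1, ?_⟩
      intro hy0
      apply hy.2
      rw [mem_singleton_iff] at hy0
      subst hy0
      exact mem_closedBall_self (hrpos _).le
    · rintro y ⟨hyΩ, hy0⟩
      have hy0' : y ≠ x₀ := hy0
      have hdpos : 0 < dist y x₀ := dist_pos.2 hy0'
      have hdle : dist y x₀ ≤ ℓ := hℓ ▸ Metric.dist_le_diam_of_mem hΩb hyΩ hx₀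
      have hex : ∃ k, r k < dist y x₀ := by
        obtain ⟨k, hk⟩ := pow_unbounded_of_one_lt (ℓ / dist y x₀) (one_lt_two (α := ℝ))
        refine ⟨k, ?_⟩
        rw [hr_def]
        rw [div_lt_iff₀ (by positivity)] at hk ⊢
        linarith [hk]
      set k₀ := Nat.find hex with hk₀_def
      have hk₀ : r k₀ < dist y x₀ := Nat.find_spec hex
      have hk₀0 : k₀ ≠ 0 := by
        intro h0
        rw [h0] at hk₀
        simp only [hr_def, pow_zero, div_one] at hk₀
        linarith
      obtain ⟨j, hj⟩ : ∃ j, k₀ = j + 1 := ⟨k₀ - 1, (Nat.succ_pred_eq_of_pos (Nat.pos_of_ne_zero hk₀0)).symm⟩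
      have hjle : dist y x₀ ≤ r j := by
        by_contra hcon
        exact Nat.find_min hex (by omega : j < k₀) (by linarith)
      refine mem_iUnion.2 ⟨j, ⟨⟨hyΩ, mem_closedBall.2 hjle⟩, ?_⟩⟩
      intro hc
      have := mem_closedBall.1 hc
      rw [← hj] at this
      linarith
  -- split the integral over annuli
  have hae : (Ω \ {x₀} : Set (EuclideanSpace ℝ (Fin n))) =ᵐ[volume] Ω := by
    rw [diff_ae_eq_self]
    have h0 : volume (closedBall x₀ (0:ℝ)) = 0 := by
      rw [Measure.addHaar_closedBall' volume x₀ le_rfl, finrank_euclideanSpace_fin]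
      simp [zero_pow (by omega : n ≠ 0)]
    exact measure_mono_null inter_subset_right (measure_mono_null (by simp) h0)
  have hsplit : ∫⁻ y in Ω, ENNReal.ofReal |f y| =
      ∑' k, ∫⁻ y in A k, ENNReal.ofReal |f y| := by
    rw [← setLIntegral_congr hae, ← hA_union,
      lintegral_iUnion hA_meas hA_disj]
  -- per-annulus Hölder bound
  have hterm : ∀ k, ∫⁻ y in A k, ENNReal.ofReal |f y| ≤
      K * (ENNReal.ofReal (m * r (k+2) ^ a) * g k) := by
    intro k
    have hx : r k ^ a = (4:ℝ) ^ a * r (k+2) ^ a := by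
      rw [hr4 k, Real.mul_rpow (by norm_num) (hrpos _).le]
    have h2 : ENNReal.ofReal ((4:ℝ) ^ a / m) * ENNReal.ofReal (m * r (k+2) ^ a)
        = ENNReal.ofReal (r k ^ a) := by
      rw [← ENNReal.ofReal_mul (by positivity), hx]
      congr 1
      field_simp
    calc ∫⁻ y in A k, ENNReal.ofReal |f y|
        ≤ lpnorm p (A k) f * (volume (A k)) ^ (1/pc) := holder_bound hp hpc _ f hf
      _ ≤ g k * (volume (closedBall x₀ (r k))) ^ (1/pc) := by
          apply mul_le_mul'
          · exact lpnorm_mono_set hp0 (hA_sub k) f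
          · apply ENNReal.rpow_le_rpow _ (by positivity)
            apply measure_mono
            intro y hy
            exact hy.1.2
      _ = g k * (ENNReal.ofReal (r k ^ a) * V ^ (1/pc)) := by
          rw [Measure.addHaar_closedBall' volume x₀ (hrpos k).le,
            finrank_euclideanSpace_fin,
            ENNReal.mul_rpow_of_nonneg _ _ (by positivity),
            ENNReal.ofReal_rpow_of_pos (by positivity),
            ← Real.rpow_natCast (r k) n, ← Real.rpow_mul (hrpos k).le,
            show (n:ℝ) * (1/pc) = a by rw [ha_def]; ring]
      _ = K * (ENNReal.ofReal (m * r (k+2) ^ a) * g k) := by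
          rw [hK_def, ← h2]
          ring
  -- lower bound for the weighted integral on each dyadic interval
  have hlow : ∀ k, ENNReal.ofReal (m * r (k+2) ^ a) * g k ≤
      ∫⁻ t in Ico (r (k+2)) (r (k+1)),
        ENNReal.ofReal (t ^ (a - 1)) * lpnorm p (Ω \ ball x₀ t) f := by
    intro k
    have hpt : ∀ t ∈ Ico (r (k+2)) (r (k+1)),
        ENNReal.ofReal (m * r (k+2) ^ (a-1)) * g k ≤
          ENNReal.ofReal (t ^ (a - 1)) * lpnorm p (Ω \ ball x₀ t) f := by
      intro t ht
      have ht0 : 0 < t := lt_of_lt_of_le (hrpos _) ht.1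
      apply mul_le_mul'
      · apply ENNReal.ofReal_le_ofReal
        rcases le_or_gt 0 (a-1) with hb | hb
        · calc m * r (k+2) ^ (a-1) ≤ 1 * r (k+2) ^ (a-1) := by
                apply mul_le_mul_of_nonneg_right (min_le_right _ _) (by positivity)
            _ = r (k+2) ^ (a-1) := one_mul _
            _ ≤ t ^ (a-1) := Real.rpow_le_rpow (hrpos _).le ht.1 hb
        · calc m * r (k+2) ^ (a-1) ≤ (2:ℝ) ^ (a-1) * r (k+2) ^ (a-1) := by
                apply mul_le_mul_of_nonneg_right (min_le_left _ _) (by positivity)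
            _ = (2 * r (k+2)) ^ (a-1) := (Real.mul_rpow (by norm_num) (hrpos _).le).symm
            _ = r (k+1) ^ (a-1) := by
                rw [show 2 * r (k+2) = r (k+1) by rw [hr_half (k+1)]; ring]
            _ ≤ t ^ (a-1) := Real.rpow_le_rpow_of_nonpos ht0 ht.2.le hb.le
      · exact lpnorm_mono_set hp0
          (diff_subset_diff_right (ball_subset_ball ht.2.le)) f
    have hconst : ENNReal.ofReal (m * r (k+2) ^ a) * g k
        = (ENNReal.ofReal (m * r (k+2) ^ (a-1)) * g k)
            * volume (Ico (r (k+2)) (r (k+1))) := by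
      rw [Real.volume_Ico,
        show r (k+1) - r (k+2) = r (k+2) by rw [hr_half (k+1)]; ring,
        show m * r (k+2) ^ a = (m * r (k+2) ^ (a-1)) * r (k+2) by
          rw [show a = (a-1)+1 by ring, Real.rpow_add_one (hrpos _).ne']; ring,
        ENNReal.ofReal_mul (by positivity)]
      ring
    calc ENNReal.ofReal (m * r (k+2) ^ a) * g k
        = (ENNReal.ofReal (m * r (k+2) ^ (a-1)) * g k)
            * volume (Ico (r (k+2)) (r (k+1))) := hconst
      _ = ∫⁻ _ in Ico (r (k+2)) (r (k+1)),
            (ENNReal.ofReal (m * r (k+2) ^ (a-1)) * g k) := (setLIntegral_const _ _).symm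
      _ ≤ _ := setLIntegral_mono' measurableSet_Ico hpt
  -- sum of the interval integrals is at most the full integral
  have hIdisj : Pairwise (Function.onFun Disjoint (fun k => Ico (r (k+2)) (r (k+1)))) := by
    have hd' : ∀ j k : ℕ, j < k →
        Disjoint (Ico (r (j+2)) (r (j+1))) (Ico (r (k+2)) (r (k+1))) := by
      intro j k hjk
      apply Set.disjoint_left.2
      intro t htj htk
      have : r (k+1) ≤ r (j+2) := hr_mono (by omega)
      have := htk.2
      have := htj.1
      linarith
    exact fun j k hne => hne.lt_or_gt.elim (hd' j k) fun h => (hd' k j h).symm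
  have hsum_le : (∑' k, ∫⁻ t in Ico (r (k+2)) (r (k+1)),
        ENNReal.ofReal (t ^ (a - 1)) * lpnorm p (Ω \ ball x₀ t) f) ≤
      ∫⁻ t in Ioo (0:ℝ) ℓ, ENNReal.ofReal (t ^ (a - 1)) * lpnorm p (Ω \ ball x₀ t) f := by
    rw [← lintegral_iUnion (fun _ => measurableSet_Ico) hIdisj]
    apply lintegral_mono_set
    rintro t ⟨s, ⟨k, rfl⟩, ht⟩
    constructor
    · exact lt_of_lt_of_le (hrpos (k+2)) ht.1
    · calc t < r (k+1) := ht.2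
        _ ≤ r 1 := hr_mono (by omega)
        _ < ℓ := by rw [hr_def]; simp; linarith
  -- main estimate
  have hmain : (∫⁻ y in Ω, ENNReal.ofReal |f y|) ≤
      K * ∫⁻ t in Ioo (0:ℝ) ℓ,
        ENNReal.ofReal (t ^ (a - 1)) * lpnorm p (Ω \ ball x₀ t) f := by
    rw [hsplit]
    calc (∑' k, ∫⁻ y in A k, ENNReal.ofReal |f y|)
        ≤ ∑' k, K * (ENNReal.ofReal (m * r (k+2) ^ a) * g k) := ENNReal.tsum_le_tsum hterm
      _ = K * ∑' k, (ENNReal.ofReal (m * r (k+2) ^ a) * g k) := ENNReal.tsum_mul_left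
      _ ≤ K * ∑' k, ∫⁻ t in Ico (r (k+2)) (r (k+1)),
            ENNReal.ofReal (t ^ (a - 1)) * lpnorm p (Ω \ ball x₀ t) f := by
          exact mul_le_mul_right (ENNReal.tsum_le_tsum hlow) K
      _ ≤ K * ∫⁻ t in Ioo (0:ℝ) ℓ,
            ENNReal.ofReal (t ^ (a - 1)) * lpnorm p (Ω \ ball x₀ t) f :=
          mul_le_mul_right hsum_le K
  refine ⟨?_, hmain⟩
  have hfin2 : (∫⁻ y in Ω, ENNReal.ofReal |f y|) < ⊤ :=
    lt_of_le_of_lt hmain (ENNReal.mul_lt_top hKtop.lt_top hint)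
  refine ⟨hf.aestronglyMeasurable, ?_⟩
  rw [hasFiniteIntegral_iff_norm]
  simpa [Real.norm_eq_abs] using hfin2
end

section
/- Let n ≥ 1, let Ω ⊂ ℝⁿ be a bounded open set with diameter ℓ, let x₀ ∈ Ω, and let 1 < p < ∞ with conjugate exponent p′ = p/(p−1). Suppose the measurable function f satisfies ‖f‖_{L^p(Ω \ B(x₀,s))} < ∞ for every s ∈ (0,ℓ). Fix t ∈ (0,ℓ) and let f₂ = f·χ_{B(x₀,t)∩Ω}. Then there exists a constant C > 0, not depending on f, t, x₀ and z, such that for every z ∈ Ω with |z−x₀| ≥ 2t, Mf₂(z) ≤ C |x₀−z|^{−n} ∫_0^t s^{n/p′ − 1} ‖f‖_{L^p(Ω \ B(x₀,s))} ds, where Mg(z) = sup_{r>0} |B(z,r)|^{−1} ∫_{B(z,r)∩Ω} |g(y)| dy is the Hardy–Littlewood maximal operator relative to Ω. -/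
set_option maxHeartbeats 1000000


open MeasureTheory Metric Set ENNReal Filter Topology

/-- The Hardy–Littlewood maximal operator relative to `Ω`:
`Mg(z) = sup_{r>0} |B(z,r)|⁻¹ ∫_{B(z,r)∩Ω} |g(y)| dy`, valued in `ℝ≥0∞`. -/
noncomputable def maxOp {n : ℕ} (Ω : Set (EuclideanSpace ℝ (Fin n)))
    (g : EuclideanSpace ℝ (Fin n) → ℝ) (z : EuclideanSpace ℝ (Fin n)) : ℝ≥0∞ :=
  ⨆ r ∈ Ioi (0 : ℝ),
    (volume (ball z r))⁻¹ * ∫⁻ y in ball z r ∩ Ω, ENNReal.ofReal |g y|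

private lemma rpow_half_lb {β a s : ℝ} (hβ : -1 ≤ β) (ha : 0 < a) (h1 : a ≤ s) (h2 : s ≤ 2*a) :
    a ^ β / 2 ≤ s ^ β := by
  rcases le_or_gt 0 β with hb | hb
  · have h := Real.rpow_le_rpow ha.le h1 hb
    have h' : (0:ℝ) < a ^ β := Real.rpow_pos_of_pos ha β
    linarith
  · have h : (2*a) ^ β ≤ s ^ β :=
      Real.rpow_le_rpow_of_nonpos (lt_of_lt_of_le ha h1) h2 hb.le
    have h2' : (2*a) ^ β = 2 ^ β * a ^ β := Real.mul_rpow (by norm_num) ha.le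
    have h3 : (2:ℝ) ^ (-1 : ℝ) ≤ 2 ^ β := Real.rpow_le_rpow_of_exponent_le one_le_two hβ
    have h4 : (2:ℝ) ^ (-1:ℝ) = 1/2 := by
      rw [Real.rpow_neg_one]; norm_num
    have ha' : (0:ℝ) < a ^ β := Real.rpow_pos_of_pos ha β
    have h5 : a ^ β / 2 ≤ 2 ^ β * a ^ β := by
      rw [h4] at h3
      nlinarith
    linarith [h2' ▸ h, h5]

private lemma holder_one {α : Type*} [MeasurableSpace α] (μ : Measure α) {p q : ℝ}
    (hpq : Real.HolderConjugate p q) {F : α → ℝ≥0∞} (hF : AEMeasurable F μ) :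
    ∫⁻ a, F a ∂μ ≤ (∫⁻ a, F a ^ p ∂μ) ^ (1/p) * (μ univ) ^ (1/q) := by
  have h := ENNReal.lintegral_mul_le_Lp_mul_Lq μ hpq hF (aemeasurable_const (b := (1:ℝ≥0∞)))
  simpa [ENNReal.one_rpow, lintegral_const, one_mul] using h

private lemma lpnorm_mono {n : ℕ} (p : ℝ) (hp : 0 < p) {E F : Set (EuclideanSpace ℝ (Fin n))}
    (h : E ⊆ F) (f : EuclideanSpace ℝ (Fin n) → ℝ) : lpnorm p E f ≤ lpnorm p F f :=
  ENNReal.rpow_le_rpow (lintegral_mono_set h) (by positivity)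

/-- estimate (5.4): with `f₂ = f·χ_{B(x₀,t)∩Ω}`, for `z ∈ Ω` with
`|z − x₀| ≥ 2t` one has
`Mf₂(z) ≤ C |x₀−z|^{−n} ∫_0^t s^{n/p′−1}‖f‖_{L^p(Ω∖B(x₀,s))} ds`, with `C` not
depending on `f, t, x₀, z`. -/
theorem statement11
    (n : ℕ) (hn : 1 ≤ n)
    (Ω : Set (EuclideanSpace ℝ (Fin n))) (hΩo : IsOpen Ω) (hΩb : Bornology.IsBounded Ω)
    (p pc : ℝ) (hp : 1 < p) (hpc : pc = p / (p - 1))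
    (ℓ : ℝ) (hℓ : ℓ = Metric.diam Ω) :
    ∃ C > 0, ∀ x₀ ∈ Ω, ∀ f : EuclideanSpace ℝ (Fin n) → ℝ, Measurable f →
      (∀ s ∈ Ioo (0 : ℝ) ℓ, lpnorm p (Ω \ ball x₀ s) f < ⊤) →
      ∀ t ∈ Ioo (0 : ℝ) ℓ, ∀ z ∈ Ω, 2 * t ≤ ‖z - x₀‖ →
        maxOp Ω ((ball x₀ t ∩ Ω).indicator f) z ≤
          ENNReal.ofReal C * ENNReal.ofReal (‖x₀ - z‖ ^ (-(n : ℝ))) *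
            ∫⁻ s in Ioo (0 : ℝ) t,
              ENNReal.ofReal (s ^ ((n : ℝ) / pc - 1)) * lpnorm p (Ω \ ball x₀ s) f := by
  classical
  have hp0 : (0:ℝ) < p := lt_trans one_pos hp
  have hconj : p.HolderConjugate pc := (Real.holderConjugate_iff_eq_conjExponent hp).mpr hpc
  have hpc1 : 1 < pc := Real.HolderTriple.lt (Real.HolderConjugate.symm hconj)
  have hpc0 : (0:ℝ) < pc := lt_trans one_pos hpc1
  haveI : Nonempty (Fin n) := ⟨⟨0, hn⟩⟩
  set v := volume (ball (0 : EuclideanSpace ℝ (Fin n)) 1) with hvdef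
  have hv0 : v ≠ 0 := (measure_ball_pos _ _ one_pos).ne'
  have hvt : v ≠ ⊤ := measure_ball_lt_top.ne
  set V := v.toReal with hVdef
  have hV : 0 < V := ENNReal.toReal_pos hv0 hvt
  have hvV : v = ENNReal.ofReal V := (ENNReal.ofReal_toReal hvt).symm
  have hn0 : (0:ℝ) < (n:ℝ) := by exact_mod_cast hn
  set β : ℝ := (n:ℝ)/pc - 1 with hβdef
  have hβ1 : β + 1 = (n:ℝ)/pc := by rw [hβdef]; ring
  have hnpc : (0:ℝ) < (n:ℝ)/pc := div_pos hn0 hpc0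
  set c₂ : ℝ := 2 * 4^n * (V+1) with hc₂def
  have hc₂0 : 0 < c₂ := by positivity
  refine ⟨2^n * V⁻¹ * c₂, by positivity, ?_⟩
  intro x₀ hx₀ f hf _ t ht z hz hzt
  obtain ⟨ht0, htl⟩ := ht
  set D := ‖z - x₀‖ with hDdef
  have hD0 : 0 < D := lt_of_lt_of_le (by linarith) hzt
  set F : EuclideanSpace ℝ (Fin n) → ℝ≥0∞ := fun y => ENNReal.ofReal |f y| with hFdef
  have hFm : Measurable F := ENNReal.measurable_ofReal.comp hf.abs
  set g : ℝ → ℝ≥0∞ := fun s => ENNReal.ofReal (s ^ β) * lpnorm p (Ω \ ball x₀ s) f with hgdef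
  set I : ℝ≥0∞ := ∫⁻ s in Ioo (0:ℝ) t, g s with hIdef
  -- Step B : key estimate on the ball integral
  have key : ∫⁻ y in ball x₀ t ∩ Ω, F y ≤ ENNReal.ofReal c₂ * I := by
    set A : ℕ → Set (EuclideanSpace ℝ (Fin n)) :=
      fun k => (ball x₀ (t/2^(k+1)))ᶜ ∩ ball x₀ (t/2^k) ∩ Ω with hA
    set J : ℕ → Set ℝ := fun k => Ioo (t/2^(k+2)) (t/2^(k+1)) with hJ
    have cover : (ball x₀ t ∩ Ω) \ {x₀} ⊆ ⋃ k, A k := by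
      rintro y ⟨⟨hyb, hyΩ⟩, hy0⟩
      have hyx : y ≠ x₀ := by simpa using hy0
      have hd0 : 0 < dist y x₀ := dist_pos.mpr hyx
      have hdt : dist y x₀ < t := mem_ball.mp hyb
      obtain ⟨m, hm⟩ := pow_unbounded_of_one_lt (t / dist y x₀) one_lt_two
      have hex : ∃ k, t / 2^k ≤ dist y x₀ := by
        refine ⟨m, ?_⟩
        rw [div_le_iff₀ (by positivity)]
        rw [div_lt_iff₀ hd0] at hm
        linarith [hm]
      set k₀ := Nat.find hex with hk₀def
      have hk₀ : t / 2^k₀ ≤ dist y x₀ := Nat.find_spec hex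
      have hk₀0 : k₀ ≠ 0 := by
        intro h
        rw [h] at hk₀
        simp at hk₀
        linarith
      obtain ⟨k, hk⟩ := Nat.exists_eq_succ_of_ne_zero hk₀0
      have hlt : dist y x₀ < t / 2^k := by
        have := Nat.find_min hex (by omega : k < k₀)
        exact lt_of_not_ge this
      refine mem_iUnion.2 ⟨k, ⟨⟨?_, ?_⟩, hyΩ⟩⟩
      · intro hmem
        rw [mem_ball] at hmem
        rw [hk, Nat.succ_eq_add_one] at hk₀
        linarith
      · exact mem_ball.mpr hlt
    have step1 : ∫⁻ y in ball x₀ t ∩ Ω, F y ≤ ∑' k, ∫⁻ y in A k, F y := by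
      have h0 : volume ({x₀} : Set (EuclideanSpace ℝ (Fin n))) = 0 := measure_singleton _
      calc ∫⁻ y in ball x₀ t ∩ Ω, F y
          ≤ ∫⁻ y in ((ball x₀ t ∩ Ω) \ {x₀}) ∪ {x₀}, F y :=
            lintegral_mono_set (subset_diff_union _ _)
        _ ≤ (∫⁻ y in (ball x₀ t ∩ Ω) \ {x₀}, F y) + ∫⁻ y in {x₀}, F y :=
            lintegral_union_le _ _ _
        _ = ∫⁻ y in (ball x₀ t ∩ Ω) \ {x₀}, F y := by
            rw [setLIntegral_measure_zero _ _ h0, add_zero]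
        _ ≤ ∫⁻ y in ⋃ k, A k, F y := lintegral_mono_set cover
        _ ≤ ∑' k, ∫⁻ y in A k, F y := lintegral_iUnion_le _ _
    have step2 : ∀ k : ℕ, ∫⁻ y in A k, F y ≤ ENNReal.ofReal c₂ * ∫⁻ s in J k, g s := by
      intro k
      set a : ℝ := t / 2^(k+2) with hadef
      have ha0 : 0 < a := by positivity
      have h2a : t / 2^(k+1) = 2*a := by
        rw [hadef]; field_simp; ring
      have h4a : t / 2^k = 4*a := by
        rw [hadef]; field_simp; ring
      set L : ℝ≥0∞ := lpnorm p (Ω \ ball x₀ (2*a)) f with hL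
      have hsub : A k ⊆ Ω \ ball x₀ (2*a) := by
        rintro y ⟨⟨hy1, _⟩, hyΩ⟩
        exact ⟨hyΩ, by rwa [← h2a]⟩
      have hhold : ∫⁻ y in A k, F y ≤ L * (volume (A k)) ^ (1/pc) := by
        have h := holder_one (volume.restrict (A k)) hconj hFm.aemeasurable
        rw [Measure.restrict_apply_univ] at h
        refine h.trans (mul_le_mul_left ?_ _)
        exact ENNReal.rpow_le_rpow (lintegral_mono_set hsub) (by positivity)
      have hvol : (volume (A k)) ^ (1/pc) ≤
          ENNReal.ofReal ((4*a) ^ ((n:ℝ)/pc)) * ENNReal.ofReal (V+1) := by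
        have hsub2 : A k ⊆ ball x₀ (4*a) := by
          rintro y ⟨⟨_, hy2⟩, _⟩
          rwa [← h4a]
        have hm : volume (A k) ≤ ENNReal.ofReal ((4*a)^n) * v := by
          refine (measure_mono hsub2).trans ?_
          rw [Measure.addHaar_ball_of_pos volume x₀ (by positivity : (0:ℝ) < 4*a)]
          simp [hvdef]
        have hv1p : v ^ (1/pc) ≤ ENNReal.ofReal (V+1) := by
          rw [hvV, ENNReal.ofReal_rpow_of_pos hV]
          apply ENNReal.ofReal_le_ofReal
          rcases le_or_gt V 1 with h | h
          · have := Real.rpow_le_one hV.le h (by positivity : (0:ℝ) ≤ 1/pc)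
            linarith
          · have h1 : V ^ (1/pc) ≤ V ^ (1:ℝ) :=
              Real.rpow_le_rpow_of_exponent_le h.le
                (by rw [div_le_one hpc0]; exact hpc1.le)
            rw [Real.rpow_one] at h1
            linarith
        calc (volume (A k)) ^ (1/pc)
            ≤ (ENNReal.ofReal ((4*a)^n) * v) ^ (1/pc) :=
              ENNReal.rpow_le_rpow hm (by positivity)
          _ = ENNReal.ofReal ((4*a)^n) ^ (1/pc) * v ^ (1/pc) :=
              ENNReal.mul_rpow_of_nonneg _ _ (by positivity)
          _ = ENNReal.ofReal ((4*a) ^ ((n:ℝ)/pc)) * v ^ (1/pc) := by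
              rw [ENNReal.ofReal_rpow_of_pos (by positivity),
                ← Real.rpow_natCast (4*a) n, ← Real.rpow_mul (by positivity), mul_one_div]
          _ ≤ _ := mul_le_mul_right hv1p _
      have h4 : (4*a) ^ ((n:ℝ)/pc) ≤ 4^n * a ^ ((n:ℝ)/pc) := by
        rw [Real.mul_rpow (by norm_num) ha0.le]
        have h41 : (4:ℝ) ^ ((n:ℝ)/pc) ≤ 4 ^ ((n:ℝ)) := by
          apply Real.rpow_le_rpow_of_exponent_le (by norm_num)
          rw [div_le_iff₀ hpc0]
          nlinarith
        rw [Real.rpow_natCast] at h41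
        exact mul_le_mul_of_nonneg_right h41 (Real.rpow_nonneg ha0.le _)
      have hlow : ENNReal.ofReal (a ^ ((n:ℝ)/pc) / 2) * L ≤ ∫⁻ s in J k, g s := by
        have hpt : ∀ s ∈ J k, ENNReal.ofReal (a^β / 2) * L ≤ g s := by
          intro s hs
          rw [hJ] at hs
          obtain ⟨hs1, hs2⟩ := hs
          have hs1' : a ≤ s := by rw [hadef]; exact hs1.le
          have hs2' : s ≤ 2*a := by rw [← h2a]; exact hs2.le
          have h1 : ENNReal.ofReal (a^β/2) ≤ ENNReal.ofReal (s^β) :=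
            ENNReal.ofReal_le_ofReal
              (rpow_half_lb (by rw [hβdef]; linarith [hnpc]) ha0 hs1' hs2')
          have h2 : L ≤ lpnorm p (Ω \ ball x₀ s) f := by
            apply lpnorm_mono p hp0
            apply diff_subset_diff_right
            exact ball_subset_ball hs2'
          exact mul_le_mul' h1 h2
        have hvolJ : volume (J k) = ENNReal.ofReal a := by
          rw [hJ]
          simp only
          rw [Real.volume_Ioo, h2a, hadef]
          norm_num
          rw [← hadef]; ring_nf
        calc ENNReal.ofReal (a ^ ((n:ℝ)/pc) / 2) * L
            = ENNReal.ofReal (a^β / 2) * L * volume (J k) := by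
              rw [hvolJ, mul_right_comm, ← ENNReal.ofReal_mul (by positivity)]
              congr 2
              rw [← hβ1, Real.rpow_add_one ha0.ne' β]
              ring
          _ = ∫⁻ _ in J k, ENNReal.ofReal (a^β / 2) * L := (setLIntegral_const _ _).symm
          _ ≤ ∫⁻ s in J k, g s := by
              refine lintegral_mono_ae ?_
              filter_upwards [ae_restrict_mem measurableSet_Ioo] with s hs
              exact hpt s hs
      calc ∫⁻ y in A k, F y
          ≤ L * (volume (A k)) ^ (1/pc) := hhold
        _ ≤ L * (ENNReal.ofReal ((4*a) ^ ((n:ℝ)/pc)) * ENNReal.ofReal (V+1)) :=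
            mul_le_mul_right hvol _
        _ ≤ L * ENNReal.ofReal (4^n * a ^ ((n:ℝ)/pc) * (V+1)) := by
            rw [← ENNReal.ofReal_mul (by positivity)]
            exact mul_le_mul_right
              (ENNReal.ofReal_le_ofReal (by nlinarith [Real.rpow_nonneg ha0.le ((n:ℝ)/pc)])) _
        _ = ENNReal.ofReal c₂ * (ENNReal.ofReal (a ^ ((n:ℝ)/pc) / 2) * L) := by
            rw [← mul_assoc, ← ENNReal.ofReal_mul hc₂0.le, mul_comm L]
            congr 2
            rw [hc₂def]
            ring
        _ ≤ ENNReal.ofReal c₂ * ∫⁻ s in J k, g s := mul_le_mul_right hlow _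
    have hdisj : Pairwise (Function.onFun Disjoint J) := by
      have hmono : ∀ i j : ℕ, i < j → Disjoint (J i) (J j) := by
        intro i j hij
        apply Set.disjoint_left.mpr
        rintro x ⟨hx1, _⟩ ⟨_, hy2⟩
        have : t / 2^(j+1) ≤ t / 2^(i+2) := by
          apply div_le_div_of_nonneg_left ht0.le (by positivity)
          exact pow_le_pow_right₀ one_le_two (by omega)
        linarith
      intro i j hij
      rcases lt_or_gt_of_ne hij with h | h
      · exact hmono i j h
      · exact (hmono j i h).symm
    have step3 : ∑' k, ∫⁻ s in J k, g s ≤ I := by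
      rw [← lintegral_iUnion (fun _ => measurableSet_Ioo) hdisj g]
      apply lintegral_mono_set
      apply iUnion_subset
      intro k x hx
      obtain ⟨hx1, hx2⟩ := hx
      constructor
      · have : (0:ℝ) < t / 2^(k+2) := by positivity
        linarith
      · have : t / 2^(k+1) ≤ t := by
          apply div_le_self ht0.le
          exact one_le_pow₀ one_le_two
        linarith
    calc ∫⁻ y in ball x₀ t ∩ Ω, F y
        ≤ ∑' k, ∫⁻ y in A k, F y := step1
      _ ≤ ∑' k, ENNReal.ofReal c₂ * ∫⁻ s in J k, g s := ENNReal.tsum_le_tsum step2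
      _ = ENNReal.ofReal c₂ * ∑' k, ∫⁻ s in J k, g s := ENNReal.tsum_mul_left
      _ ≤ ENNReal.ofReal c₂ * I := mul_le_mul_right step3 _
  -- Step A : the maximal function estimate
  rw [maxOp]
  refine iSup₂_le fun r hr => ?_
  rw [mem_Ioi] at hr
  have hind : ∀ y, ENNReal.ofReal |(ball x₀ t ∩ Ω).indicator f y| =
      (ball x₀ t ∩ Ω).indicator F y := by
    intro y
    by_cases hy : y ∈ ball x₀ t ∩ Ω
    · simp [indicator_of_mem hy, hFdef]
    · simp [indicator_of_notMem hy]
  rw [lintegral_congr fun y => hind y,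
    setLIntegral_indicator (measurableSet_ball.inter hΩo.measurableSet)]
  by_cases hS : (ball x₀ t ∩ Ω) ∩ (ball z r ∩ Ω) = ∅
  · rw [hS]
    simp
  · obtain ⟨w, ⟨hw1, _⟩, hw2, _⟩ := nonempty_iff_ne_empty.mpr hS
    have hrD : D/2 < r := by
      rw [mem_ball, dist_eq_norm] at hw1 hw2
      have htr : D ≤ ‖w - z‖ + ‖w - x₀‖ := by
        have : z - x₀ = -(w - z) + (w - x₀) := by abel
        rw [hDdef, this]
        exact (norm_add_le _ _).trans (by rw [norm_neg])
      linarith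
    have hD2 : (0:ℝ) < D/2 := by linarith
    have hvball : volume (ball z (D/2)) = ENNReal.ofReal ((D/2)^n) * v := by
      rw [Measure.addHaar_ball_of_pos volume z hD2]
      simp [hvdef]
    calc (volume (ball z r))⁻¹ * ∫⁻ y in (ball x₀ t ∩ Ω) ∩ (ball z r ∩ Ω), F y
        ≤ (volume (ball z (D/2)))⁻¹ * ∫⁻ y in ball x₀ t ∩ Ω, F y := by
          exact mul_le_mul' (ENNReal.inv_le_inv.mpr
            (measure_mono (ball_subset_ball (by linarith))))
            (lintegral_mono_set inter_subset_left)
      _ ≤ (volume (ball z (D/2)))⁻¹ * (ENNReal.ofReal c₂ * I) := mul_le_mul_right key _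
      _ ≤ ENNReal.ofReal (2^n * V⁻¹ * c₂) * ENNReal.ofReal (‖x₀ - z‖ ^ (-(n : ℝ))) * I := by
          rw [hvball, ENNReal.mul_inv (Or.inl (by positivity)) (Or.inr hv0),
            ← ENNReal.ofReal_inv_of_pos (by positivity), hvV,
            ← ENNReal.ofReal_inv_of_pos hV]
          rw [← mul_assoc, ← ENNReal.ofReal_mul (by positivity),
            ← ENNReal.ofReal_mul (by positivity)]
          rw [← ENNReal.ofReal_mul (by positivity)]
          refine mul_le_mul_left (ENNReal.ofReal_le_ofReal (le_of_eq ?_)) I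
          have hnorm : ‖x₀ - z‖ = D := by rw [hDdef, norm_sub_rev]
          rw [hnorm, Real.rpow_neg hD0.le, Real.rpow_natCast, div_pow]
          field_simp
end
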